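/- arXiv:0803.4281 — 6 statements merged into one kernel-verified Lean document; each statement's English description precedes it below -/
import Mathlib

section
/- Let H and G be finitely generated groups, each with trivial abelianization (i.e. H₁(H,ℤ) = H₁(G,ℤ) = 0). Then for any C¹ action ρ of the product group H × G on the circle, either ρ(h,1) is the identity homeomorphism for every h ∈ H, or ρ(1,g) is the identity homeomorphism for every g ∈ G. -/
open MeasureTheory

/-- The group of self-homeomorphisms of the circle `S¹ = ℝ/ℤ`,
with `f * g = f ∘ g`. -/
noncomputable instance : Group (UnitAddCircle ≃ₜ UnitAddCircle) where
  mul f g := g.trans f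
  one := Homeomorph.refl _
  inv := Homeomorph.symm
  mul_assoc _ _ _ := Homeomorph.ext fun _ => rfl
  one_mul _ := Homeomorph.ext fun _ => rfl
  mul_one _ := Homeomorph.ext fun _ => rfl
  inv_mul_cancel a := Homeomorph.ext a.symm_apply_apply

/-- `F : ℝ → ℝ` is a `C¹` lift of the circle homeomorphism `f`: it is `C¹` with
nowhere-vanishing derivative, commutes with the deck transformation up to sign,
and descends to `f` on `ℝ/ℤ`. -/
def IsC1Lift (f : UnitAddCircle ≃ₜ UnitAddCircle) (F : ℝ → ℝ) : Prop :=
  ContDiff ℝ 1 F ∧ (∀ x : ℝ, deriv F x ≠ 0) ∧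
    ((∀ x : ℝ, F (x + 1) = F x + 1) ∨ (∀ x : ℝ, F (x + 1) = F x - 1)) ∧
    ∀ x : ℝ, f (x : UnitAddCircle) = ((F x : ℝ) : UnitAddCircle)

/-- A `C¹` action of a group `Γ` on the circle: a homomorphism into the
self-homeomorphisms of the circle all of whose values admit `C¹` lifts. -/
def IsC1Action {Γ : Type*} [Group Γ] (ρ : Γ →* (UnitAddCircle ≃ₜ UnitAddCircle)) : Prop :=
  ∀ γ : Γ, ∃ F : ℝ → ℝ, IsC1Lift (ρ γ) F

/-- `F : ℝ → ℝ` is an orientation-preserving `C¹` lift of the circle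
homeomorphism `f`: it is `C¹` with everywhere positive derivative,
satisfies `F (x+1) = F x + 1` and descends to `f` on `ℝ/ℤ`. -/
def IsOPC1Lift (f : UnitAddCircle ≃ₜ UnitAddCircle) (F : ℝ → ℝ) : Prop :=
  ContDiff ℝ 1 F ∧ (∀ x : ℝ, 0 < deriv F x) ∧
    (∀ x : ℝ, F (x + 1) = F x + 1) ∧
    ∀ x : ℝ, f (x : UnitAddCircle) = ((F x : ℝ) : UnitAddCircle)

/-- `F : ℝ → ℝ` is an orientation-preserving (topological) lift of the circle
homeomorphism `f`: continuous, strictly increasing, satisfies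
`F (x+1) = F x + 1`, and descends to `f` on `ℝ/ℤ`. -/
def IsOPLift (f : UnitAddCircle ≃ₜ UnitAddCircle) (F : ℝ → ℝ) : Prop :=
  Continuous F ∧ StrictMono F ∧
    (∀ x : ℝ, F (x + 1) = F x + 1) ∧
    ∀ x : ℝ, f (x : UnitAddCircle) = ((F x : ℝ) : UnitAddCircle)

namespace CircleProd

noncomputable section

abbrev π (x : ℝ) : UnitAddCircle := (x : UnitAddCircle)

lemma pi_eq_iff {x y : ℝ} : π x = π y ↔ ∃ m : ℤ, y = x + m := by
  constructor
  · intro h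
    have h' : (x : UnitAddCircle) = (y : ℝ) := h
    rw [QuotientAddGroup.eq, AddSubgroup.mem_zmultiples_iff] at h'
    rcases h' with ⟨m, hm⟩
    refine ⟨m, ?_⟩
    have : (m : ℝ) = -x + y := by simpa using hm
    linarith
  · rintro ⟨m, rfl⟩
    show (x : UnitAddCircle) = ((x + m : ℝ) : UnitAddCircle)
    rw [QuotientAddGroup.eq, AddSubgroup.mem_zmultiples_iff]
    exact ⟨m, by simp⟩

lemma pi_add (x y : ℝ) : π (x + y) = π x + π y := rfl

lemma pi_int (m : ℤ) : π (m : ℝ) = 0 := by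
  rw [AddCircle.coe_eq_zero_iff]
  exact ⟨m, by simp⟩

lemma pi_add_int (x : ℝ) (m : ℤ) : π (x + m) = π x := by
  rw [pi_add, pi_int, add_zero]

lemma pi_continuous : Continuous π := AddCircle.continuous_mk' 1

lemma pi_surjective : Function.Surjective π := Quotient.exists_rep

end

end CircleProd

section part2
namespace CircleProd
noncomputable section

/-- A continuous integer-valued function on `ℝ` is constant. -/
lemma intval_const {f : ℝ → ℝ} (hf : Continuous f) (hint : ∀ x, ∃ m : ℤ, f x = m)
    (x y : ℝ) : f x = f y := by
  by_contra hne
  obtain ⟨m, hm⟩ := hint x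
  obtain ⟨n, hn⟩ := hint y
  have hmn : (m : ℝ) ≠ n := by rw [← hm, ← hn]; exact hne
  -- find a non-integer intermediate value
  have key : ∀ a b : ℝ, f a < f b → False := by
    intro a b hab
    obtain ⟨p, hp⟩ := hint a
    obtain ⟨q, hq⟩ := hint b
    have hpq : (p:ℝ) < q := by rw [← hp, ← hq]; exact hab
    have hpq' : p < q := by exact_mod_cast hpq
    have hmem : (p + 1/2 : ℝ) ∈ Set.Icc (f a) (f b) := by
      constructor
      · rw [hp]; linarith
      · rw [hq]
        have : (p:ℝ) + 1 ≤ q := by exact_mod_cast hpq'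
        linarith
    obtain ⟨z, hz⟩ := intermediate_value_univ a b hf hmem
    obtain ⟨r, hr⟩ := hint z
    rw [hz] at hr
    have : (2*p + 1 : ℝ) = 2*r := by push_cast [← hr]; linarith
    have : 2*p + 1 = 2*r := by exact_mod_cast this
    omega
  rcases lt_or_gt_of_ne hne with h | h
  · exact key x y h
  · exact key y x h

/-- Two continuous lifts of the same circle map differ by an integer constant. -/
lemma lifts_diff {f : UnitAddCircle ≃ₜ UnitAddCircle} {F F' : ℝ → ℝ}
    (hF : Continuous F) (hF' : Continuous F')
    (h : ∀ x : ℝ, f (π x) = π (F x)) (h' : ∀ x : ℝ, f (π x) = π (F' x)) :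
    ∃ m : ℤ, ∀ x, F' x = F x + m := by
  have hint : ∀ x, ∃ m : ℤ, F' x - F x = m := by
    intro x
    have : π (F x) = π (F' x) := by rw [← h x, ← h' x]
    obtain ⟨m, hm⟩ := pi_eq_iff.1 this
    exact ⟨m, by rw [hm]; ring⟩
  have hc : Continuous (fun x => F' x - F x) := hF'.sub hF
  obtain ⟨m, hm⟩ := hint 0
  refine ⟨m, fun x => ?_⟩
  have := intval_const hc hint x 0
  rw [hm] at this; linarith

/-- Window lemma: a strictly monotone lift fixing a point fixes every point
that it moves by an integer. -/
lemma window_lemma {F : ℝ → ℝ} (hmono : StrictMono F) (hper : ∀ x, F (x + 1) = F x + 1)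
    {s : ℝ} (hs : F s = s) {y : ℝ} (hy : ∃ m : ℤ, F y = y + m) : F y = y := by
  obtain ⟨m, hm⟩ := hy
  -- translate y into [s, s+1)
  obtain ⟨k, hk⟩ : ∃ k : ℤ, y - k ∈ Set.Ico s (s + 1) := by
    refine ⟨⌊y - s⌋, ?_, ?_⟩
    · have := Int.floor_le (y - s); push_cast; linarith
    · have := Int.lt_floor_add_one (y - s); push_cast; linarith
  have hFint : ∀ (z : ℝ) (n : ℤ), F (z + n) = F z + n := by
    intro z n
    induction n using Int.induction_on with
    | zero => simp
    | succ i ih => push_cast; rw [show z + (i+1:ℝ) = (z + i) + 1 by ring, hper]; push_cast at ih; rw [ih]; ring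
    | pred i ih =>
        push_cast
        have : F ((z + (-i - 1 : ℝ)) + 1) = F (z + (-i - 1 : ℝ)) + 1 := hper _
        push_cast at ih
        rw [show z + (-i - 1 : ℝ) + 1 = z + (-i : ℝ) by ring] at this
        rw [show z + (-(i:ℝ) - 1) = z + (-i - 1 :ℝ) by ring]
        rw [ih] at this; linarith
  set y' := y - k with hy'
  have hFy' : F y' = y' + m := by
    have h2 : F (y + (-k : ℤ)) = F y + (-k : ℤ) := hFint y (-k)
    push_cast at h2
    have h3 : F (y - k) = (y - k) + m := by
      rw [show y - (k:ℝ) = y + -(k:ℝ) by ring, h2, hm]; ring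
    rw [hy']; exact h3
  -- F maps [s, s+1) into [s, s+1)
  have h1 : s ≤ F y' := by
    rcases eq_or_lt_of_le hk.1 with h | h
    · rw [← h, hs]
    · have := hmono h; rw [hs] at this; linarith
  have h2 : F y' < s + 1 := by
    have : F y' < F (s + 1) := hmono hk.2
    rw [hper, hs] at this; exact this
  have hm0 : m = 0 := by
    have hb1 : (m : ℝ) < 1 := by
      have := hk.1; rw [hFy'] at h2; have := hk.2; linarith
    have hb2 : (-1 : ℝ) < m := by
      rw [hFy'] at h1; have := hk.2; linarith
    have : m < 1 := by exact_mod_cast hb1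
    have : -1 < m := by exact_mod_cast hb2
    omega
  rw [hm, hm0]; push_cast; ring

end
end CircleProd
end part2
section part3
namespace CircleProd
noncomputable section

lemma per_add_int {F : ℝ → ℝ} (hper : ∀ x, F (x + 1) = F x + 1) (z : ℝ) (n : ℤ) :
    F (z + n) = F z + n := by
  induction n using Int.induction_on with
  | zero => simp
  | succ i ih =>
      push_cast
      rw [show z + ((i:ℝ)+1) = (z + i) + 1 by ring, hper]
      push_cast at ih; rw [ih]; ring
  | pred i ih =>
      push_cast
      have h1 : F ((z + (-(i:ℝ) - 1)) + 1) = F (z + (-(i:ℝ) - 1)) + 1 := hper _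
      push_cast at ih
      rw [show z + (-(i:ℝ) - 1) + 1 = z + (-(i:ℝ)) by ring] at h1
      rw [ih] at h1; linarith

lemma op_lift_surj {F : ℝ → ℝ} (hcont : Continuous F) (hper : ∀ x, F (x + 1) = F x + 1) :
    Function.Surjective F := by
  intro t
  obtain ⟨n, hn⟩ : ∃ n : ℤ, F 0 - n ≤ t ∧ t ≤ F 0 + n := by
    obtain ⟨n, hn⟩ := exists_nat_gt (|t - F 0|)
    refine ⟨n, ?_, ?_⟩ <;> · rw [abs_lt] at hn; push_cast; linarith [hn.1, hn.2]
  have h1 : F (-n : ℤ) ≤ t := by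
    have : F ((0:ℝ) + (-n : ℤ)) = F 0 + (-n : ℤ) := per_add_int hper 0 (-n)
    simp only [zero_add] at this
    rw [this]; push_cast; linarith [hn.1]
  have h2 : t ≤ F (n : ℤ) := by
    have : F ((0:ℝ) + (n : ℤ)) = F 0 + (n : ℤ) := per_add_int hper 0 n
    simp only [zero_add] at this
    rw [this]; linarith [hn.2]
  have hle : ((-n:ℤ):ℝ) ≤ ((n:ℤ):ℝ) := by push_cast; linarith [hn.1, hn.2]
  obtain ⟨z, _, hz⟩ := intermediate_value_Icc hle hcont.continuousOn ⟨h1, h2⟩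
  exact ⟨z, hz⟩

/-- The inverse of an orientation-preserving lift is an orientation-preserving lift
of the inverse homeomorphism. -/
lemma isOPLift_symm {f : UnitAddCircle ≃ₜ UnitAddCircle} {F : ℝ → ℝ} (hF : IsOPLift f F) :
    ∃ Finv : ℝ → ℝ, IsOPLift f.symm Finv ∧ (∀ x, Finv (F x) = x) ∧ (∀ x, F (Finv x) = x) := by
  obtain ⟨hcont, hmono, hper, hdesc⟩ := hF
  have hsurj := op_lift_surj hcont hper
  let e : ℝ ≃o ℝ := (StrictMono.orderIsoOfSurjective F hmono hsurj)
  have he : ∀ x, e x = F x := fun _ => rfl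
  refine ⟨e.symm, ⟨?_, ?_, ?_, ?_⟩, ?_, ?_⟩
  · exact e.symm.continuous
  · exact e.symm.strictMono
  · intro x
    apply e.injective
    show e (e.symm (x+1)) = e (e.symm x + 1)
    rw [e.apply_symm_apply, he, hper, ← he, e.apply_symm_apply]
  · intro x
    have : f (π (e.symm x)) = π (F (e.symm x)) := hdesc _
    rw [show F (e.symm x) = e (e.symm x) from rfl, e.apply_symm_apply] at this
    calc f.symm (π x) = f.symm (f (π (e.symm x))) := by rw [this]
    _ = π (e.symm x) := f.symm_apply_apply _
  · intro x; exact e.symm_apply_apply x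
  · intro x; exact e.apply_symm_apply x

lemma isOPLift_comp {f g : UnitAddCircle ≃ₜ UnitAddCircle} {F Gm : ℝ → ℝ}
    (hF : IsOPLift f F) (hG : IsOPLift g Gm) :
    IsOPLift (f * g) (F ∘ Gm) := by
  obtain ⟨hc1, hm1, hp1, hd1⟩ := hF
  obtain ⟨hc2, hm2, hp2, hd2⟩ := hG
  refine ⟨hc1.comp hc2, hm1.comp hm2, ?_, ?_⟩
  · intro x; simp only [Function.comp_apply, hp2, hp1]
  · intro x
    show (f * g) (π x) = π (F (Gm x))
    have : (f * g) (π x) = f (g (π x)) := rfl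
    rw [this, hd2, hd1]

lemma isOPC1Lift_isOPLift {f : UnitAddCircle ≃ₜ UnitAddCircle} {F : ℝ → ℝ}
    (hF : IsOPC1Lift f F) : IsOPLift f F :=
  ⟨hF.1.continuous, strictMono_of_deriv_pos hF.2.1, hF.2.2.1, hF.2.2.2⟩

/-- Triviality of homs from a perfect group to a commutative group. -/
lemma perfect_hom_trivial {Γ A : Type*} [Group Γ] [CommGroup A]
    (hab : Subsingleton (Abelianization Γ)) (φ : Γ →* A) (γ : Γ) : φ γ = 1 := by
  have h1 : Abelianization.lift φ (Abelianization.of γ) = φ γ := Abelianization.lift_apply_of φ γ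
  have h2 : (Abelianization.of γ : Abelianization Γ) = 1 := Subsingleton.elim _ _
  rw [← h1, h2, map_one]

end
end CircleProd
end part3
section part4
open scoped Classical
namespace CircleProd
noncomputable section

def opOK (f : UnitAddCircle ≃ₜ UnitAddCircle) : Prop := ∃ F, IsOPC1Lift f F

def negOK (f : UnitAddCircle ≃ₜ UnitAddCircle) : Prop :=
  ∃ F : ℝ → ℝ, ContDiff ℝ 1 F ∧ (∀ x, deriv F x < 0) ∧ (∀ x, F (x + 1) = F x - 1) ∧
    ∀ x : ℝ, f (π x) = π (F x)

lemma c1_dichotomy {f : UnitAddCircle ≃ₜ UnitAddCircle} {F : ℝ → ℝ}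
    (h : IsC1Lift f F) : opOK f ∨ negOK f := by
  obtain ⟨hC, hnz, hper, hdesc⟩ := h
  have hcd : Continuous (deriv F) := hC.continuous_deriv le_rfl
  by_cases hp : ∀ x, 0 < deriv F x
  · left
    refine ⟨F, hC, hp, ?_, hdesc⟩
    have hmono : StrictMono F := strictMono_of_deriv_pos hp
    rcases hper with hper | hper
    · exact hper
    · exfalso
      have h1 : F (0 + 1) < F 0 := by rw [hper 0]; linarith [hmono (show (0:ℝ) < 0 + 1 by norm_num)]
      have h2 : F 0 < F (0 + 1) := hmono (by norm_num)
      linarith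
  · right
    push_neg at hp
    obtain ⟨x₀, hx₀⟩ := hp
    have hx₀' : deriv F x₀ < 0 := lt_of_le_of_ne hx₀ (hnz x₀)
    have hneg : ∀ x, deriv F x < 0 := by
      intro x
      rcases lt_trichotomy (deriv F x) 0 with h | h | h
      · exact h
      · exact absurd h (hnz x)
      · exfalso
        have hmem : (0:ℝ) ∈ Set.Icc (deriv F x₀) (deriv F x) := ⟨le_of_lt hx₀', le_of_lt h⟩
        obtain ⟨z, hz⟩ := intermediate_value_univ x₀ x hcd hmem
        exact hnz z hz
    have hanti : StrictAnti F := strictAnti_of_deriv_neg hneg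
    refine ⟨F, hC, hneg, ?_, hdesc⟩
    rcases hper with hper | hper
    · exfalso
      have h1 : F (0 + 1) < F 0 := hanti (by norm_num)
      rw [hper 0] at h1; linarith
    · exact hper

lemma not_op_and_neg {f : UnitAddCircle ≃ₜ UnitAddCircle} : ¬(opOK f ∧ negOK f) := by
  rintro ⟨⟨F, hF⟩, ⟨F', hC', hneg', hper', hdesc'⟩⟩
  have hmono : StrictMono F := strictMono_of_deriv_pos hF.2.1
  have hanti : StrictAnti F' := strictAnti_of_deriv_neg hneg'
  obtain ⟨m, hm⟩ := lifts_diff hF.1.continuous hC'.continuous hF.2.2.2 hdesc'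
  have h1 : F' 0 < F' 1 := by rw [hm 0, hm 1]; linarith [hmono (show (0:ℝ) < 1 by norm_num)]
  exact absurd h1 (not_lt.2 (le_of_lt (hanti (by norm_num))))

lemma deriv_comp_pos {F Gm : ℝ → ℝ} (hF : ContDiff ℝ 1 F) (hG : ContDiff ℝ 1 Gm)
    (x : ℝ) : deriv (F ∘ Gm) x = deriv F (Gm x) * deriv Gm x := by
  exact deriv_comp x ((hF.differentiable one_ne_zero).differentiableAt)
    ((hG.differentiable one_ne_zero).differentiableAt)

lemma mul_apply' (f g : UnitAddCircle ≃ₜ UnitAddCircle) (q : UnitAddCircle) :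
    (f * g) q = f (g q) := rfl

lemma desc_comp {f g : UnitAddCircle ≃ₜ UnitAddCircle} {F Gm : ℝ → ℝ}
    (hd1 : ∀ x : ℝ, f (π x) = π (F x)) (hd2 : ∀ x : ℝ, g (π x) = π (Gm x)) :
    ∀ x : ℝ, (f * g) (π x) = π ((F ∘ Gm) x) := by
  intro x; show (f*g) (π x) = π (F (Gm x)); rw [mul_apply', hd2, hd1]

lemma opOK_mul_oo {f g : UnitAddCircle ≃ₜ UnitAddCircle} (hf : opOK f) (hg : opOK g) :
    opOK (f * g) := by
  obtain ⟨F, hC1, hp1, hq1, hd1⟩ := hf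
  obtain ⟨Gm, hC2, hp2, hq2, hd2⟩ := hg
  refine ⟨F ∘ Gm, hC1.comp hC2, ?_, ?_, desc_comp hd1 hd2⟩
  · intro x; rw [deriv_comp_pos hC1 hC2]; exact mul_pos (hp1 _) (hp2 _)
  · intro x; simp only [Function.comp_apply, hq2, hq1]

lemma opOK_mul_nn {f g : UnitAddCircle ≃ₜ UnitAddCircle} (hf : negOK f) (hg : negOK g) :
    opOK (f * g) := by
  obtain ⟨F, hC1, hp1, hq1, hd1⟩ := hf
  obtain ⟨Gm, hC2, hp2, hq2, hd2⟩ := hg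
  have hq1' : ∀ y, F (y - 1) = F y + 1 := by
    intro y
    have := hq1 (y - 1)
    rw [show y - 1 + 1 = y by ring] at this
    linarith
  refine ⟨F ∘ Gm, hC1.comp hC2, ?_, ?_, desc_comp hd1 hd2⟩
  · intro x; rw [deriv_comp_pos hC1 hC2]; exact mul_pos_of_neg_of_neg (hp1 _) (hp2 _)
  · intro x
    simp only [Function.comp_apply, hq2]
    rw [show Gm x - 1 = Gm x - 1 from rfl, ← hq1' (Gm x)]

lemma negOK_mul_on {f g : UnitAddCircle ≃ₜ UnitAddCircle} (hf : opOK f) (hg : negOK g) :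
    negOK (f * g) := by
  obtain ⟨F, hC1, hp1, hq1, hd1⟩ := hf
  obtain ⟨Gm, hC2, hp2, hq2, hd2⟩ := hg
  have hq1' : ∀ y, F (y - 1) = F y - 1 := by
    intro y
    have := hq1 (y - 1)
    rw [show y - 1 + 1 = y by ring] at this
    linarith
  refine ⟨F ∘ Gm, hC1.comp hC2, ?_, ?_, desc_comp hd1 hd2⟩
  · intro x; rw [deriv_comp_pos hC1 hC2]; exact mul_neg_of_pos_of_neg (hp1 _) (hp2 _)
  · intro x; simp only [Function.comp_apply, hq2, hq1']

lemma negOK_mul_no {f g : UnitAddCircle ≃ₜ UnitAddCircle} (hf : negOK f) (hg : opOK g) :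
    negOK (f * g) := by
  obtain ⟨F, hC1, hp1, hq1, hd1⟩ := hf
  obtain ⟨Gm, hC2, hp2, hq2, hd2⟩ := hg
  refine ⟨F ∘ Gm, hC1.comp hC2, ?_, ?_, desc_comp hd1 hd2⟩
  · intro x; rw [deriv_comp_pos hC1 hC2]; exact mul_neg_of_neg_of_pos (hp1 _) (hp2 _)
  · intro x; simp only [Function.comp_apply, hq2, hq1]

lemma opOK_one : opOK (1 : UnitAddCircle ≃ₜ UnitAddCircle) := by
  refine ⟨id, contDiff_id, ?_, ?_, ?_⟩
  · intro x; rw [deriv_id]; norm_num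
  · intro x; rfl
  · intro x; rfl

/-- The sign homomorphism attached to a `C¹` action. -/
def signHom {Γ : Type*} [Group Γ] (ρ : Γ →* (UnitAddCircle ≃ₜ UnitAddCircle))
    (hρ : IsC1Action ρ) : Γ →* ℤˣ where
  toFun γ := if opOK (ρ γ) then 1 else -1
  map_one' := by rw [map_one, if_pos opOK_one]
  map_mul' := by
    intro γ δ
    have dich : ∀ ε : Γ, opOK (ρ ε) ∨ negOK (ρ ε) := by
      intro ε; obtain ⟨F, hF⟩ := hρ ε; exact c1_dichotomy hF
    have hmul : ρ (γ * δ) = ρ γ * ρ δ := map_mul ρ γ δ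
    rcases dich γ with h1 | h1 <;> rcases dich δ with h2 | h2
    · rw [if_pos h1, if_pos h2, if_pos (by rw [hmul]; exact opOK_mul_oo h1 h2)]; norm_num
    · rw [if_pos h1, if_neg (fun hc => not_op_and_neg ⟨hc, h2⟩),
        if_neg (fun hc => not_op_and_neg ⟨hc, by rw [hmul]; exact negOK_mul_on h1 h2⟩)]
      norm_num
    · rw [if_neg (fun hc => not_op_and_neg ⟨hc, h1⟩), if_pos h2,
        if_neg (fun hc => not_op_and_neg ⟨hc, by rw [hmul]; exact negOK_mul_no h1 h2⟩)]
      norm_num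
    · rw [if_neg (fun hc => not_op_and_neg ⟨hc, h1⟩),
        if_neg (fun hc => not_op_and_neg ⟨hc, h2⟩), if_pos (by rw [hmul]; exact opOK_mul_nn h1 h2)]
      norm_num

end
end CircleProd
end part4
section part5
namespace CircleProd
noncomputable section

open Filter Topology

/-- **Thurston stability.** A finitely generated perfect group acting on `ℝ` by `C¹`
diffeomorphisms with positive derivative, fixing a point `a`, cannot move any point. -/
theorem thurston {Γ : Type*} [Group Γ] (hfg : Group.FG Γ)
    (hab : Subsingleton (Abelianization Γ))
    (T : Γ → ℝ → ℝ) (hC : ∀ γ, ContDiff ℝ 1 (T γ)) (hpos : ∀ γ x, 0 < deriv (T γ) x)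
    (hhom : ∀ γ δ x, T (γ * δ) x = T γ (T δ x)) (hone : ∀ x, T 1 x = x)
    (a : ℝ) (ha : ∀ γ, T γ a = a) (xs : ℝ) (hxs : a < xs) (γ₀ : Γ)
    (hmoved : T γ₀ xs ≠ xs) : False := by
  classical
  obtain ⟨S, hS⟩ := Group.fg_def.1 hfg
  -- inverse fixed-point transfer
  have hinvfix : ∀ (γ : Γ) (y : ℝ), T γ y = y → T γ⁻¹ y = y := by
    intro γ y hy
    calc T γ⁻¹ y = T γ⁻¹ (T γ y) := by rw [hy]
    _ = T (γ⁻¹ * γ) y := (hhom _ _ _).symm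
    _ = y := by rw [inv_mul_cancel]; exact hone y
  -- the fixed set up to xs
  set Z : Set ℝ := {y | y ∈ Set.Icc a xs ∧ ∀ γ, T γ y = y} with hZ
  have hZclosed : IsClosed Z := by
    have h2 : IsClosed {y : ℝ | ∀ γ, T γ y = y} := by
      rw [Set.setOf_forall]
      exact isClosed_iInter fun γ => isClosed_eq (hC γ).continuous continuous_id
    exact isClosed_Icc.inter h2
  have haZ : a ∈ Z := ⟨⟨le_refl a, le_of_lt hxs⟩, ha⟩
  have hZne : Z.Nonempty := ⟨a, haZ⟩
  have hZbdd : BddAbove Z := ⟨xs, fun y hy => hy.1.2⟩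
  set c : ℝ := sSup Z with hc
  have hcZ : c ∈ Z := hZclosed.csSup_mem hZne hZbdd
  have hcfix : ∀ γ, T γ c = c := hcZ.2
  have hcxs : c < xs := by
    rcases lt_or_eq_of_le hcZ.1.2 with h | h
    · exact h
    · exact absurd (h ▸ hcZ.2 γ₀) hmoved
  -- every point in (c, xs] is moved by some generator
  have hgenmove : ∀ y, c < y → y ≤ xs → ∃ s ∈ S, T s y ≠ y := by
    intro y hy1 hy2
    by_contra hcon
    push_neg at hcon
    have hally : ∀ γ : Γ, T γ y = y := by
      intro γ
      have hγ : γ ∈ Subgroup.closure (S : Set Γ) := hS ▸ Subgroup.mem_top γ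
      refine Subgroup.closure_induction (fun x hx => hcon x hx) (hone y) ?_
        (fun x _ hx => hinvfix x y hx) hγ
      intro u v _ _ hu hv
      rw [hhom, hv, hu]
    have : y ∈ Z := ⟨⟨le_trans hcZ.1.1 (le_of_lt hy1), hy2⟩, hally⟩
    exact absurd (le_csSup hZbdd this) (not_le.2 hy1)
  -- derivative of every element at c is 1
  have hd1 : ∀ γ, deriv (T γ) c = 1 := by
    have hφd : ∀ γ : Γ, Real.log (deriv (T γ) c) = 0 := by
      set φd : Γ →* Multiplicative ℝ :=
        { toFun := fun γ => Multiplicative.ofAdd (Real.log (deriv (T γ) c))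
          map_one' := by
            have : T 1 = id := funext hone
            rw [this, deriv_id, Real.log_one]; rfl
          map_mul' := by
            intro γ δ
            have hcomp : T (γ * δ) = T γ ∘ T δ := funext fun x => hhom γ δ x
            have : deriv (T (γ * δ)) c = deriv (T γ) (T δ c) * deriv (T δ) c := by
              rw [hcomp]; exact deriv_comp_pos (hC γ) (hC δ) c
            rw [hcfix δ] at this
            rw [this, Real.log_mul (ne_of_gt (hpos γ c)) (ne_of_gt (hpos δ c))]
            rfl }
      intro γ
      have h1 := perfect_hom_trivial hab φd γ
      have h2 : Multiplicative.toAdd (φd γ) = Multiplicative.toAdd 1 := by rw [h1]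
      simpa [φd] using h2
    intro γ
    have h1 := hφd γ
    have h2 : Real.exp (Real.log (deriv (T γ) c)) = deriv (T γ) c := Real.exp_log (hpos γ c)
    rw [h1, Real.exp_zero] at h2
    exact h2.symm
  -- distortion estimate
  have hdist : ∀ (γ : Γ) (ε : ℝ), 0 < ε → ∃ δ > 0, ∀ y z : ℝ,
      |y - c| ≤ δ → |z - c| ≤ δ → |T γ y - y - (T γ z - z)| ≤ ε * |y - z| := by
    intro γ ε hε
    have hcont : ContinuousAt (deriv (T γ)) c := ((hC γ).continuous_deriv le_rfl).continuousAt
    rw [Metric.continuousAt_iff] at hcont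
    obtain ⟨δ, hδpos, hδ⟩ := hcont ε hε
    refine ⟨δ/2, by linarith, fun y z hy hz => ?_⟩
    set u : ℝ → ℝ := fun w => T γ w - w with hu
    have hdiff : ∀ w ∈ Set.Icc (c - δ/2) (c + δ/2), DifferentiableAt ℝ u w := by
      intro w _
      exact (((hC γ).differentiable one_ne_zero).differentiableAt).sub differentiableAt_id
    have hbound : ∀ w ∈ Set.Icc (c - δ/2) (c + δ/2), ‖deriv u w‖ ≤ ε := by
      intro w hw
      have hder : deriv u w = deriv (T γ) w - 1 := by
        rw [hu]
        rw [deriv_fun_sub (g := fun w : ℝ => w) (((hC γ).differentiable one_ne_zero).differentiableAt) differentiableAt_id]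
        simp
      rw [hder, Real.norm_eq_abs]
      have hwc : dist w c < δ := by
        rw [Real.dist_eq, abs_sub_lt_iff]
        constructor
        · have := hw.2; linarith
        · have := hw.1; linarith
      have := hδ hwc
      rw [Real.dist_eq, hd1 γ] at this
      exact le_of_lt this
    have hconv : Convex ℝ (Set.Icc (c - δ/2) (c + δ/2)) := convex_Icc _ _
    have hy' : y ∈ Set.Icc (c - δ/2) (c + δ/2) := by
      rw [abs_sub_le_iff] at hy
      exact ⟨by linarith [hy.2], by linarith [hy.1]⟩
    have hz' : z ∈ Set.Icc (c - δ/2) (c + δ/2) := by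
      rw [abs_sub_le_iff] at hz
      exact ⟨by linarith [hz.2], by linarith [hz.1]⟩
    have hmvt := hconv.norm_image_sub_le_of_norm_deriv_le hdiff hbound hy' hz'
    rw [Real.norm_eq_abs, Real.norm_eq_abs] at hmvt
    have heq : T γ y - y - (T γ z - z) = u y - u z := by simp only [hu]; try ring
    rw [heq, abs_sub_comm (u y) (u z), abs_sub_comm y z]
    exact hmvt
  -- the sequence
  set xk : ℕ → ℝ := fun k => c + (xs - c) / (k + 1) with hxk
  have hxkmem : ∀ k, c < xk k ∧ xk k ≤ xs := by
    intro k
    constructor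
    · have : (0:ℝ) < (xs - c) / (k + 1) :=
        div_pos (by linarith) (by positivity)
      simp only [hxk]; linarith
    · simp only [hxk]
      have h0 : (0:ℝ) ≤ (k:ℝ) := Nat.cast_nonneg k
      have h1 : (1:ℝ) ≤ (k:ℝ) + 1 := by linarith
      have := div_le_self (by linarith : (0:ℝ) ≤ xs - c) h1
      linarith
  have hxktend : Tendsto xk atTop (𝓝 c) := by
    have h0 : Tendsto (fun k : ℕ => (xs - c) / ((k:ℝ) + 1)) atTop (𝓝 0) := by
      have h1 := (tendsto_const_div_atTop_nhds_zero_nat (xs - c)).comp (tendsto_add_atTop_nat 1)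
      have h2 : ((fun n : ℕ => (xs - c) / (n:ℝ)) ∘ fun k : ℕ => k + 1)
          = fun k : ℕ => (xs - c) / ((k:ℝ) + 1) := by
        funext k
        show (xs - c) / ((k + 1 : ℕ) : ℝ) = (xs - c) / ((k:ℝ) + 1)
        push_cast; ring
      rwa [h2] at h1
    have := h0.const_add c
    simpa [hxk] using this
  -- generators nonempty
  have hSne : S.Nonempty := by
    rcases Finset.eq_empty_or_nonempty S with rfl | h
    · exfalso
      have : γ₀ ∈ Subgroup.closure ((∅ : Finset Γ) : Set Γ) := hS ▸ Subgroup.mem_top γ₀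
      rw [Finset.coe_empty, Subgroup.closure_empty, Subgroup.mem_bot] at this
      rw [this] at hmoved
      exact hmoved (hone xs)
    · exact h
  -- the displacement normalization
  set d : ℕ → ℝ := fun k => S.sup' hSne (fun s => |T s (xk k) - xk k|) with hd
  have hdge : ∀ k, ∀ s ∈ S, |T s (xk k) - xk k| ≤ d k := by
    intro k s hs; exact Finset.le_sup' (fun s => |T s (xk k) - xk k|) hs
  have hdpos : ∀ k, 0 < d k := by
    intro k
    obtain ⟨s, hs, hmove⟩ := hgenmove (xk k) (hxkmem k).1 (hxkmem k).2
    calc (0:ℝ) < |T s (xk k) - xk k| := by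
          rw [abs_pos]; intro h; exact hmove (by linarith)
    _ ≤ d k := hdge k s hs
  set φ : ℕ → Γ → ℝ := fun k γ => (T γ (xk k) - xk k) / d k with hφ
  -- approximate additivity
  have hAA : ∀ (γ δ : Γ) (Cd : ℝ), (∀ᶠ k in atTop, |φ k δ| ≤ Cd) →
      ∀ ε : ℝ, 0 < ε → ∀ᶠ k in atTop, |φ k (γ * δ) - φ k γ - φ k δ| ≤ ε * Cd := by
    intro γ δ Cd hCd ε hε
    obtain ⟨δ₀, hδ₀pos, hδ₀⟩ := hdist γ ε hε
    have hev1 : ∀ᶠ k in atTop, |xk k - c| ≤ δ₀ := by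
      have := hxktend (Metric.closedBall_mem_nhds c hδ₀pos)
      simpa [Real.dist_eq] using this
    have hev2 : ∀ᶠ k in atTop, |T δ (xk k) - c| ≤ δ₀ := by
      have htc : Tendsto (fun k => T δ (xk k)) atTop (𝓝 c) := by
        have := ((hC δ).continuous.continuousAt (x := c)).tendsto.comp hxktend
        rwa [hcfix δ] at this
      have := htc (Metric.closedBall_mem_nhds c hδ₀pos)
      simpa [Real.dist_eq] using this
    filter_upwards [hev1, hev2, hCd] with k h1 h2 h3
    have key : |T γ (T δ (xk k)) - T δ (xk k) - (T γ (xk k) - xk k)| ≤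
        ε * |T δ (xk k) - xk k| := by
      have := hδ₀ (T δ (xk k)) (xk k) h2 h1
      convert this using 2
      try ring
    have hdk := hdpos k
    have expand : φ k (γ * δ) - φ k γ - φ k δ =
        (T γ (T δ (xk k)) - T δ (xk k) - (T γ (xk k) - xk k)) / d k := by
      simp only [hφ, hhom]
      field_simp
      ring
    rw [expand, abs_div, abs_of_pos hdk, div_le_iff₀ hdk]
    calc |T γ (T δ (xk k)) - T δ (xk k) - (T γ (xk k) - xk k)|
        ≤ ε * |T δ (xk k) - xk k| := key
    _ = ε * (|φ k δ| * d k) := by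
        rw [hφ]; simp only
        rw [abs_div, abs_of_pos hdk]
        field_simp
    _ ≤ ε * Cd * d k := by
        have h4 : |φ k δ| * d k ≤ Cd * d k :=
          mul_le_mul_of_nonneg_right h3 (le_of_lt hdk)
        calc ε * (|φ k δ| * d k) ≤ ε * (Cd * d k) :=
              mul_le_mul_of_nonneg_left h4 (le_of_lt hε)
        _ = ε * Cd * d k := by ring
  -- boundedness
  have hφone : ∀ k, φ k 1 = 0 := by
    intro k; simp only [hφ, hone]; simp
  have hBdd : ∀ γ : Γ, ∃ C : ℝ, 0 ≤ C ∧ ∀ᶠ k in atTop, |φ k γ| ≤ C := by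
    intro γ
    have hγ : γ ∈ Subgroup.closure (S : Set Γ) := hS ▸ Subgroup.mem_top γ
    refine Subgroup.closure_induction ?_ ?_ ?_ ?_ hγ
    · -- generators
      intro s hs
      refine ⟨1, zero_le_one, Eventually.of_forall fun k => ?_⟩
      rw [hφ]; simp only
      rw [abs_div, abs_of_pos (hdpos k), div_le_one (hdpos k)]
      exact hdge k s hs
    · exact ⟨0, le_refl 0, Eventually.of_forall fun k => by rw [hφone k]; simp⟩
    · -- mul
      rintro u v _ _ ⟨Cu, hCu0, hCu⟩ ⟨Cv, hCv0, hCv⟩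
      refine ⟨Cu + Cv + Cv, by linarith, ?_⟩
      filter_upwards [hAA u v Cv hCv 1 one_pos, hCu, hCv] with k h1 h2 h3
      rw [one_mul] at h1
      have h4 : |φ k (u*v) - (φ k u + φ k v)| ≤ Cv := by
        have heq2 : φ k (u*v) - (φ k u + φ k v) = φ k (u*v) - φ k u - φ k v := by ring
        rw [heq2]; exact h1
      have h5 : |φ k u + φ k v| ≤ Cu + Cv := le_trans (abs_add_le _ _) (by linarith)
      have h6 : |φ k (u*v)| ≤ |φ k (u*v) - (φ k u + φ k v)| + |φ k u + φ k v| := by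
        have h7 := abs_add_le (φ k (u*v) - (φ k u + φ k v)) (φ k u + φ k v)
        simpa using h7
      linarith
    · -- inv
      rintro u _ ⟨Cu, hCu0, hCu⟩
      refine ⟨Cu + Cu, by linarith, ?_⟩
      filter_upwards [hAA u⁻¹ u Cu hCu 1 one_pos, hCu] with k h1 h2
      rw [inv_mul_cancel, hφone k, one_mul] at h1
      have h3 : |φ k u⁻¹ + φ k u| ≤ Cu := by
        have heq3 : φ k u⁻¹ + φ k u = -(0 - φ k u⁻¹ - φ k u) := by ring
        rw [heq3, abs_neg]; exact h1
      have h4 : |φ k u⁻¹| ≤ |φ k u⁻¹ + φ k u| + |φ k u| := by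
        have h5 := abs_add_le (φ k u⁻¹ + φ k u) (-(φ k u))
        simpa using h5
      linarith
  -- ultrafilter limit
  set U : Ultrafilter ℕ := Ultrafilter.of atTop with hU
  have hUle : (U : Filter ℕ) ≤ atTop := Ultrafilter.of_le atTop
  have hlim : ∀ γ : Γ, ∃ L : ℝ, Tendsto (fun k => φ k γ) (U : Filter ℕ) (𝓝 L) := by
    intro γ
    obtain ⟨C, hC0, hCev⟩ := hBdd γ
    have hmem : Set.Icc (-C) C ∈ Ultrafilter.map (fun k => φ k γ) U := by
      rw [Ultrafilter.mem_map]
      have : {k | φ k γ ∈ Set.Icc (-C) C} ∈ atTop := by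
        filter_upwards [hCev] with k hk
        exact Set.mem_Icc.2 (abs_le.1 hk)
      exact hUle this
    obtain ⟨L, _, hL⟩ := (isCompact_Icc (a := -C) (b := C)).ultrafilter_le_nhds
      (Ultrafilter.map (fun k => φ k γ) U) (le_principal_iff.2 hmem)
    exact ⟨L, hL⟩
  choose Φ hΦ using hlim
  -- Φ is additive
  have hΦadd : ∀ γ δ : Γ, Φ (γ * δ) = Φ γ + Φ δ := by
    intro γ δ
    obtain ⟨Cd, hCd0, hCdev⟩ := hBdd δ
    have habs : ∀ ε : ℝ, 0 < ε → |Φ (γ * δ) - Φ γ - Φ δ| ≤ ε * Cd := by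
      intro ε hε
      have htt : Tendsto (fun k => |φ k (γ * δ) - φ k γ - φ k δ|) (U : Filter ℕ)
          (𝓝 |Φ (γ * δ) - Φ γ - Φ δ|) := (((hΦ (γ * δ)).sub (hΦ γ)).sub (hΦ δ)).abs
      have hev : ∀ᶠ k in (U : Filter ℕ), |φ k (γ * δ) - φ k γ - φ k δ| ≤ ε * Cd :=
        hUle (hAA γ δ Cd hCdev ε hε)
      exact le_of_tendsto htt hev
    have : |Φ (γ * δ) - Φ γ - Φ δ| ≤ 0 := by
      by_contra hcon
      push_neg at hcon
      have h1 := habs (|Φ (γ * δ) - Φ γ - Φ δ| / (2 * (Cd + 1))) (by positivity)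
      have h2 : |Φ (γ * δ) - Φ γ - Φ δ| / (2 * (Cd + 1)) * Cd < |Φ (γ * δ) - Φ γ - Φ δ| := by
        rw [div_mul_eq_mul_div, div_lt_iff₀ (by positivity)]
        nlinarith
      linarith
    have h0 := abs_nonpos_iff.mp this
    linarith
  have hΦ1 : Φ 1 = 0 := by
    have := hΦadd 1 1
    rw [mul_one] at this
    linarith
  -- Φ is trivial by perfectness
  have hΦ0 : ∀ γ, Φ γ = 0 := by
    set ψ : Γ →* Multiplicative ℝ :=
      { toFun := fun γ => Multiplicative.ofAdd (Φ γ)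
        map_one' := by rw [hΦ1]; rfl
        map_mul' := fun γ δ => by rw [hΦadd]; rfl }
    intro γ
    have h1 := perfect_hom_trivial hab ψ γ
    have h2 : Multiplicative.toAdd (ψ γ) = Multiplicative.toAdd 1 := by rw [h1]
    simpa [ψ] using h2
  -- but some generator has |Φ| = 1
  have hcover : ∃ s ∈ S, {k : ℕ | |T s (xk k) - xk k| = d k} ∈ U := by
    by_contra hcon
    push_neg at hcon
    have hU' : ∀ s ∈ S, {k : ℕ | |T s (xk k) - xk k| ≠ d k} ∈ U := by
      intro s hs
      have hns := hcon s hs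
      rcases Ultrafilter.mem_or_compl_mem U {k : ℕ | |T s (xk k) - xk k| = d k} with h | h
      · exact absurd h hns
      · have h2 : {k : ℕ | |T s (xk k) - xk k| ≠ d k}
            = {k : ℕ | |T s (xk k) - xk k| = d k}ᶜ := rfl
        rw [h2]; exact h
    have hall : (⋂ s ∈ S, {k : ℕ | |T s (xk k) - xk k| ≠ d k}) ∈ (U : Filter ℕ) := by
      rw [Filter.biInter_finset_mem]
      intro s hs
      exact Ultrafilter.mem_coe.2 (hU' s hs)
    obtain ⟨k, hk⟩ := Ultrafilter.nonempty_of_mem (Ultrafilter.mem_coe.1 hall)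
    obtain ⟨s, hs, hsup⟩ := Finset.exists_mem_eq_sup' hSne (fun s => |T s (xk k) - xk k|)
    rw [Set.mem_iInter₂] at hk
    exact hk s hs hsup.symm
  obtain ⟨s, hsS, hsmem⟩ := hcover
  have h1 : Tendsto (fun k => |φ k s|) (U : Filter ℕ) (𝓝 |Φ s|) := (hΦ s).abs
  have h2 : ∀ᶠ k in (U : Filter ℕ), |φ k s| = 1 := by
    filter_upwards [hsmem] with k hk
    rw [hφ]
    simp only
    rw [abs_div, abs_of_pos (hdpos k), hk, div_self (ne_of_gt (hdpos k))]
  have h3 : Tendsto (fun k => |φ k s|) (U : Filter ℕ) (𝓝 1) := by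
    rw [tendsto_congr' h2]
    exact tendsto_const_nhds
  have : |Φ s| = 1 := tendsto_nhds_unique h1 h3
  rw [hΦ0 s] at this
  simp at this

end
end CircleProd
end part5
section part6
namespace CircleProd
noncomputable section

open Filter Topology

/-- If a f.g. perfect group acts on the circle with orientation-preserving `C¹` lifts and has a
global fixed point, the action is trivial. -/
theorem trivial_of_common_fixed {Γ : Type*} [Group Γ] (hfg : Group.FG Γ)
    (hab : Subsingleton (Abelianization Γ))
    (ρ' : Γ →* (UnitAddCircle ≃ₜ UnitAddCircle)) (L : ∀ γ, ∃ F, IsOPC1Lift (ρ' γ) F)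
    (x₀ : UnitAddCircle) (hx₀ : ∀ γ, ρ' γ x₀ = x₀) :
    ∀ γ, ρ' γ = Homeomorph.refl UnitAddCircle := by
  classical
  choose F hF using L
  obtain ⟨st, hst⟩ := pi_surjective x₀
  -- the normalizing integers
  have hm : ∀ γ, ∃ m : ℤ, F γ st = st + m := by
    intro γ
    have h1 : π (F γ st) = π st := by
      have h2 : ρ' γ (π st) = π (F γ st) := (hF γ).2.2.2 st
      rw [hst, hx₀ γ] at h2
      exact h2.symm.trans hst.symm
    exact pi_eq_iff.1 h1.symm |>.imp fun m hm => by linarith [hm]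
  choose m hm' using hm
  set T : Γ → ℝ → ℝ := fun γ x => F γ x - m γ with hT
  have hTC : ∀ γ, ContDiff ℝ 1 (T γ) := by
    intro γ
    exact (hF γ).1.sub contDiff_const
  have hTd : ∀ γ x, deriv (T γ) x = deriv (F γ) x := by
    intro γ x
    simp only [hT]
    rw [deriv_sub_const]
  have hTpos : ∀ γ x, 0 < deriv (T γ) x := by
    intro γ x; rw [hTd]; exact (hF γ).2.1 x
  have hTper : ∀ γ x, T γ (x + 1) = T γ x + 1 := by
    intro γ x; simp only [hT]; rw [(hF γ).2.2.1]; ring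
  have hTdesc : ∀ γ x, ρ' γ (π x) = π (T γ x) := by
    intro γ x
    simp only [hT]
    rw [show F γ x - (m γ : ℝ) = F γ x + (-m γ : ℤ) by push_cast; ring, pi_add_int]
    exact (hF γ).2.2.2 x
  have hTst : ∀ γ, T γ st = st := by
    intro γ; simp only [hT]; rw [hm' γ]; ring
  have hTmono : ∀ γ, StrictMono (T γ) := by
    intro γ
    have := strictMono_of_deriv_pos (hTpos γ)
    exact this
  -- homomorphism property
  have hThom : ∀ γ δ x, T (γ * δ) x = T γ (T δ x) := by
    intro γ δ
    have hdesc2 : ∀ x : ℝ, ρ' (γ * δ) (π x) = π (T γ (T δ x)) := by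
      intro x
      rw [map_mul, mul_apply', hTdesc δ, hTdesc γ]
    obtain ⟨n, hn⟩ := lifts_diff (f := ρ' (γ * δ))
      ((hTC (γ * δ)).continuous) (((hTC γ).continuous).comp ((hTC δ).continuous))
      (fun x => hTdesc (γ * δ) x) hdesc2
    have hn0 : (n : ℝ) = 0 := by
      have h1 := hn st
      simp only [Function.comp_apply] at h1
      rw [hTst δ, hTst γ, hTst (γ * δ)] at h1
      linarith
    intro x
    have h2 := hn x
    simp only [Function.comp_apply] at h2
    rw [hn0] at h2
    linarith
  have hTone : ∀ x, T 1 x = x := by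
    have hdesc1 : ∀ x : ℝ, π (T 1 x) = π x := by
      intro x
      rw [← hTdesc 1 x, map_one]
      rfl
    have hint : ∀ x, ∃ k : ℤ, T 1 x - x = k := by
      intro x
      obtain ⟨k, hk⟩ := pi_eq_iff.1 (hdesc1 x).symm
      exact ⟨k, by linarith⟩
    intro x
    have hconst : T 1 x - x = T 1 st - st :=
      intval_const (((hTC 1).continuous).sub continuous_id) hint x st
    have h2 : T 1 st - st = 0 := by rw [hTst 1]; ring
    rw [h2] at hconst
    linarith
  -- conclude
  intro γ
  apply Homeomorph.ext
  intro q
  by_contra hq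
  obtain ⟨xt, hxt⟩ := pi_surjective q
  obtain ⟨k, hk⟩ : ∃ k : ℤ, st < xt + k := by
    refine ⟨⌊st - xt⌋ + 1, ?_⟩
    have := Int.lt_floor_add_one (st - xt)
    push_cast
    linarith
  have hmoved : T γ (xt + k) ≠ xt + k := by
    intro hfix
    apply hq
    have h1 : ρ' γ (π (xt + k)) = π (xt + k) := by rw [hTdesc, hfix]
    rw [pi_add_int, hxt] at h1
    exact h1
  exact absurd (thurston hfg hab T hTC hTpos hThom hTone st hTst (xt + k) hk γ hmoved) id

end
end CircleProd
end part6
section part7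
namespace CircleProd
noncomputable section

open Filter Topology Set CircleDeg1Lift

local notation "τ" => CircleDeg1Lift.translationNumber

/-- Package an orientation-preserving lift as a `CircleDeg1Lift`. -/
def mkCD (A : ℝ → ℝ) (hmono : Monotone A) (hper : ∀ x, A (x + 1) = A x + 1) :
    CircleDeg1Lift := ⟨⟨A, hmono⟩, hper⟩

@[simp] lemma mkCD_apply (A : ℝ → ℝ) (hmono : Monotone A) (hper : ∀ x, A (x + 1) = A x + 1)
    (x : ℝ) : mkCD A hmono hper x = A x := rfl

lemma iter_L0 {f g : ℝ → ℝ} {S : Set ℝ} (hf : Monotone f)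
    (hfS : Set.MapsTo f S S) (hgS : Set.MapsTo g S S)
    (h : ∀ y ∈ S, f (g y) ≤ g (f y)) :
    ∀ n, ∀ y ∈ S, f^[n] (g y) ≤ g (f^[n] y) := by
  intro n
  induction n with
  | zero => intro y _; simp
  | succ n ih =>
      intro y hy
      calc f^[n+1] (g y) = f^[n] (f (g y)) := Function.iterate_succ_apply f n (g y)
      _ ≤ f^[n] (g (f y)) := (hf.iterate n) (h y hy)
      _ ≤ g (f^[n] (f y)) := ih (f y) (hfS hy)
      _ = g (f^[n+1] y) := by rw [← Function.iterate_succ_apply f n y]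

lemma iter_L0' {f g : ℝ → ℝ} {S : Set ℝ} (hg : Monotone g)
    (hfS : Set.MapsTo f S S) (hgS : Set.MapsTo g S S)
    (h : ∀ y ∈ S, f (g y) ≤ g (f y)) :
    ∀ n, ∀ y ∈ S, f (g^[n] y) ≤ g^[n] (f y) := by
  intro n
  induction n with
  | zero => intro y _; simp
  | succ n ih =>
      intro y hy
      calc f (g^[n+1] y) = f (g^[n] (g y)) := by rw [Function.iterate_succ_apply g n y]
      _ ≤ g^[n] (f (g y)) := ih (g y) (hgS hy)
      _ ≤ g^[n] (g (f y)) := (hg.iterate n) (h y hy)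
      _ = g^[n+1] (f y) := (Function.iterate_succ_apply g n (f y)).symm

lemma iter_L1 {f g : ℝ → ℝ} {S : Set ℝ} (hf : Monotone f) (hg : Monotone g)
    (hfS : Set.MapsTo f S S) (hgS : Set.MapsTo g S S)
    (h : ∀ y ∈ S, f (g y) ≤ g (f y)) :
    ∀ n, ∀ y ∈ S, f^[n] (g^[n] y) ≤ (f ∘ g)^[n] y := by
  intro n
  induction n with
  | zero => intro y _; simp
  | succ n ih =>
      intro y hy
      have hz : g^[n] y ∈ S := (hgS.iterate n) hy
      calc f^[n+1] (g^[n+1] y) = f (f^[n] (g (g^[n] y))) := by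
            rw [Function.iterate_succ_apply' f n, Function.iterate_succ_apply' g n]
      _ ≤ f (g (f^[n] (g^[n] y))) := hf (iter_L0 hf hfS hgS h n (g^[n] y) hz)
      _ ≤ f (g ((f ∘ g)^[n] y)) := hf (hg (ih y hy))
      _ = (f ∘ g)^[n+1] y := by rw [Function.iterate_succ_apply' (f ∘ g) n y]; rfl

lemma iter_L2 {f g : ℝ → ℝ} {S : Set ℝ} (hf : Monotone f) (hg : Monotone g)
    (hfS : Set.MapsTo f S S) (hgS : Set.MapsTo g S S)
    (h : ∀ y ∈ S, f (g y) ≤ g (f y)) :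
    ∀ n, ∀ y ∈ S, (g ∘ f)^[n] y ≤ g^[n] (f^[n] y) := by
  intro n
  induction n with
  | zero => intro y _; simp
  | succ n ih =>
      intro y hy
      calc (g ∘ f)^[n+1] y = g (f ((g ∘ f)^[n] y)) := by
            rw [Function.iterate_succ_apply' (g ∘ f) n y]; rfl
      _ ≤ g (f (g^[n] (f^[n] y))) := hg (hf (ih y hy))
      _ ≤ g (g^[n] (f (f^[n] y))) := hg (iter_L0' hg hfS hgS h n (f^[n] y) ((hfS.iterate n) hy))
      _ = g^[n+1] (f^[n+1] y) := by
            rw [Function.iterate_succ_apply' g n, Function.iterate_succ_apply' f n]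

lemma pow_lower (w : CircleDeg1Lift) (x : ℝ) (n : ℕ) :
    x + n * τ w - 1 < (w ^ n) x := by
  have h1 : τ (w ^ n) ≤ ⌈(w ^ n) x - x⌉ := translationNumber_le_ceil_sub (w ^ n) x
  have h2 : (⌈(w ^ n) x - x⌉ : ℝ) < ((w ^ n) x - x) + 1 := Int.ceil_lt_add_one _
  rw [translationNumber_pow] at h1
  linarith

lemma pow_upper (w : CircleDeg1Lift) (x : ℝ) (n : ℕ) :
    (w ^ n) x < x + n * τ w + 1 := by
  have h1 := map_lt_add_translationNumber_add_one (w ^ n) x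
  rw [translationNumber_pow] at h1
  exact h1

lemma tau_ge_of_seq (w : CircleDeg1Lift) (y₀ : ℝ) (c : ℝ)
    (h : ∀ n : ℕ, y₀ + n * c - 2 ≤ (w ^ n) y₀) : c ≤ τ w := by
  have h1 : Tendsto (fun n : ℕ => ((w ^ n) y₀ - y₀) / n) atTop (𝓝 (τ w)) :=
    w.tendsto_translationNumber y₀
  have h2 : Tendsto (fun n : ℕ => c - 2 / n) atTop (𝓝 c) := by
    have := (tendsto_const_div_atTop_nhds_zero_nat 2).const_sub c
    simpa using this
  refine le_of_tendsto_of_tendsto h2 h1 ?_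
  filter_upwards [eventually_ge_atTop 1] with n hn
  have hn' : (0:ℝ) < n := by exact_mod_cast hn
  rw [le_div_iff₀ hn']
  have hdiv : 2 / (n:ℝ) * n = 2 := div_mul_cancel₀ 2 (ne_of_gt hn')
  nlinarith [h n, hdiv]

lemma tau_le_of_seq (w : CircleDeg1Lift) (y₀ : ℝ) (c : ℝ)
    (h : ∀ n : ℕ, (w ^ n) y₀ ≤ y₀ + n * c + 2) : τ w ≤ c := by
  have h1 : Tendsto (fun n : ℕ => ((w ^ n) y₀ - y₀) / n) atTop (𝓝 (τ w)) :=
    w.tendsto_translationNumber y₀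
  have h2 : Tendsto (fun n : ℕ => c + 2 / n) atTop (𝓝 c) := by
    have := (tendsto_const_div_atTop_nhds_zero_nat 2).const_add c
    simpa using this
  refine le_of_tendsto_of_tendsto h1 h2 ?_
  filter_upwards [eventually_ge_atTop 1] with n hn
  have hn' : (0:ℝ) < n := by exact_mod_cast hn
  rw [div_le_iff₀ hn']
  have hdiv : 2 / (n:ℝ) * n = 2 := div_mul_cancel₀ 2 (ne_of_gt hn')
  nlinarith [h n, hdiv]

lemma sand_aux (cf cg : CircleDeg1Lift) (S : Set ℝ) (y₀ : ℝ) (hy₀ : y₀ ∈ S)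
    (hfS : Set.MapsTo ⇑cf S S) (hgS : Set.MapsTo ⇑cg S S)
    (hle : ∀ y ∈ S, cf (cg y) ≤ cg (cf y)) :
    τ cf + τ cg ≤ τ (cf * cg) ∧ τ (cg * cf) ≤ τ cg + τ cf := by
  constructor
  · apply tau_ge_of_seq (cf * cg) y₀
    intro n
    have h1 : (⇑cf)^[n] ((⇑cg)^[n] y₀) ≤ ((⇑cf) ∘ (⇑cg))^[n] y₀ :=
      iter_L1 cf.monotone cg.monotone hfS hgS hle n y₀ hy₀
    have h2 : ((cf * cg) ^ n) y₀ = ((⇑cf) ∘ (⇑cg))^[n] y₀ := by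
      rw [CircleDeg1Lift.coe_pow, CircleDeg1Lift.coe_mul]
    have h3 : (cg ^ n) y₀ = (⇑cg)^[n] y₀ := by rw [CircleDeg1Lift.coe_pow]
    have h4 : (cf ^ n) ((cg ^ n) y₀) = (⇑cf)^[n] ((⇑cg)^[n] y₀) := by
      rw [CircleDeg1Lift.coe_pow, CircleDeg1Lift.coe_pow]
    have h5 := pow_lower cf ((cg ^ n) y₀) n
    have h6 := pow_lower cg y₀ n
    rw [h2] at *
    rw [h4] at h5
    rw [h3] at h5
    linarith [h1, h5, h6]
  · apply tau_le_of_seq (cg * cf) y₀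
    intro n
    have h1 : ((⇑cg) ∘ (⇑cf))^[n] y₀ ≤ (⇑cg)^[n] ((⇑cf)^[n] y₀) :=
      iter_L2 cf.monotone cg.monotone hfS hgS hle n y₀ hy₀
    have h2 : ((cg * cf) ^ n) y₀ = ((⇑cg) ∘ (⇑cf))^[n] y₀ := by
      rw [CircleDeg1Lift.coe_pow, CircleDeg1Lift.coe_mul]
    have h3 : (cf ^ n) y₀ = (⇑cf)^[n] y₀ := by rw [CircleDeg1Lift.coe_pow]
    have h4 : (cg ^ n) ((cf ^ n) y₀) = (⇑cg)^[n] ((⇑cf)^[n] y₀) := by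
      rw [CircleDeg1Lift.coe_pow, CircleDeg1Lift.coe_pow]
    have h5 := pow_upper cg ((cf ^ n) y₀) n
    have h6 := pow_upper cf y₀ n
    rw [h2]
    rw [h4, h3] at h5
    linarith [h1, h5, h6]

end
end CircleProd
end part7
section part8
namespace CircleProd
noncomputable section

open Filter Topology Set CircleDeg1Lift

local notation "τ" => CircleDeg1Lift.translationNumber

lemma opdesc {f : UnitAddCircle ≃ₜ UnitAddCircle} {F : ℝ → ℝ} (hA : IsOPLift f F) (x : ℝ) :
    f (π x) = π (F x) := hA.2.2.2 x

/-- **Core theorem**: if a f.g. perfect group acts on the circle with orientation-preserving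
`C¹` lifts, preserving a nonempty set `Λ`, in such a way that any element with a fixed point
fixes `Λ` pointwise, then the action is trivial. -/
theorem core_trivial {Γ : Type*} [Group Γ] (hfg : Group.FG Γ)
    (hab : Subsingleton (Abelianization Γ))
    (ρ' : Γ →* (UnitAddCircle ≃ₜ UnitAddCircle)) (L : ∀ γ, ∃ F, IsOPC1Lift (ρ' γ) F)
    (Λ : Set UnitAddCircle) (hne : Λ.Nonempty) (hinv : ∀ γ, ∀ q ∈ Λ, ρ' γ q ∈ Λ)
    (hdag : ∀ γ, (∃ q, ρ' γ q = q) → ∀ q ∈ Λ, ρ' γ q = q) :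
    ∀ γ, ρ' γ = Homeomorph.refl UnitAddCircle := by
  classical
  choose F hF using L
  have hFop : ∀ γ, IsOPLift (ρ' γ) (F γ) := fun γ => isOPC1Lift_isOPLift (hF γ)
  set Lt : Set ℝ := π ⁻¹' Λ with hLt
  obtain ⟨q₀, hq₀⟩ := hne
  obtain ⟨st, hst⟩ := pi_surjective q₀
  have hstLt : st ∈ Lt := by rw [hLt, Set.mem_preimage, hst]; exact hq₀
  -- any OP lift of any group element maps Lt into Lt
  have hmaps : ∀ (α : Γ) (A : ℝ → ℝ), IsOPLift (ρ' α) A → Set.MapsTo A Lt Lt := by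
    intro α A hA y hy
    rw [hLt, Set.mem_preimage] at hy ⊢
    rw [← opdesc hA y]
    exact hinv α (π y) hy
  -- trichotomy
  have tri : ∀ (α : Γ) (A : ℝ → ℝ), IsOPLift (ρ' α) A →
      (∀ y ∈ Lt, A y ≤ y) ∨ (∀ y ∈ Lt, y ≤ A y) := by
    intro α A hA
    by_cases hfix : ∃ q, ρ' α q = q
    · have hfixall := hdag α hfix
      obtain ⟨q, hq⟩ := hfix
      obtain ⟨z, hz⟩ := pi_surjective q
      obtain ⟨m, hm⟩ : ∃ m : ℤ, A z = z + m := by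
        apply pi_eq_iff.1
        rw [← opdesc hA z, hz, hq]
      have key : ∀ y ∈ Lt, A y = y + m := by
        intro y hy
        set A' : ℝ → ℝ := fun x => A x - m with hA'
        have hmono' : StrictMono A' := fun a b hab' => by
          simp only [hA']; have := hA.2.1 hab'; linarith
        have hper' : ∀ x, A' (x + 1) = A' x + 1 := by
          intro x; simp only [hA']; rw [hA.2.2.1]; ring
        have hz' : A' z = z := by simp only [hA']; rw [hm]; ring
        obtain ⟨k, hk⟩ : ∃ k : ℤ, A y = y + k := by
          apply pi_eq_iff.1
          have h1 := opdesc hA y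
          rw [hfixall (π y) hy] at h1
          exact h1
        have hy' : ∃ m' : ℤ, A' y = y + m' := by
          refine ⟨k - m, ?_⟩
          simp only [hA']; rw [hk]; push_cast; ring
        have := window_lemma hmono' hper' hz' hy'
        simp only [hA'] at this
        linarith
      rcases le_or_gt (m : ℝ) 0 with hm0 | hm0
      · left; intro y hy; rw [key y hy]; linarith
      · right; intro y hy; rw [key y hy]; linarith
    · push_neg at hfix
      have hnz : ∀ x : ℝ, A x ≠ x := by
        intro x hx
        apply hfix (π x)
        rw [opdesc hA x, hx]
      have hsign : (∀ x, A x < x) ∨ (∀ x, x < A x) := by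
        by_cases hc : ∀ x, A x < x
        · left; exact hc
        · right
          push_neg at hc
          obtain ⟨x₁, hx₁⟩ := hc
          intro x
          rcases lt_trichotomy (A x) x with h | h | h
          · exfalso
            have hcont : Continuous (fun w => A w - w) := hA.1.sub continuous_id
            have hx₁' : 0 ≤ A x₁ - x₁ := by linarith
            have hx' : A x - x ≤ 0 := by linarith
            have hmem : (0:ℝ) ∈ Set.Icc (A x - x) (A x₁ - x₁) := ⟨hx', hx₁'⟩
            obtain ⟨w, hw⟩ := intermediate_value_univ x x₁ hcont hmem
            have hw' : A w - w = 0 := hw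
            exact hnz w (by linarith)
          · exact absurd h (hnz x)
          · exact h
      rcases hsign with h | h
      · left; intro y _; exact le_of_lt (h y)
      · right; intro y _; exact le_of_lt (h y)
  -- comparison of composite lifts on Lt
  have cmp : ∀ γ δ : Γ, (∀ z ∈ Lt, F γ (F δ z) ≤ F δ (F γ z)) ∨
      (∀ z ∈ Lt, F δ (F γ z) ≤ F γ (F δ z)) := by
    intro γ δ
    have hA : IsOPLift (ρ' (γ * δ)) (F γ ∘ F δ) := by
      rw [map_mul]; exact isOPLift_comp (hFop γ) (hFop δ)
    have hB : IsOPLift (ρ' (δ * γ)) (F δ ∘ F γ) := by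
      rw [map_mul]; exact isOPLift_comp (hFop δ) (hFop γ)
    obtain ⟨Binv, hBinv, hBl, hBr⟩ := isOPLift_symm hB
    have hBinv' : IsOPLift (ρ' ((δ * γ)⁻¹)) Binv := by
      rw [map_inv]; exact hBinv
    have hC : IsOPLift (ρ' ((γ * δ) * (δ * γ)⁻¹)) ((F γ ∘ F δ) ∘ Binv) := by
      rw [map_mul]; exact isOPLift_comp hA hBinv'
    have hBmaps : Set.MapsTo (F δ ∘ F γ) Lt Lt := hmaps _ _ hB
    rcases tri _ _ hC with hle | hge
    · left
      intro z hz
      have h2 := hle ((F δ ∘ F γ) z) (hBmaps hz)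
      have h3 : (F γ ∘ F δ) (Binv ((F δ ∘ F γ) z)) ≤ (F δ ∘ F γ) z := h2
      rw [hBl z] at h3
      exact h3
    · right
      intro z hz
      have h2 := hge ((F δ ∘ F γ) z) (hBmaps hz)
      have h3 : (F δ ∘ F γ) z ≤ (F γ ∘ F δ) (Binv ((F δ ∘ F γ) z)) := h2
      rw [hBl z] at h3
      exact h3
  -- package as CircleDeg1Lift
  set cd : Γ → CircleDeg1Lift :=
    fun γ => mkCD (F γ) (hFop γ).2.1.monotone (hFop γ).2.2.1 with hcd
  have hcdcoe : ∀ γ (x : ℝ), cd γ x = F γ x := fun γ x => rfl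
  have hcdcont : ∀ γ, Continuous (cd γ) := fun γ => (hFop γ).1
  -- additivity of the translation number
  have sand : ∀ γ δ : Γ, τ (cd γ * cd δ) = τ (cd γ) + τ (cd δ) := by
    intro γ δ
    -- τ (cd γ * cd δ) = τ (cd δ * cd γ) by conjugation
    have hbij : Function.Bijective (cd γ) :=
      ⟨(hFop γ).2.1.injective, op_lift_surj (hFop γ).1 (hFop γ).2.2.1⟩
    have hU : IsUnit (cd γ) := isUnit_iff_bijective.2 hbij
    have hτconj : τ (cd δ * cd γ) = τ (cd γ * cd δ) := by
      have h1 := translationNumber_conj_eq' hU.unit (cd γ * cd δ)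
      have h2 : (↑hU.unit⁻¹ : CircleDeg1Lift) * (cd γ * cd δ) * ↑hU.unit = cd δ * cd γ := by
        have h3 : (↑hU.unit⁻¹ : CircleDeg1Lift) * (cd γ * cd δ) * ↑hU.unit
            = ↑hU.unit⁻¹ * cd γ * (cd δ * ↑hU.unit) := by
          rw [mul_assoc, mul_assoc, mul_assoc]
        rw [h3]
        have h4 : (↑hU.unit⁻¹ : CircleDeg1Lift) * cd γ = 1 := by
          have h5 := Units.inv_mul hU.unit
          rwa [hU.unit_spec] at h5
        rw [h4, one_mul, hU.unit_spec]
      rw [h2] at h1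
      exact h1
    have hγmaps : Set.MapsTo (⇑(cd γ)) Lt Lt := hmaps γ (F γ) (hFop γ)
    have hδmaps : Set.MapsTo (⇑(cd δ)) Lt Lt := hmaps δ (F δ) (hFop δ)
    rcases cmp γ δ with hle | hge
    · have h1 := sand_aux (cd γ) (cd δ) Lt st hstLt hγmaps hδmaps hle
      have h2 : τ (cd δ * cd γ) ≤ τ (cd δ) + τ (cd γ) := h1.2
      have h3 : τ (cd γ) + τ (cd δ) ≤ τ (cd γ * cd δ) := h1.1
      rw [hτconj] at h2
      linarith
    · have h1 := sand_aux (cd δ) (cd γ) Lt st hstLt hδmaps hγmaps hge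
      have h2 : τ (cd γ * cd δ) ≤ τ (cd γ) + τ (cd δ) := by
        have := h1.2
        linarith [h1.2]
      have h3 : τ (cd δ) + τ (cd γ) ≤ τ (cd δ * cd γ) := h1.1
      rw [hτconj] at h3
      linarith
  -- integer discrepancy between cd (γ δ) and cd γ * cd δ
  have hdisc : ∀ γ δ : Γ, ∃ n : ℤ, τ (cd (γ * δ)) = τ (cd γ) + τ (cd δ) + n := by
    intro γ δ
    obtain ⟨n, hn⟩ := lifts_diff (f := ρ' (γ * δ)) ((hFop (γ * δ)).1)
      (((hFop γ).1).comp ((hFop δ).1)) (fun x => (hFop (γ * δ)).2.2.2 x)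
      (fun x => by
        show ρ' (γ * δ) (π x) = π ((F γ ∘ F δ) x)
        rw [map_mul, mul_apply', opdesc (hFop δ) x, opdesc (hFop γ) (F δ x)]
        rfl)
    -- F γ (F δ x) = F (γ δ) x + n
    have hcdmul : cd γ * cd δ = (translate (Multiplicative.ofAdd (n:ℝ)) : CircleDeg1Liftˣ)
        * cd (γ * δ) := by
      apply CircleDeg1Lift.ext
      intro x
      have h1 : (cd γ * cd δ) x = F γ (F δ x) := rfl
      have h2 : ((translate (Multiplicative.ofAdd (n:ℝ)) : CircleDeg1Liftˣ)
          * cd (γ * δ) : CircleDeg1Lift) x = (n : ℝ) + F (γ * δ) x := by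
        rw [CircleDeg1Lift.mul_apply]
        exact translate_apply (n : ℝ) _
      have hn' : F γ (F δ x) = F (γ * δ) x + n := hn x
      rw [h1, h2, hn']
      ring
    have hcomm : Commute ((translate (Multiplicative.ofAdd (n:ℝ)) : CircleDeg1Liftˣ) :
        CircleDeg1Lift) (cd (γ * δ)) := by
      apply CircleDeg1Lift.ext
      intro x
      show ((translate (Multiplicative.ofAdd (n:ℝ)) : CircleDeg1Liftˣ) : CircleDeg1Lift)
          ((cd (γ * δ)) x) = (cd (γ * δ))
          (((translate (Multiplicative.ofAdd (n:ℝ)) : CircleDeg1Liftˣ) : CircleDeg1Lift) x)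
      rw [CircleDeg1Lift.translate_apply, CircleDeg1Lift.translate_apply]
      show (n:ℝ) + F (γ * δ) x = F (γ * δ) ((n:ℝ) + x)
      rw [add_comm (n:ℝ) x, per_add_int (hFop (γ * δ)).2.2.1 x n]
      ring
    have h5 : τ (cd γ * cd δ) = (n : ℝ) + τ (cd (γ * δ)) := by
      rw [hcdmul, translationNumber_mul_of_commute hcomm, translationNumber_translate]
    refine ⟨-n, ?_⟩
    have h7 := sand γ δ
    push_cast
    linarith [h5, h7]
  -- τ (cd 1) is an integer
  have hone : ∃ n : ℤ, τ (cd 1) = n := by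
    obtain ⟨n, hn⟩ := lifts_diff (f := ρ' 1) continuous_id ((hFop 1).1)
      (fun x => by rw [map_one]; rfl) (fun x => (hFop 1).2.2.2 x)
    have h2 := hn 0
    simp only [id_eq] at h2
    have h1 : cd 1 0 = (0:ℝ) + n := by
      have h0 : cd 1 0 = F 1 0 := rfl
      rw [h0, h2]
    exact ⟨n, (cd 1).translationNumber_of_eq_add_int h1⟩
  -- the rotation-number homomorphism
  have hτint : ∀ γ, ∃ n : ℤ, τ (cd γ) = n := by
    set ψ : Γ →* Multiplicative UnitAddCircle :=
      { toFun := fun γ => Multiplicative.ofAdd (π (τ (cd γ)))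
        map_one' := by
          obtain ⟨n, hn⟩ := hone
          rw [hn, pi_int]
          rfl
        map_mul' := by
          intro γ δ
          obtain ⟨n, hn⟩ := hdisc γ δ
          rw [hn, pi_add_int, pi_add]
          rfl }
    intro γ
    have h1 := perfect_hom_trivial hab ψ γ
    have h2 : Multiplicative.toAdd (ψ γ) = Multiplicative.toAdd 1 := by rw [h1]
    have h3 : π (τ (cd γ)) = 0 := by simpa [ψ] using h2
    have h4 : π (τ (cd γ)) = π 0 := by rw [h3]; norm_num
    obtain ⟨m, hm⟩ := pi_eq_iff.1 h4.symm
    exact ⟨m, by linarith⟩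
  -- every element has a fixed point, hence fixes Λ pointwise
  have hfixΛ : ∀ γ, ∀ q ∈ Λ, ρ' γ q = q := by
    intro γ
    apply hdag γ
    obtain ⟨n, hn⟩ := hτint γ
    obtain ⟨x, hx⟩ := ((cd γ).translationNumber_eq_int_iff (hcdcont γ)).1 hn
    refine ⟨π x, ?_⟩
    rw [opdesc (hFop γ) x]
    have h6 : F γ x = x + n := hx
    rw [h6, pi_add_int]
  -- conclude via the common fixed point
  exact trivial_of_common_fixed hfg hab ρ' (fun γ => ⟨F γ, hF γ⟩) q₀
    (fun γ => hfixΛ γ q₀ hq₀)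

end
end CircleProd
end part8
section part9
namespace CircleProd
noncomputable section

open Set

/-- A strictly increasing self-map of a finite set is the identity (via iteration). -/
lemma strictmono_finite_fixed {A : ℝ → ℝ} (hmono : StrictMono A) {W : Set ℝ}
    (hfin : W.Finite) (hWmap : Set.MapsTo A W W) {y : ℝ} (hy : y ∈ W) : A y = y := by
  rcases lt_trichotomy (A y) y with h | h | h
  · exfalso
    set u : ℕ → ℝ := fun n => A^[n] y with hu
    have humem : ∀ n, u n ∈ W := fun n => (hWmap.iterate n) hy
    have hdec : ∀ n, u (n + 1) < u n := by
      intro n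
      induction n with
      | zero => simpa [hu] using h
      | succ n ih =>
          have : A (u (n+1)) < A (u n) := hmono ih
          simpa [hu, Function.iterate_succ_apply' A] using this
    have hanti : StrictAnti u := strictAnti_nat_of_succ_lt hdec
    exact absurd (Set.infinite_of_injective_forall_mem hanti.injective humem)
      hfin.not_infinite
  · exact h
  · exfalso
    set u : ℕ → ℝ := fun n => A^[n] y with hu
    have humem : ∀ n, u n ∈ W := fun n => (hWmap.iterate n) hy
    have hinc : ∀ n, u n < u (n + 1) := by
      intro n
      induction n with
      | zero => simpa [hu] using h
      | succ n ih =>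
          have : A (u n) < A (u (n+1)) := hmono ih
          simpa [hu, Function.iterate_succ_apply' A] using this
    have hmono' : StrictMono u := strictMono_nat_of_lt_succ hinc
    exact absurd (Set.infinite_of_injective_forall_mem hmono'.injective humem)
      hfin.not_infinite

/-- π is injective on `[z, z+1)`. -/
lemma pi_injOn (z : ℝ) : Set.InjOn π (Set.Ico z (z + 1)) := by
  intro y hy y' hy' h
  obtain ⟨k, hk⟩ := pi_eq_iff.1 h
  have h1 : (k:ℝ) < 1 := by
    have := hy.1; have := hy'.2; linarith
  have h2 : (-1:ℝ) < k := by
    have := hy.2; have := hy'.1; linarith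
  have h3 : k < 1 := by exact_mod_cast h1
  have h4 : -1 < k := by exact_mod_cast h2
  have h5 : k = 0 := by omega
  rw [hk, h5]; push_cast; ring

/-- An element of a circle action with a fixed point fixes every finite invariant set
pointwise. -/
lemma dagger_of_finite {Γ : Type*} [Group Γ] (ρ' : Γ →* (UnitAddCircle ≃ₜ UnitAddCircle))
    (O : Set UnitAddCircle) (hfin : O.Finite)
    (hOinv : ∀ γ, ∀ q ∈ O, ρ' γ q ∈ O) :
    ∀ (γ : Γ) (A : ℝ → ℝ), IsOPLift (ρ' γ) A → (∃ q, ρ' γ q = q) →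
      ∀ q ∈ O, ρ' γ q = q := by
  intro γ A hA hfix q hq
  obtain ⟨q₁, hq₁⟩ := hfix
  obtain ⟨z, hz⟩ := pi_surjective q₁
  obtain ⟨m, hm⟩ : ∃ m : ℤ, A z = z + m := by
    apply pi_eq_iff.1
    rw [← opdesc hA z, hz, hq₁]
  set A' : ℝ → ℝ := fun x => A x - m with hA'
  have hmono' : StrictMono A' := fun a b hab => by
    simp only [hA']; have := hA.2.1 hab; linarith
  have hz' : A' z = z := by simp only [hA']; rw [hm]; ring
  have hπA' : ∀ y : ℝ, π (A' y) = ρ' γ (π y) := by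
    intro y
    simp only [hA']
    rw [show A y - (m:ℝ) = A y + ((-m : ℤ) : ℝ) by push_cast; ring, pi_add_int]
    exact (opdesc hA y).symm
  set Ot : Set ℝ := π ⁻¹' O with hOt
  have hA'O : Set.MapsTo A' Ot Ot := by
    intro y hy
    rw [hOt, Set.mem_preimage] at hy ⊢
    rw [hπA' y]
    exact hOinv γ (π y) hy
  set W : Set ℝ := Ot ∩ Set.Ico z (z + 1) with hW
  have hWfin : W.Finite := by
    have hsub : W ⊆ ⋃ p ∈ O, {y ∈ Set.Ico z (z + 1) | π y = p} := by
      intro y hy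
      rw [Set.mem_iUnion₂]
      exact ⟨π y, hy.1, hy.2, rfl⟩
    refine Set.Finite.subset (Set.Finite.biUnion hfin fun p _ => ?_) hsub
    apply Set.Subsingleton.finite
    intro y hy y' hy'
    exact pi_injOn z hy.1 hy'.1 (by rw [hy.2, hy'.2])
  have hWmap : Set.MapsTo A' W W := by
    intro y hy
    refine ⟨hA'O hy.1, ?_, ?_⟩
    · have h1 : A' z ≤ A' y := hmono'.monotone hy.2.1
      rw [hz'] at h1; exact h1
    · have h2 : A' y < A' (z + 1) := hmono' hy.2.2
      have h3 : A' (z + 1) = A' z + 1 := by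
        simp only [hA']; rw [hA.2.2.1]; ring
      rw [h3, hz'] at h2; exact h2
  -- A' fixes every point of Ot
  have hfixOt : ∀ y ∈ Ot, A' y = y := by
    intro y hy
    obtain ⟨k, hk⟩ : ∃ k : ℤ, y - k ∈ Set.Ico z (z + 1) := by
      refine ⟨⌊y - z⌋, ?_, ?_⟩
      · have := Int.floor_le (y - z); linarith
      · have := Int.lt_floor_add_one (y - z); linarith
    have hyk : y - k ∈ Ot := by
      rw [hOt, Set.mem_preimage]
      rw [show y - (k:ℝ) = y + ((-k : ℤ) : ℝ) by push_cast; ring, pi_add_int]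
      exact hy
    have h5 : A' (y - k) = y - k :=
      strictmono_finite_fixed hmono' hWfin hWmap ⟨hyk, hk⟩
    have hper' : ∀ x, A' (x + 1) = A' x + 1 := by
      intro x; simp only [hA']; rw [hA.2.2.1]; ring
    have h6 : A' ((y - k) + k) = A' (y - k) + k := per_add_int hper' (y - k) k
    rw [show y - (k:ℝ) + k = y by ring] at h6
    rw [h6, h5]
    ring
  obtain ⟨y, hy⟩ := pi_surjective q
  have hyOt : y ∈ Ot := by rw [hOt, Set.mem_preimage, hy]; exact hq
  rw [← hy, ← hπA' y, hfixOt y hyOt]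

end
end CircleProd
end part9
section part10
namespace CircleProd
noncomputable section

open Filter Topology Set

lemma pi_zero : π (0 : ℝ) = 0 := by
  have := pi_int 0
  simpa using this

/-- If an action (with orientation-preserving lifts) has no finite nonempty invariant set,
then there is a nonempty invariant set contained in every nonempty closed invariant set. -/
theorem exists_minimal_set {Γ : Type*} [Group Γ]
    (ρ' : Γ →* (UnitAddCircle ≃ₜ UnitAddCircle))
    (L : ∀ γ, ∃ F, IsOPLift (ρ' γ) F)
    (hnofin : ¬ ∃ O : Set UnitAddCircle, O.Finite ∧ O.Nonempty ∧
      ∀ γ, ∀ q ∈ O, ρ' γ q ∈ O) :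
    ∃ Λ : Set UnitAddCircle, Λ.Nonempty ∧ IsClosed Λ ∧ (∀ γ, ∀ q ∈ Λ, ρ' γ q ∈ Λ) ∧
      ∀ Y : Set UnitAddCircle, IsClosed Y → Y.Nonempty →
        (∀ γ, ∀ q ∈ Y, ρ' γ q ∈ Y) → Λ ⊆ Y := by
  classical
  haveI : Fact ((0:ℝ) < 1) := ⟨zero_lt_one⟩
  choose F hF using L
  have hGinv : ∀ (γ : Γ) (q : UnitAddCircle), ρ' γ⁻¹ (ρ' γ q) = q := by
    intro γ q
    have h1 : ρ' γ⁻¹ (ρ' γ q) = (ρ' γ⁻¹ * ρ' γ) q := rfl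
    rw [h1, ← map_mul, inv_mul_cancel, map_one]
    rfl
  -- Zorn's lemma
  set C : Set (Set UnitAddCircle) :=
    {Y | IsClosed Y ∧ Y.Nonempty ∧ ∀ γ, ∀ q ∈ Y, ρ' γ q ∈ Y} with hC
  have huniv : Set.univ ∈ C := ⟨isClosed_univ, ⟨0, trivial⟩, fun _ _ _ => trivial⟩
  obtain ⟨Λ, -, hΛmin⟩ := zorn_superset_nonempty C (by
    intro c hc hchain hcne
    refine ⟨⋂₀ c, ⟨?_, ?_, ?_⟩, fun s hs => Set.sInter_subset_of_mem hs⟩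
    · exact isClosed_sInter fun Y hY => (hc hY).1
    · haveI : Nonempty c := hcne.to_subtype
      apply IsCompact.nonempty_sInter_of_directed_nonempty_isCompact_isClosed
      · intro x hx y hy
        rcases hchain.total hx hy with h | h
        · exact ⟨x, hx, le_refl _, h⟩
        · exact ⟨y, hy, h, le_refl _⟩
      · exact fun U hU => (hc hU).2.1
      · exact fun U hU => ((hc hU).1).isCompact
      · exact fun U hU => (hc hU).1
    · intro γ q hq
      rw [Set.mem_sInter] at hq ⊢
      exact fun Y hY => (hc hY).2.2 γ q (hq Y hY)) Set.univ huniv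
  have hΛC : Λ ∈ C := hΛmin.prop
  obtain ⟨hΛcl, hΛne, hΛinv⟩ := hΛC
  have hmin : ∀ Y ∈ C, Y ⊆ Λ → Λ ⊆ Y := fun Y hY hsub => hΛmin.2 hY hsub
  -- orbits and their closures
  set orb : UnitAddCircle → Set UnitAddCircle := fun x => {p | ∃ γ, ρ' γ x = p} with horb
  set Cl : UnitAddCircle → Set UnitAddCircle := fun x => closure (orb x) with hCl
  have hxorb : ∀ x, x ∈ orb x := fun x => ⟨1, by rw [map_one]; rfl⟩
  have horbinv : ∀ x γ, ∀ p ∈ orb x, ρ' γ p ∈ orb x := by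
    rintro x γ p ⟨δ, rfl⟩
    refine ⟨γ * δ, ?_⟩
    rw [map_mul]
    rfl
  have hClC : ∀ x, Cl x ∈ C := by
    intro x
    refine ⟨isClosed_closure, ⟨x, subset_closure (hxorb x)⟩, ?_⟩
    intro γ q hq
    exact map_mem_closure (ρ' γ).continuous hq (fun p hp => horbinv x γ p hp)
  have horb1 : ∀ x ∈ Λ, Λ ⊆ Cl x := by
    intro x hx
    apply hmin _ (hClC x)
    apply closure_minimal _ hΛcl
    rintro p ⟨γ, rfl⟩
    exact hΛinv γ x hx
  have hkey : ∀ x, (Cl x ∩ Λ).Nonempty → Λ ⊆ Cl x := by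
    rintro x ⟨z, hzC, hzΛ⟩
    refine subset_trans (horb1 z hzΛ) ?_
    apply closure_minimal _ isClosed_closure
    rintro p ⟨γ, rfl⟩
    exact (hClC x).2.2 γ z hzC
  -- main claim: Λ is contained in every orbit closure
  have horb2 : ∀ x, Λ ⊆ Cl x := by
    intro x
    by_cases hx : x ∈ Λ
    · exact horb1 x hx
    · apply hkey
      -- the hard case : gap argument
      obtain ⟨xt, hxt⟩ := pi_surjective x
      set Lt : Set ℝ := π ⁻¹' Λ with hLt
      have hLtcl : IsClosed Lt := hΛcl.preimage pi_continuous
      have hxtLt : xt ∉ Lt := by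
        rw [hLt, Set.mem_preimage, hxt]; exact hx
      obtain ⟨q₀, hq₀⟩ := hΛne
      obtain ⟨st, hst⟩ := pi_surjective q₀
      have hstLt : st ∈ Lt := by rw [hLt, Set.mem_preimage, hst]; exact hq₀
      have hLper : ∀ y ∈ Lt, ∀ k : ℤ, y + k ∈ Lt := by
        intro y hy k
        rw [hLt, Set.mem_preimage, pi_add_int]
        exact hy
      have hLiff : ∀ (γ : Γ) (y : ℝ), F γ y ∈ Lt ↔ y ∈ Lt := by
        intro γ y
        rw [hLt, Set.mem_preimage, Set.mem_preimage, ← opdesc (hF γ) y]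
        constructor
        · intro h
          have := hΛinv γ⁻¹ _ h
          rwa [hGinv γ (π y)] at this
        · exact hΛinv γ (π y)
      -- the gap around xt
      have hane : (Lt ∩ Set.Iic xt).Nonempty := by
        refine ⟨st + (⌊xt - st⌋ : ℤ), hLper st hstLt _, ?_⟩
        have := Int.floor_le (xt - st)
        simp only [Set.mem_Iic]
        linarith
      have habdd : BddAbove (Lt ∩ Set.Iic xt) := ⟨xt, fun y hy => hy.2⟩
      set a : ℝ := sSup (Lt ∩ Set.Iic xt) with ha
      have hamem : a ∈ Lt ∩ Set.Iic xt :=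
        (hLtcl.inter isClosed_Iic).csSup_mem hane habdd
      have haxt : a < xt := lt_of_le_of_ne hamem.2 (fun h => hxtLt (by rw [← h]; exact hamem.1))
      have hbne : (Lt ∩ Set.Ici xt).Nonempty := by
        refine ⟨st + (⌈xt - st⌉ : ℤ), hLper st hstLt _, ?_⟩
        have := Int.le_ceil (xt - st)
        simp only [Set.mem_Ici]
        linarith
      have hbbdd : BddBelow (Lt ∩ Set.Ici xt) := ⟨xt, fun y hy => hy.2⟩
      set b : ℝ := sInf (Lt ∩ Set.Ici xt) with hb
      have hbmem : b ∈ Lt ∩ Set.Ici xt :=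
        (hLtcl.inter isClosed_Ici).csInf_mem hbne hbbdd
      have hxtb : xt < b := lt_of_le_of_ne hbmem.2 (fun h => hxtLt (by rw [h]; exact hbmem.1))
      have hgap : ∀ w, a < w → w < b → w ∉ Lt := by
        intro w h1 h2 hw
        rcases le_total w xt with h3 | h3
        · exact absurd (le_csSup habdd ⟨hw, h3⟩) (not_le.2 h1)
        · exact absurd (csInf_le hbbdd ⟨hw, h3⟩) (not_le.2 h2)
      have hab : a < b := lt_trans haxt hxtb
      have hba : b ≤ a + 1 := by
        by_contra hcon
        push_neg at hcon
        exact hgap (a + 1) (by linarith) (by linarith)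
          (by simpa using hLper a hamem.1 1)
      -- lengths of the image gaps
      have hlen : ∀ γ : Γ, F γ b - F γ a ≤ 1 := by
        intro γ
        have h1 : F γ b ≤ F γ (a + 1) := ((hF γ).2.1).monotone hba
        rw [(hF γ).2.2.1] at h1
        linarith
      have hlenpos : ∀ γ : Γ, 0 < F γ b - F γ a := by
        intro γ
        have := (hF γ).2.1 hab
        linarith
      have hintfree : ∀ (γ : Γ) (w : ℝ), F γ a < w → w < F γ b → w ∉ Lt := by
        intro γ w h1 h2 hw
        obtain ⟨v, hv⟩ := op_lift_surj (hF γ).1 (hF γ).2.2.1 w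
        rw [← hv] at h1 h2 hw
        have hva : a < v := ((hF γ).2.1).lt_iff_lt.1 h1
        have hvb : v < b := ((hF γ).2.1).lt_iff_lt.1 h2
        exact hgap v hva hvb ((hLiff γ v).1 hw)
      by_cases hsmall : ∀ ε : ℝ, 0 < ε → ∃ γ, F γ b - F γ a < ε
      · -- small gaps : accumulate on Λ
        have hsel : ∀ n : ℕ, ∃ γ, F γ b - F γ a < 1/(n+1) :=
          fun n => hsmall _ (by positivity)
        choose γs hγs using hsel
        set pn : ℕ → UnitAddCircle := fun n => π (F (γs n) a) with hpn
        set tn : ℕ → ℝ := fun n => F (γs n) xt - F (γs n) a with htn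
        have hpnΛ : ∀ n, pn n ∈ Λ := by
          intro n
          have : F (γs n) a ∈ Lt := (hLiff (γs n) a).2 hamem.1
          rwa [hLt, Set.mem_preimage] at this
        have htn1 : ∀ n, 0 ≤ tn n := by
          intro n
          have := ((hF (γs n)).2.1).monotone (le_of_lt haxt)
          simp only [htn]; linarith
        have htn2 : ∀ n, tn n ≤ 1/(n+1) := by
          intro n
          have h1 : F (γs n) xt ≤ F (γs n) b := ((hF (γs n)).2.1).monotone (le_of_lt hxtb)
          have h2 := hγs n
          simp only [htn]; linarith
        have htend : Tendsto tn atTop (𝓝 0) := by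
          have h1n : Tendsto (fun n : ℕ => 1/((n:ℝ)+1)) atTop (𝓝 0) := by
            have h1 := (tendsto_const_div_atTop_nhds_zero_nat (1:ℝ)).comp
              (tendsto_add_atTop_nat 1)
            have h2 : ((fun n : ℕ => (1:ℝ) / (n:ℝ)) ∘ fun k : ℕ => k + 1)
                = fun k : ℕ => (1:ℝ) / ((k:ℝ) + 1) := by
              funext k
              show (1:ℝ) / ((k + 1 : ℕ) : ℝ) = 1 / ((k:ℝ) + 1)
              push_cast; ring
            rwa [h2] at h1
          exact tendsto_of_tendsto_of_tendsto_of_le_of_le tendsto_const_nhds h1n htn1 htn2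
        have hon : ∀ n, ρ' (γs n) x = pn n + π (tn n) := by
          intro n
          rw [← hxt, opdesc (hF (γs n)) xt]
          have : F (γs n) xt = F (γs n) a + tn n := by simp only [htn]; ring
          rw [this, pi_add]
        have hπt : Tendsto (fun n => π (tn n)) atTop (𝓝 0) := by
          have h1 : Tendsto π (𝓝 0) (𝓝 (π 0)) := pi_continuous.continuousAt
          rw [pi_zero] at h1
          exact h1.comp htend
        have hΛcomp : IsCompact Λ := hΛcl.isCompact
        obtain ⟨z, hzΛ, φ, hφmono, hφtend⟩ := hΛcomp.tendsto_subseq hpnΛ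
        have hontend : Tendsto (fun k => ρ' (γs (φ k)) x) atTop (𝓝 z) := by
          have h1 : Tendsto (fun k => pn (φ k) + π (tn (φ k))) atTop (𝓝 (z + 0)) :=
            Tendsto.add hφtend (hπt.comp hφmono.tendsto_atTop)
          rw [add_zero] at h1
          exact h1.congr (fun k => (hon (φ k)).symm)
        refine ⟨z, ?_, hzΛ⟩
        apply mem_closure_of_tendsto hontend
        exact Eventually.of_forall fun k => ⟨γs (φ k), rfl⟩
      · -- large gaps : finite invariant set, contradiction
        exfalso
        push_neg at hsmall
        obtain ⟨ε, hεpos, hε⟩ := hsmall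
        set E : Set UnitAddCircle := Set.range (fun γ => π (F γ a)) with hE
        have hEinv : ∀ γ', ∀ q ∈ E, ρ' γ' q ∈ E := by
          rintro γ' q ⟨γ, rfl⟩
          refine ⟨γ' * γ, ?_⟩
          obtain ⟨n, hn⟩ := lifts_diff (f := ρ' (γ' * γ)) ((hF (γ' * γ)).1)
            (((hF γ').1).comp ((hF γ).1)) (fun w => opdesc (hF (γ' * γ)) w)
            (fun w => by
              show ρ' (γ' * γ) (π w) = π ((F γ' ∘ F γ) w)
              rw [map_mul, mul_apply', opdesc (hF γ) w, opdesc (hF γ') (F γ w)]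
              rfl)
          have h1 : F γ' (F γ a) = F (γ' * γ) a + n := hn a
          show π (F (γ' * γ) a) = ρ' γ' (π (F γ a))
          rw [opdesc (hF γ') (F γ a), h1, pi_add_int]
        have hEne : E.Nonempty := ⟨π (F 1 a), ⟨1, rfl⟩⟩
        have hEfin : E.Finite := by
          by_contra hinf
          have hinf' : E.Infinite := hinf
          set e := Set.Infinite.natEmbedding E hinf' with he
          have hsel2 : ∀ i : ℕ, ∃ γ, π (F γ a) = ((e i : E) : UnitAddCircle) :=
            fun i => (e i).2
          choose γe hγe using hsel2
          set c : ℕ → ℝ := fun i => F (γe i) a - ⌊F (γe i) a⌋ with hc'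
          set l : ℕ → ℝ := fun i => F (γe i) b - F (γe i) a with hl
          have hcLt : ∀ i, c i ∈ Lt := by
            intro i
            have h1 : F (γe i) a ∈ Lt := (hLiff (γe i) a).2 hamem.1
            have h2 : c i = F (γe i) a + ((-⌊F (γe i) a⌋ : ℤ) : ℝ) := by
              simp only [hc']; push_cast; ring
            rw [h2]
            exact hLper _ h1 _
          have hc01 : ∀ i, 0 ≤ c i ∧ c i < 1 := by
            intro i
            constructor
            · have := Int.floor_le (F (γe i) a); simp only [hc']; linarith
            · have := Int.lt_floor_add_one (F (γe i) a); simp only [hc']; linarith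
          have hcfree : ∀ i (w : ℝ), c i < w → w < c i + l i → w ∉ Lt := by
            intro i w h1 h2 hw
            have h3 : F (γe i) a < w + ⌊F (γe i) a⌋ := by
              have h5 : c i = F (γe i) a - ⌊F (γe i) a⌋ := rfl
              rw [h5] at h1
              linarith
            have h4 : w + ⌊F (γe i) a⌋ < F (γe i) b := by
              have h5 : c i = F (γe i) a - ⌊F (γe i) a⌋ := rfl
              have h6 : l i = F (γe i) b - F (γe i) a := rfl
              rw [h5, h6] at h2
              linarith
            exact hintfree (γe i) _ h3 h4 (hLper w hw _)
          have hπc : ∀ i, π (c i) = ((e i : E) : UnitAddCircle) := by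
            intro i
            rw [← hγe i]
            have h2 : c i = F (γe i) a + ((-⌊F (γe i) a⌋ : ℤ) : ℝ) := by
              simp only [hc']; push_cast; ring
            rw [h2, pi_add_int]
          have hcinj : ∀ i j, c i = c j → i = j := by
            intro i j hij
            have h1 : ((e i : E) : UnitAddCircle) = ((e j : E) : UnitAddCircle) := by
              rw [← hπc i, ← hπc j, hij]
            exact e.injective (Subtype.ext h1)
          have hsep : ∀ i j, i ≠ j → c i ≤ c j → c i + ε ≤ c j := by
            intro i j hij hle
            have hlt : c i < c j := lt_of_le_of_ne hle (fun h => hij (hcinj i j h))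
            by_contra hcon
            push_neg at hcon
            have h2 : c j < c i + l i := by
              have h3 : ε ≤ l i := hε (γe i)
              linarith
            exact (hcfree i (c j) hlt h2) (hcLt j)
          -- injective map into a finite set
          set ι : ℕ → ℤ := fun i => ⌊c i / ε⌋ with hι
          have hιinj : Function.Injective ι := by
            intro i j hij
            by_contra hne
            have h1 : ε ≤ |c i - c j| := by
              rcases le_total (c i) (c j) with h | h
              · have := hsep i j hne h
                rw [abs_sub_comm, abs_of_nonneg (by linarith)]
                linarith
              · have := hsep j i (Ne.symm hne) h
                rw [abs_of_nonneg (by linarith)]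
                linarith
            have h2 : |c i / ε - c j / ε| < 1 := Int.abs_sub_lt_one_of_floor_eq_floor hij
            rw [div_sub_div_same, abs_div, abs_of_pos hεpos, div_lt_one hεpos] at h2
            linarith
          have hιmem : ∀ i, ι i ∈ Set.Icc (0 : ℤ) ⌈1/ε⌉ := by
            intro i
            constructor
            · exact Int.floor_nonneg.2 (div_nonneg (hc01 i).1 (le_of_lt hεpos))
            · have h1 : c i / ε ≤ 1 / ε := by
                have h2 := (hc01 i).2
                have h3 := hεpos
                rw [div_le_div_iff₀ h3 h3]
                nlinarith
              calc ι i ≤ ⌊1/ε⌋ := Int.floor_mono h1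
              _ ≤ ⌈1/ε⌉ := Int.floor_le_ceil _
          exact absurd (Set.infinite_of_injective_forall_mem hιinj hιmem)
            (Set.finite_Icc _ _).not_infinite
        exact hnofin ⟨E, hEfin, hEne, hEinv⟩
  -- conclusion
  refine ⟨Λ, hΛne, hΛcl, hΛinv, ?_⟩
  intro Y hYcl hYne hYinv
  obtain ⟨y₀, hy₀⟩ := hYne
  refine subset_trans (horb2 y₀) (closure_minimal ?_ hYcl)
  rintro p ⟨γ, rfl⟩
  exact hYinv γ y₀ hy₀

end
end CircleProd
end part10

open CircleProd

/-- **Theorem (main).** If `H` and `G` are finitely generated groups with trivial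
abelianization, then for any `C¹` action of `H × G` on the circle, either the
factor `H × 1` acts trivially or the factor `1 × G` acts trivially. -/
theorem c1_action_of_product_of_perfect_groups_has_trivial_factor
    {H G : Type*} [Group H] [Group G]
    (hHfg : Group.FG H) (hGfg : Group.FG G)
    (hHab : Subsingleton (Abelianization H)) (hGab : Subsingleton (Abelianization G))
    (ρ : (H × G) →* (UnitAddCircle ≃ₜ UnitAddCircle))
    (hρ : IsC1Action ρ) :
    (∀ h : H, ρ (h, 1) = Homeomorph.refl UnitAddCircle) ∨
      (∀ g : G, ρ (1, g) = Homeomorph.refl UnitAddCircle) := by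
  classical
  -- every element acts in an orientation-preserving way
  have hop : ∀ γ : H × G, opOK (ρ γ) := by
    intro γ
    have hsl : ∀ h : H, signHom ρ hρ (h, 1) = 1 := by
      intro h
      have := perfect_hom_trivial hHab ((signHom ρ hρ).comp (MonoidHom.inl H G)) h
      simpa using this
    have hsr : ∀ g : G, signHom ρ hρ (1, g) = 1 := by
      intro g
      have := perfect_hom_trivial hGab ((signHom ρ hρ).comp (MonoidHom.inr H G)) g
      simpa using this
    have h1 : signHom ρ hρ γ = 1 := by
      obtain ⟨h, g⟩ := γ
      have h2 : (h, g) = ((h, 1) : H × G) * (1, g) := by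
        rw [Prod.mk_mul_mk, mul_one, one_mul]
      rw [h2, map_mul, hsl, hsr, mul_one]
    by_contra hno
    have h3 : signHom ρ hρ γ = -1 := by
      show (if opOK (ρ γ) then 1 else -1 : ℤˣ) = -1
      rw [if_neg hno]
    rw [h1] at h3
    exact absurd h3 (by decide)
  have hopc : ∀ γ : H × G, ∃ F, IsOPC1Lift (ρ γ) F := hop
  set σH : H →* (UnitAddCircle ≃ₜ UnitAddCircle) := ρ.comp (MonoidHom.inl H G) with hσH
  set σG : G →* (UnitAddCircle ≃ₜ UnitAddCircle) := ρ.comp (MonoidHom.inr H G) with hσG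
  have LH : ∀ h : H, ∃ F, IsOPC1Lift (σH h) F := fun h => hopc (h, 1)
  have LG : ∀ g : G, ∃ F, IsOPC1Lift (σG g) F := fun g => hopc (1, g)
  have hcomm : ∀ (h : H) (g : G) (q : UnitAddCircle),
      ρ (h, 1) (ρ (1, g) q) = ρ (1, g) (ρ (h, 1) q) := by
    intro h g q
    have h1 : ρ (h, 1) (ρ (1, g) q) = (ρ (h, 1) * ρ (1, g)) q := rfl
    have h2 : ρ (1, g) (ρ (h, 1) q) = (ρ (1, g) * ρ (h, 1)) q := rfl
    rw [h1, h2, ← map_mul, ← map_mul]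
    have h3 : ((h, 1) : H × G) * (1, g) = ((1, g) : H × G) * (h, 1) := by
      rw [Prod.mk_mul_mk, Prod.mk_mul_mk, mul_one, one_mul, mul_one, one_mul]
    rw [h3]
  by_cases hO : ∃ O : Set UnitAddCircle, O.Finite ∧ O.Nonempty ∧
      ∀ h : H, ∀ q ∈ O, σH h q ∈ O
  · -- finite invariant set for the H-factor : H acts trivially
    left
    obtain ⟨O, hOfin, hOne, hOinv⟩ := hO
    have hdagH : ∀ h : H, (∃ q, σH h q = q) → ∀ q ∈ O, σH h q = q := by
      intro h hfix q hq
      obtain ⟨F, hF⟩ := LH h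
      exact dagger_of_finite σH O hOfin hOinv h F (isOPC1Lift_isOPLift hF) hfix q hq
    have := core_trivial hHfg hHab σH LH O hOne hOinv hdagH
    intro h
    exact this h
  · -- no finite invariant set for the H-factor : G acts trivially
    right
    obtain ⟨Λ, hΛne, hΛcl, hΛinvH, hΛdens⟩ := exists_minimal_set σH
      (fun h => (LH h).imp (fun F hF => isOPC1Lift_isOPLift hF)) hO
    have himg : ∀ g' : G, Λ ⊆ (fun p => ρ (1, g') p) '' Λ := by
      intro g'
      apply hΛdens
      · exact (Homeomorph.isClosedMap (ρ (1, g'))) Λ hΛcl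
      · exact hΛne.image _
      · rintro h p ⟨q', hq', rfl⟩
        refine ⟨ρ (h, 1) q', hΛinvH h q' hq', ?_⟩
        show ρ (1, g') (ρ (h, 1) q') = σH h (ρ (1, g') q')
        rw [← hcomm h g' q']
        rfl
    have hinvG : ∀ g : G, ∀ q ∈ Λ, σG g q ∈ Λ := by
      intro g q hq
      obtain ⟨y, hy, hyq⟩ := himg g⁻¹ hq
      have h1 : σG g q = y := by
        show ρ (1, g) q = y
        rw [← hyq]
        have h2 : ρ (1, g) (ρ (1, g⁻¹) y) = (ρ (1, g) * ρ (1, g⁻¹)) y := rfl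
        rw [h2, ← map_mul]
        have h3 : ((1, g) : H × G) * (1, g⁻¹) = 1 := by
          rw [Prod.mk_mul_mk, mul_one, mul_inv_cancel]
          rfl
        rw [h3, map_one]
        rfl
      rw [h1]
      exact hy
    have hdagG : ∀ g : G, (∃ q, σG g q = q) → ∀ q ∈ Λ, σG g q = q := by
      intro g hfix q hq
      have hY : Λ ⊆ {p | ρ (1, g) p = p} := by
        apply hΛdens
        · exact isClosed_eq (ρ (1, g)).continuous continuous_id
        · exact hfix
        · intro h p hp
          show ρ (1, g) (σH h p) = σH h p
          have h1 : σH h p = ρ (h, 1) p := rfl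
          rw [h1, ← hcomm h g p, hp]
      exact hY hq
    have := core_trivial hGfg hGab σG LG Λ hΛne hinvG hdagG
    intro g
    exact this g
end

section
/- (Thurston's Stability Lemma) Let G be a finitely generated group, n a natural number, and ρ : G → Perm(ℝⁿ) a group homomorphism into the group of bijections of ℝⁿ (taken as EuclideanSpace ℝ (Fin n)) such that for every g ∈ G the map ρ(g) : ℝⁿ → ℝⁿ is of class C¹. Suppose there is a point x ∈ ℝⁿ with ρ(g)(x) = x for all g ∈ G, and the Fréchet derivative of ρ(g) at x is the identity linear map for all g ∈ G. Then either there exists a nontrivial group homomorphism from G to the additive group (ℝ,+), or ρ(g)(y) = y for all g ∈ G and all y ∈ ℝⁿ. -/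
open Metric Filter Topology

section Lip

variable {V : Type*} [NormedAddCommGroup V] [NormedSpace ℝ V]

lemma thurston_lip (f : V → V) (hf : ContDiff ℝ 1 f) (p : V)
    (hd : fderiv ℝ f p = ContinuousLinearMap.id ℝ V) {ε : ℝ} (hε : 0 < ε) :
    ∃ δ > 0, ∀ y ∈ ball p δ, ∀ z ∈ ball p δ,
      ‖(f y - y) - (f z - z)‖ ≤ ε * ‖y - z‖ := by
  have hdf : Differentiable ℝ f := hf.differentiable one_ne_zero
  have hdiff : Differentiable ℝ (fun w => f w - w) := hdf.sub differentiable_id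
  have hfd : ∀ w, fderiv ℝ (fun w => f w - w) w
      = fderiv ℝ f w - ContinuousLinearMap.id ℝ V := by
    intro w
    rw [fderiv_fun_sub (hdf w) differentiableAt_fun_id]
    simp
  have hcont : Continuous fun w => ‖fderiv ℝ f w - ContinuousLinearMap.id ℝ V‖ :=
    ((hf.continuous_fderiv one_ne_zero).sub continuous_const).norm
  have htend : Tendsto (fun w => ‖fderiv ℝ f w - ContinuousLinearMap.id ℝ V‖) (𝓝 p) (𝓝 0) := by
    have h0 := hcont.tendsto p
    rwa [hd, sub_self, norm_zero] at h0
  have hev : ∀ᶠ w in 𝓝 p, ‖fderiv ℝ f w - ContinuousLinearMap.id ℝ V‖ < ε :=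
    htend.eventually_lt_const hε
  obtain ⟨δ, hδ, hball⟩ := Metric.eventually_nhds_iff_ball.mp hev
  refine ⟨δ, hδ, fun y hy z hz => ?_⟩
  exact Convex.norm_image_sub_le_of_norm_fderiv_le
    (fun w _ => hdiff w) (fun w hw => by rw [hfd]; exact (hball w hw).le)
    (convex_ball p δ) hz hy

end Lip

lemma thurston_germ {G : Type*} [Group G] {V : Type*} [NormedAddCommGroup V]
    [NormedSpace ℝ V] [FiniteDimensional ℝ V]
    (hfg : Group.FG G) (ρ : G →* Equiv.Perm V) (hC1 : ∀ g : G, ContDiff ℝ 1 (ρ g))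
    (p : V) (hfix : ∀ g : G, ρ g p = p)
    (hder : ∀ g : G, fderiv ℝ (ρ g) p = ContinuousLinearMap.id ℝ V)
    (hno : ¬ ∃ φ : G →* Multiplicative ℝ, φ ≠ 1) :
    ∃ δ > 0, ∀ (g : G), ∀ z ∈ ball p δ, ρ g z = z := by
  obtain ⟨S, hScl, hSfin⟩ := Group.fg_iff.mp hfg
  have hmemtop : ∀ g : G, g ∈ Subgroup.closure S := by
    intro g; rw [hScl]; exact Subgroup.mem_top g
  -- basic facts about the displacement D g y = ρ g y - y
  have hmulD : ∀ (g h : G) (y : V), ρ (g * h) y - y = (ρ g (ρ h y) - ρ h y) + (ρ h y - y) := by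
    intro g h y
    have : ρ (g * h) y = ρ g (ρ h y) := by rw [map_mul]; rfl
    rw [this]; abel
  have hinvD : ∀ (g : G) (y : V), ρ g (ρ g⁻¹ y) = y := by
    intro g y
    have : ρ g⁻¹ = (ρ g)⁻¹ := map_inv ρ g
    rw [this]; exact Equiv.apply_symm_apply _ _
  -- Step 1: all generators act trivially on a small ball
  have key : ∃ δ > 0, ∀ s ∈ S, ∀ z ∈ ball p δ, ρ s z = z := by
    by_contra hcon
    push_neg at hcon
    set T : Finset G := hSfin.toFinset with hT
    set M : V → ℝ := fun y => ∑ s ∈ T, ‖ρ s y - y‖ with hM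
    -- choose a sequence of points moved by some generator, tending to p
    have hy : ∀ m : ℕ, ∃ z : V, z ∈ ball p (1 / ((m : ℝ) + 1)) ∧ 0 < M z := by
      intro m
      obtain ⟨s, hsS, z, hz, hne⟩ := hcon (1 / ((m : ℝ) + 1)) (by positivity)
      have hle : ‖ρ s z - z‖ ≤ M z := by
        simp only [hM]
        exact Finset.single_le_sum (f := fun s => ‖ρ s z - z‖)
          (fun i _ => norm_nonneg _) (hSfin.mem_toFinset.mpr hsS)
      refine ⟨z, hz, lt_of_lt_of_le ?_ hle⟩
      rw [norm_pos_iff, sub_ne_zero]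
      exact hne
    choose y hy1 hy2 using hy
    have htendy : Tendsto y atTop (𝓝 p) := by
      refine tendsto_iff_dist_tendsto_zero.mpr ?_
      refine squeeze_zero (fun m => dist_nonneg) (fun m => (mem_ball.mp (hy1 m)).le) ?_
      exact tendsto_one_div_add_atTop_nhds_zero_nat
    have htendρ : ∀ g : G, Tendsto (fun m => ρ g (y m)) atTop (𝓝 p) := by
      intro g
      have := ((hC1 g).continuous.tendsto p).comp htendy
      rwa [hfix g] at this
    have hball_ev : ∀ (g : G) (δ : ℝ), 0 < δ →
        ∀ᶠ m in atTop, y m ∈ ball p δ ∧ ρ g (y m) ∈ ball p δ := by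
      intro g δ hδ
      have h1 : ∀ᶠ m in atTop, y m ∈ ball p δ :=
        htendy (ball_mem_nhds p hδ)
      have h2 : ∀ᶠ m in atTop, ρ g (y m) ∈ ball p δ :=
        htendρ g (ball_mem_nhds p hδ)
      exact h1.and h2
    -- boundedness of normalized displacements, by induction on the group
    have hB : ∀ g : G, ∃ C : ℝ, ∀ᶠ m in atTop, ‖ρ g (y m) - y m‖ ≤ C * M (y m) := by
      intro g
      refine Subgroup.closure_induction
        (p := fun g _ => ∃ C : ℝ, ∀ᶠ m in atTop, ‖ρ g (y m) - y m‖ ≤ C * M (y m))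
        ?_ ?_ ?_ ?_ (hmemtop g)
      · intro s hs
        refine ⟨1, Eventually.of_forall fun m => ?_⟩
        rw [one_mul]
        simp only [hM]
        exact Finset.single_le_sum (f := fun s => ‖ρ s (y m) - y m‖)
          (fun i _ => norm_nonneg _) (hSfin.mem_toFinset.mpr hs)
      · refine ⟨0, Eventually.of_forall fun m => ?_⟩
        simp
      · rintro g h _ _ ⟨Cg, hCg⟩ ⟨Ch, hCh⟩
        obtain ⟨δ, hδ, hlip⟩ := thurston_lip (ρ g) (hC1 g) p (hder g) one_pos
        refine ⟨Cg + 2 * Ch, ?_⟩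
        filter_upwards [hball_ev h δ hδ, hCg, hCh] with m ⟨hm1, hm2⟩ hg hh
        have hl := hlip _ hm2 _ hm1
        rw [one_mul] at hl
        have e1 := hmulD g h (y m)
        calc ‖ρ (g * h) (y m) - y m‖
            = ‖(ρ g (ρ h (y m)) - ρ h (y m)) + (ρ h (y m) - y m)‖ := by rw [e1]
          _ ≤ ‖ρ g (ρ h (y m)) - ρ h (y m)‖ + ‖ρ h (y m) - y m‖ := norm_add_le _ _
          _ ≤ (‖ρ g (y m) - y m‖ + ‖ρ h (y m) - y m‖) + ‖ρ h (y m) - y m‖ := by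
              have := norm_sub_norm_le (ρ g (ρ h (y m)) - ρ h (y m)) (ρ g (y m) - y m)
              linarith [hl]
          _ ≤ (Cg + 2 * Ch) * M (y m) := by linarith [hg, hh]
      · rintro g _ ⟨C, hC⟩
        obtain ⟨δ, hδ, hlip⟩ := thurston_lip (ρ g) (hC1 g) p (hder g) one_half_pos
        refine ⟨2 * C, ?_⟩
        filter_upwards [hball_ev g⁻¹ δ hδ, hC] with m ⟨hm1, hm2⟩ hg
        have hl := hlip _ hm2 _ hm1
        rw [hinvD g (y m)] at hl
        -- ‖(y m - ρ g⁻¹ (y m)) - (ρ g (y m) - y m)‖ ≤ (1/2) ‖ρ g⁻¹ (y m) - y m‖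
        have h1 : ‖ρ g⁻¹ (y m) - y m‖ - ‖ρ g (y m) - y m‖
            ≤ (1 / 2) * ‖ρ g⁻¹ (y m) - y m‖ := by
          have h2 : ‖y m - ρ g⁻¹ (y m)‖ = ‖ρ g⁻¹ (y m) - y m‖ := norm_sub_rev _ _
          have h3 := norm_sub_norm_le (y m - ρ g⁻¹ (y m)) (ρ g (y m) - y m)
          rw [h2] at h3
          linarith [hl]
        linarith [hg]
    -- normalized displacement sequence
    set φseq : G → ℕ → V := fun g m => (M (y m))⁻¹ • (ρ g (y m) - y m) with hφseq
    have hMnorm : ∀ (m : ℕ) (v : V), ‖(M (y m))⁻¹ • v‖ = (M (y m))⁻¹ * ‖v‖ := by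
      intro m v
      rw [norm_smul, Real.norm_eq_abs, abs_of_pos (inv_pos.mpr (hy2 m))]
    -- the additivity error tends to zero
    have herr : ∀ g h : G,
        Tendsto (fun m => φseq (g * h) m - φseq g m - φseq h m) atTop (𝓝 0) := by
      intro g h
      rw [NormedAddCommGroup.tendsto_nhds_zero]
      intro ε hε
      obtain ⟨Ch, hCh⟩ := hB h
      set C' : ℝ := max Ch 0 with hC'
      have hC'0 : 0 < C' + 1 := by positivity
      set ε' : ℝ := ε / (C' + 1) with hε'
      have hε'0 : 0 < ε' := div_pos hε hC'0
      obtain ⟨δ, hδ, hlip⟩ := thurston_lip (ρ g) (hC1 g) p (hder g) hε'0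
      filter_upwards [hball_ev h δ hδ, hCh] with m ⟨hm1, hm2⟩ hh
      have hl := hlip _ hm2 _ hm1
      have e0 : φseq (g * h) m - φseq g m - φseq h m
          = (M (y m))⁻¹ • ((ρ g (ρ h (y m)) - ρ h (y m)) - (ρ g (y m) - y m)) := by
        simp only [hφseq, ← smul_sub]
        congr 1
        rw [hmulD g h (y m)]
        abel
      rw [e0, hMnorm]
      have hMpos := hy2 m
      have hb1 : (M (y m))⁻¹ * ‖(ρ g (ρ h (y m)) - ρ h (y m)) - (ρ g (y m) - y m)‖
          ≤ (M (y m))⁻¹ * (ε' * ‖ρ h (y m) - y m‖) :=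
        mul_le_mul_of_nonneg_left hl (le_of_lt (inv_pos.mpr hMpos))
      have hb2 : ‖ρ h (y m) - y m‖ ≤ C' * M (y m) :=
        le_trans hh (mul_le_mul_of_nonneg_right (le_max_left _ _) hMpos.le)
      have hb3 : (M (y m))⁻¹ * (ε' * ‖ρ h (y m) - y m‖) ≤ ε' * C' := by
        have h1 : (M (y m))⁻¹ * (ε' * ‖ρ h (y m) - y m‖)
            = ε' * ((M (y m))⁻¹ * ‖ρ h (y m) - y m‖) := by ring
        have h2 : (M (y m))⁻¹ * ‖ρ h (y m) - y m‖ ≤ (M (y m))⁻¹ * (C' * M (y m)) :=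
          mul_le_mul_of_nonneg_left hb2 (inv_pos.mpr hMpos).le
        have h3 : (M (y m))⁻¹ * (C' * M (y m)) = C' := by
          rw [mul_comm C', ← mul_assoc, inv_mul_cancel₀ (ne_of_gt hMpos), one_mul]
        rw [h1]
        exact mul_le_mul_of_nonneg_left (h2.trans_eq h3) hε'0.le
      have hb4 : ε' * C' < ε := by
        have h1 : ε' * C' < ε' * (C' + 1) := mul_lt_mul_of_pos_left (lt_add_one C') hε'0
        have h2 : ε' * (C' + 1) = ε := by
          rw [hε', div_mul_cancel₀]
          exact ne_of_gt hC'0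
        linarith
      linarith [hb1, hb3]
    -- ultrafilter limit
    let U : Ultrafilter ℕ := Ultrafilter.of atTop
    have hUle : (U : Filter ℕ) ≤ atTop := Ultrafilter.of_le _
    have hlim : ∀ g : G, ∃ a : V, Tendsto (φseq g) U (𝓝 a) := by
      intro g
      obtain ⟨C, hC⟩ := hB g
      have hbdd : ∀ᶠ m in (U : Filter ℕ), φseq g m ∈ closedBall (0 : V) C := by
        refine hUle ?_
        filter_upwards [hC] with m hm
        rw [mem_closedBall_zero_iff]
        simp only [hφseq]
        rw [hMnorm]
        have h2 : (M (y m))⁻¹ * ‖ρ g (y m) - y m‖ ≤ (M (y m))⁻¹ * (C * M (y m)) :=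
          mul_le_mul_of_nonneg_left hm (inv_pos.mpr (hy2 m)).le
        have h3 : (M (y m))⁻¹ * (C * M (y m)) = C := by
          rw [mul_comm C, ← mul_assoc, inv_mul_cancel₀ (ne_of_gt (hy2 m)), one_mul]
        exact h2.trans_eq h3
      have hcomp : IsCompact (closedBall (0 : V) C) := isCompact_closedBall _ _
      obtain ⟨a, _, ha⟩ := hcomp.ultrafilter_le_nhds (U.map (φseq g)) (by
        rwa [Ultrafilter.coe_map, le_principal_iff, mem_map])
      exact ⟨a, by rwa [Ultrafilter.coe_map] at ha⟩
    choose φ hφ using hlim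
    have hadd : ∀ g h : G, φ (g * h) = φ g + φ h := by
      intro g h
      have h1 : Tendsto (fun m => φseq g m + φseq h m
          + (φseq (g * h) m - φseq g m - φseq h m)) (U : Filter ℕ) (𝓝 (φ g + φ h + 0)) :=
        ((hφ g).add (hφ h)).add ((herr g h).mono_left hUle)
      have h2 : (fun m => φseq g m + φseq h m + (φseq (g * h) m - φseq g m - φseq h m))
          = φseq (g * h) := by funext m; abel
      rw [h2, add_zero] at h1
      exact tendsto_nhds_unique (hφ (g * h)) h1
    have hsum1 : ∑ s ∈ T, ‖φ s‖ = 1 := by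
      have hconst : ∀ m : ℕ, ∑ s ∈ T, ‖φseq s m‖ = 1 := by
        intro m
        have : ∀ s ∈ T, ‖φseq s m‖ = (M (y m))⁻¹ * ‖ρ s (y m) - y m‖ := by
          intro s _
          simp only [hφseq]
          exact hMnorm m _
        rw [Finset.sum_congr rfl this, ← Finset.mul_sum]
        exact inv_mul_cancel₀ (ne_of_gt (hy2 m))
      have htend : Tendsto (fun m => ∑ s ∈ T, ‖φseq s m‖) (U : Filter ℕ)
          (𝓝 (∑ s ∈ T, ‖φ s‖)) :=
        tendsto_finset_sum _ fun s _ => (hφ s).norm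
      have hconst' : Tendsto (fun m => ∑ s ∈ T, ‖φseq s m‖) (U : Filter ℕ) (𝓝 1) := by
        have : (fun m => ∑ s ∈ T, ‖φseq s m‖) = fun _ => (1 : ℝ) := funext hconst
        rw [this]; exact tendsto_const_nhds
      exact tendsto_nhds_unique htend hconst'
    have hex : ∃ s ∈ T, φ s ≠ 0 := by
      by_contra hall
      push_neg at hall
      have : ∑ s ∈ T, ‖φ s‖ = 0 :=
        Finset.sum_eq_zero fun s hs => by rw [hall s hs, norm_zero]
      rw [this] at hsum1
      exact one_ne_zero hsum1.symm
    obtain ⟨s, hsT, hs0⟩ := hex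
    obtain ⟨f, _, hfv⟩ := exists_dual_vector ℝ (φ s) (norm_ne_zero_iff.mpr hs0)
    refine hno ⟨MonoidHom.mk' (fun g => Multiplicative.ofAdd (f (φ g))) ?_, ?_⟩
    · intro a b
      show Multiplicative.ofAdd (f (φ (a * b)))
          = Multiplicative.ofAdd (f (φ a)) * Multiplicative.ofAdd (f (φ b))
      rw [hadd a b, map_add, ofAdd_add]
    · intro hψ
      have h1 : Multiplicative.ofAdd (f (φ s)) = 1 := DFunLike.congr_fun hψ s
      have h2 : f (φ s) = 0 := by
        have := congrArg Multiplicative.toAdd h1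
        simpa using this
      rw [hfv] at h2
      exact hs0 (norm_eq_zero.mp h2)
  -- Step 2: extend from generators to the whole group
  obtain ⟨δ, hδ, hgen⟩ := key
  refine ⟨δ, hδ, fun g => ?_⟩
  refine Subgroup.closure_induction
    (p := fun g _ => ∀ z ∈ ball p δ, ρ g z = z) ?_ ?_ ?_ ?_ (hmemtop g)
  · exact fun s hs => hgen s hs
  · intro z _; simp
  · intro a b _ _ ha hb z hz
    have : ρ (a * b) z = ρ a (ρ b z) := by rw [map_mul]; rfl
    rw [this, hb z hz, ha z hz]
  · intro a _ ha z hz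
    have h1 : ρ a⁻¹ = (ρ a)⁻¹ := map_inv ρ a
    rw [h1]
    exact Equiv.Perm.inv_eq_iff_eq.mpr (ha z hz).symm

/-- **Thurston's Stability Lemma.** Let `G` be a finitely generated group acting
on `ℝⁿ` by `C¹` bijections with a global fixed point `x` at which every
derivative is the identity. Then either `G` admits a nontrivial homomorphism to
`(ℝ,+)`, or `G` acts trivially. -/
theorem thurston_stability {G : Type*} [Group G] (hfg : Group.FG G) (n : ℕ)
    (ρ : G →* Equiv.Perm (EuclideanSpace ℝ (Fin n)))
    (hC1 : ∀ g : G, ContDiff ℝ 1 (ρ g))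
    (x : EuclideanSpace ℝ (Fin n))
    (hfix : ∀ g : G, ρ g x = x)
    (hder : ∀ g : G, fderiv ℝ (ρ g) x = ContinuousLinearMap.id ℝ (EuclideanSpace ℝ (Fin n))) :
    (∃ φ : G →* Multiplicative ℝ, φ ≠ 1) ∨
      (∀ (g : G) (y : EuclideanSpace ℝ (Fin n)), ρ g y = y) := by
  by_cases hno : ∃ φ : G →* Multiplicative ℝ, φ ≠ 1
  · exact Or.inl hno
  right
  set U : Set (EuclideanSpace ℝ (Fin n)) := {v | ∃ δ > 0, ∀ (g : G), ∀ z ∈ ball v δ, ρ g z = z} with hU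
  have hopen : IsOpen U := by
    rw [Metric.isOpen_iff]
    rintro v ⟨δ, hδ, h⟩
    refine ⟨δ / 2, by positivity, fun w hw => ?_⟩
    refine ⟨δ / 2, by positivity, fun g z hz => ?_⟩
    refine h g z ?_
    rw [mem_ball] at *
    calc dist z v ≤ dist z w + dist w v := dist_triangle _ _ _
      _ < δ / 2 + δ / 2 := add_lt_add hz hw
      _ = δ := by ring
  have hUfix : ∀ g : G, ∀ v ∈ U, ρ g v = v := by
    rintro g v ⟨δ, hδ, h⟩
    exact h g v (mem_ball_self hδ)
  have hfixcl : ∀ g : G, ∀ v ∈ closure U, ρ g v = v := by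
    intro g
    have hcl : IsClosed {v : EuclideanSpace ℝ (Fin n) | ρ g v = v} := isClosed_eq (hC1 g).continuous continuous_id
    intro v hv
    exact closure_minimal (fun w hw => hUfix g w hw) hcl hv
  have hdercl : ∀ g : G, ∀ v ∈ closure U,
      fderiv ℝ (ρ g) v = ContinuousLinearMap.id ℝ (EuclideanSpace ℝ (Fin n)) := by
    intro g
    have hcl : IsClosed {v : EuclideanSpace ℝ (Fin n) |
        fderiv ℝ (ρ g) v = ContinuousLinearMap.id ℝ (EuclideanSpace ℝ (Fin n))} :=
      isClosed_eq ((hC1 g).continuous_fderiv one_ne_zero) continuous_const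
    intro v hv
    refine closure_minimal (fun w hw => ?_) hcl hv
    obtain ⟨δ, hδ, h⟩ := hw
    have hev : (fun z => ρ g z) =ᶠ[𝓝 w] fun z => z := by
      filter_upwards [ball_mem_nhds w hδ] with z hz
      exact h g z hz
    show fderiv ℝ (ρ g) w = ContinuousLinearMap.id ℝ (EuclideanSpace ℝ (Fin n))
    rw [hev.fderiv_eq, fderiv_id']
  have hclosed : IsClosed U := by
    refine isClosed_of_closure_subset fun v hv => ?_
    exact thurston_germ hfg ρ hC1 v (fun g => hfixcl g v hv) (fun g => hdercl g v hv) hno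
  have hne : U.Nonempty := ⟨x, thurston_germ hfg ρ hC1 x hfix hder hno⟩
  have huniv : U = Set.univ := IsClopen.eq_univ ⟨hclosed, hopen⟩ hne
  intro g y
  have hy : y ∈ U := huniv ▸ Set.mem_univ y
  exact hUfix g y hy
end

section
/- Let G be a finitely generated group with an orientation-preserving C¹ action ρ on the circle, suppose every group homomorphism from G to the additive group (ℝ,+) is trivial, and suppose the action has a global fixed point, i.e. there is a point p ∈ S¹ with ρ(g)(p) = p for all g ∈ G. Then G acts trivially: ρ(g) is the identity homeomorphism of the circle for every g ∈ G. -/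
open MeasureTheory Filter Topology Set

lemma exists_int_of_coe_eq' {a b : ℝ} (h : (a : UnitAddCircle) = b) : ∃ m : ℤ, a = b + m := by
  rw [QuotientAddGroup.eq_iff_sub_mem] at h
  obtain ⟨m, hm⟩ := h
  exact ⟨m, by simp at hm; linarith⟩

lemma coe_sub_int' (a : ℝ) (m : ℤ) : ((a - m : ℝ) : UnitAddCircle) = (a : UnitAddCircle) := by
  rw [QuotientAddGroup.eq_iff_sub_mem]
  exact ⟨-m, by simp⟩

/-- Two continuous lifts of the same circle map agreeing at one point agree. -/
lemma lift_eq_of_agree' {F G : ℝ → ℝ} (hF : Continuous F) (hG : Continuous G)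
    (h : ∀ x : ℝ, ((F x : ℝ) : UnitAddCircle) = ((G x : ℝ) : UnitAddCircle))
    (x₀ : ℝ) (h0 : F x₀ = G x₀) : F = G := by
  funext z
  by_contra hz
  have hint : ∀ t : ℝ, ∃ m : ℤ, F t - G t = m := by
    intro t
    obtain ⟨m, hm⟩ := exists_int_of_coe_eq' (h t)
    exact ⟨m, by linarith⟩
  obtain ⟨m, hm⟩ := hint z
  have hm0 : m ≠ 0 := by
    rintro rfl
    simp at hm
    exact hz (by linarith)
  set d : ℝ → ℝ := fun t => F t - G t with hd
  have hdc : ContinuousOn d (Set.uIcc x₀ z) := (hF.sub hG).continuousOn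
  have h0' : d x₀ = 0 := by simp [hd, h0]
  have hv : (if (0:ℝ) < m then (1:ℝ)/2 else -(1/2)) ∈ Set.uIcc (d x₀) (d z) := by
    rw [h0', hd]
    simp only
    rw [hm]
    rcases lt_or_ge (0:ℝ) m with hpos | hneg
    · have h1 : (1:ℝ) ≤ m := by exact_mod_cast hpos
      rw [if_pos hpos, Set.mem_uIcc]
      left; constructor <;> linarith
    · have h1 : (m:ℝ) ≤ -1 := by
        have : m ≤ -1 := by
          rcases lt_or_eq_of_le (by exact_mod_cast hneg : (m:ℤ) ≤ 0) with h | h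
          · omega
          · exact absurd h hm0
        exact_mod_cast this
      rw [if_neg (not_lt.mpr hneg), Set.mem_uIcc]
      right; constructor <;> linarith
  obtain ⟨t, _, ht⟩ := intermediate_value_uIcc hdc hv
  obtain ⟨k, hk⟩ := hint t
  have habs : |(k:ℝ)| = 1/2 := by
    rw [← hk]
    change |d t| = 1/2
    rw [ht]
    split_ifs <;> simp [abs_of_nonneg, abs_of_nonpos] <;> norm_num
  rcases eq_or_ne k 0 with rfl | hk0
  · norm_num at habs
  · have : (1:ℝ) ≤ |(k:ℝ)| := by
      have := Int.one_le_abs hk0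
      calc (1:ℝ) ≤ ((|k| : ℤ) : ℝ) := by exact_mod_cast this
        _ = |(k:ℝ)| := by push_cast; ring
    rw [habs] at this; norm_num at this

lemma exists_normalized_lifts {G : Type*} [Group G]
    (ρ : G →* (UnitAddCircle ≃ₜ UnitAddCircle))
    (hρ : ∀ g : G, ∃ F : ℝ → ℝ, IsOPC1Lift (ρ g) F)
    (p : UnitAddCircle) (hp : ∀ g : G, ρ g p = p)
    (x₀ : ℝ) (hx₀ : (x₀ : UnitAddCircle) = p) :
    ∃ L : G → ℝ → ℝ,
      (∀ g, ContDiff ℝ 1 (L g)) ∧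
      (∀ g x, 0 < deriv (L g) x) ∧
      (∀ g x, L g (x + 1) = L g x + 1) ∧
      (∀ g (x : ℝ), ρ g (x : UnitAddCircle) = ((L g x : ℝ) : UnitAddCircle)) ∧
      (∀ g, L g x₀ = x₀) ∧
      (∀ g h x, L (g * h) x = L g (L h x)) ∧
      (∀ x, L 1 x = x) := by
  choose F hF using hρ
  have hc : ∀ g, ∃ m : ℤ, F g x₀ = x₀ + m := by
    intro g
    apply exists_int_of_coe_eq'
    rw [← (hF g).2.2.2 x₀, hx₀, hp]
  choose m hm using hc
  set L : G → ℝ → ℝ := fun g x => F g x - m g with hL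
  have hcont : ∀ g, Continuous (L g) := fun g => ((hF g).1.continuous).sub continuous_const
  have hdesc : ∀ g (x : ℝ), ρ g (x : UnitAddCircle) = ((L g x : ℝ) : UnitAddCircle) := by
    intro g x
    rw [(hF g).2.2.2 x]
    exact (coe_sub_int' (F g x) (m g)).symm
  have hfix : ∀ g, L g x₀ = x₀ := by intro g; simp only [hL]; rw [hm g]; ring
  refine ⟨L, ?_, ?_, ?_, hdesc, hfix, ?_, ?_⟩
  · exact fun g => (hF g).1.sub contDiff_const
  · intro g x
    have h1 : deriv (L g) x = deriv (F g) x := by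
      simp only [hL]; rw [deriv_sub_const]
    rw [h1]; exact (hF g).2.1 x
  · intro g x
    show F g (x + 1) - m g = F g x - m g + 1
    rw [(hF g).2.2.1 x]; ring
  · intro g h x
    have key : L (g * h) = L g ∘ L h := by
      apply lift_eq_of_agree' (hcont _) ((hcont g).comp (hcont h)) ?_ x₀ ?_
      · intro x
        rw [← hdesc (g*h) x, map_mul]
        show ρ g (ρ h ↑x) = _
        rw [hdesc h x, hdesc g (L h x)]
        rfl
      · show L (g*h) x₀ = L g (L h x₀)
        rw [hfix, hfix, hfix]
    exact congrFun key x
  · intro x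
    have key : L 1 = (fun x : ℝ => x) := by
      apply lift_eq_of_agree' (hcont _) continuous_id ?_ x₀ ?_
      · intro x
        rw [← hdesc 1 x, map_one]
        rfl
      · exact hfix 1
    exact congrFun key x

lemma stab_all' {G : Type*} [Group G] (L : G → ℝ → ℝ)
    (hmul : ∀ g h x, L (g * h) x = L g (L h x)) (hone : ∀ x, L 1 x = x)
    {S : Finset G} (hS : Subgroup.closure (S : Set G) = ⊤)
    {x : ℝ} (hx : ∀ s ∈ S, L s x = x) : ∀ g, L g x = x := by
  intro g
  have hg : g ∈ Subgroup.closure (S : Set G) := by rw [hS]; trivial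
  induction hg using Subgroup.closure_induction with
  | mem s hs => exact hx s hs
  | one => exact hone x
  | mul a b _ _ ha hb => rw [hmul a b, hb, ha]
  | inv a _ ha =>
      have : L a⁻¹ (L a x) = x := by rw [← hmul, inv_mul_cancel, hone]
      rwa [ha] at this

lemma deriv_one_at_fixed' {G : Type*} [Group G]
    (hcoh : ∀ φ : G →* Multiplicative ℝ, φ = 1)
    (L : G → ℝ → ℝ) (hcd : ∀ g, ContDiff ℝ 1 (L g)) (hpos : ∀ g x, 0 < deriv (L g) x)
    (hmul : ∀ g h x, L (g * h) x = L g (L h x)) (hone : ∀ x, L 1 x = x)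
    (q : ℝ) (hq : ∀ g, L g q = q) : ∀ g, deriv (L g) q = 1 := by
  have hdiff : ∀ g (x : ℝ), DifferentiableAt ℝ (L g) x :=
    fun g x => ((hcd g).differentiable one_ne_zero).differentiableAt
  have hmul' : ∀ g h : G, deriv (L (g * h)) q = deriv (L g) q * deriv (L h) q := by
    intro g h
    have hc : L (g * h) = L g ∘ L h := funext (hmul g h)
    rw [hc, deriv_comp q (by rw [hq h]; exact hdiff g q) (hdiff h q), hq h]
  set Φ : G →* Multiplicative ℝ :=
    { toFun := fun g => Multiplicative.ofAdd (Real.log (deriv (L g) q))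
      map_one' := by
        have h : L (1 : G) = fun x : ℝ => x := funext hone
        show Multiplicative.ofAdd (Real.log (deriv (L (1:G)) q)) = 1
        rw [h]
        simp
      map_mul' := by
        intro g h
        simp only [hmul' g h, Real.log_mul (ne_of_gt (hpos g q)) (ne_of_gt (hpos h q))]
        rfl } with hΦ
  intro g
  have h1 : Φ g = 1 := by rw [hcoh Φ]; rfl
  have h2 : Real.log (deriv (L g) q) = 0 := by
    have := congrArg Multiplicative.toAdd h1
    simpa [hΦ] using this
  have := Real.exp_log (hpos g q)
  rw [h2, Real.exp_zero] at this
  exact this.symm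

lemma thurston_core {G : Type*} [Group G]
    (hcoh : ∀ φ : G →* Multiplicative ℝ, φ = 1)
    (L : G → ℝ → ℝ) (hcd : ∀ g, ContDiff ℝ 1 (L g)) (hpos : ∀ g x, 0 < deriv (L g) x)
    (hmul : ∀ g h x, L (g * h) x = L g (L h x)) (hone : ∀ x, L 1 x = x)
    (S : Finset G) (hS : Subgroup.closure (S : Set G) = ⊤)
    (q y : ℝ) (hqy : q < y) (hq : ∀ g, L g q = q)
    (hmove : ∀ z ∈ Set.Ioc q y, ∃ s ∈ S, L s z ≠ z) : False := by
  have hder : ∀ g, deriv (L g) q = 1 := deriv_one_at_fixed' hcoh L hcd hpos hmul hone q hq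
  have hdiff : ∀ g (x : ℝ), DifferentiableAt ℝ (L g) x :=
    fun g x => ((hcd g).differentiable one_ne_zero).differentiableAt
  have hcont : ∀ g, Continuous (L g) := fun g => (hcd g).continuous
  have hdercont : ∀ g, Continuous (deriv (L g)) :=
    fun g => (hcd g).continuous_deriv le_rfl
  obtain ⟨s₀, hs₀S, _⟩ := hmove y ⟨hqy, le_refl y⟩
  have hSne : S.Nonempty := ⟨s₀, hs₀S⟩
  -- the sequence approaching q from the right
  set x : ℕ → ℝ := fun n => q + (y - q) * (1 / (n + 1)) with hxdef
  have hfrac_pos : ∀ n : ℕ, (0:ℝ) < 1 / (n + 1) := by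
    intro n; positivity
  have hfrac_le : ∀ n : ℕ, (1:ℝ) / (n + 1) ≤ 1 := by
    intro n
    rw [div_le_one (by positivity)]
    linarith [Nat.cast_nonneg (α := ℝ) n]
  have hxq : ∀ n, q < x n := by
    intro n
    have := mul_pos (sub_pos.mpr hqy) (hfrac_pos n)
    simp only [hxdef]; linarith
  have hxy : ∀ n, x n ≤ y := by
    intro n
    have h1 : (y - q) * (1 / (n + 1)) ≤ (y - q) * 1 :=
      mul_le_mul_of_nonneg_left (hfrac_le n) (by linarith)
    simp only [hxdef]; linarith
  have hxmem : ∀ n, x n ∈ Set.Ioc q y := fun n => ⟨hxq n, hxy n⟩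
  have hxlim : Tendsto x atTop (𝓝 q) := by
    have h1 : Tendsto (fun n : ℕ => (y - q) * (1 / ((n:ℝ) + 1))) atTop (𝓝 ((y - q) * 0)) :=
      tendsto_one_div_add_atTop_nhds_zero_nat.const_mul _
    have h2 := tendsto_const_nhds (α := ℕ) (x := q) (f := atTop) |>.add h1
    simpa [hxdef, one_div] using h2
  -- the displacement scale
  set M : ℕ → ℝ := fun n => S.sup' hSne (fun s => |L s (x n) - x n|) with hMdef
  have hM0 : ∀ n, 0 < M n := by
    intro n
    obtain ⟨s, hs, hne⟩ := hmove (x n) (hxmem n)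
    exact lt_of_lt_of_le (abs_pos.mpr (sub_ne_zero.mpr hne))
      (Finset.le_sup' (fun s => |L s (x n) - x n|) hs)
  have hdisp_lim : ∀ g : G, Tendsto (fun n => |L g (x n) - x n|) atTop (𝓝 0) := by
    intro g
    have h1 : Tendsto (fun n => L g (x n)) atTop (𝓝 q) := by
      have := ((hcont g).tendsto q).comp hxlim
      rwa [hq g] at this
    have h2 := h1.sub hxlim
    rw [sub_self] at h2
    simpa using h2.abs
  have hMlim : Tendsto M atTop (𝓝 0) := by
    apply squeeze_zero (fun n => (hM0 n).le)
      (g := fun n => ∑ s ∈ S, |L s (x n) - x n|)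
    · intro n
      exact Finset.sup'_le _ _ fun s hs =>
        Finset.single_le_sum (f := fun s => |L s (x n) - x n|) (fun i _ => abs_nonneg _) hs
    · have := tendsto_finset_sum S (fun s _ => hdisp_lim s)
      simpa using this
  -- the MVT estimate
  have est : ∀ g : G, ∀ ε > (0:ℝ), ∃ δ > (0:ℝ), ∀ u v : ℝ, |u - q| < δ → |v - q| < δ →
      |(L g u - u) - (L g v - v)| ≤ ε * |u - v| := by
    intro g ε hε
    have hc : ContinuousAt (deriv (L g)) q := (hdercont g).continuousAt
    rw [Metric.continuousAt_iff] at hc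
    obtain ⟨δ, hδpos, hδ⟩ := hc ε hε
    refine ⟨δ, hδpos, fun u v hu hv => ?_⟩
    have hball : ∀ t ∈ Metric.ball q δ, ‖deriv (fun t => L g t - t) t‖ ≤ ε := by
      intro t ht
      have h1 : deriv (fun t => L g t - t) t = deriv (L g) t - 1 := by
        rw [deriv_fun_sub (hdiff g t) differentiableAt_fun_id]
        simp
      rw [h1, Real.norm_eq_abs]
      have := hδ (by rwa [Real.dist_eq] : dist t q < δ)
      rw [Real.dist_eq, hder g] at this
      exact this.le
    have hdf : ∀ t ∈ Metric.ball q δ, DifferentiableAt ℝ (fun t => L g t - t) t :=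
      fun t _ => (hdiff g t).sub differentiableAt_fun_id
    have := Convex.norm_image_sub_le_of_norm_deriv_le hdf hball (convex_ball q δ)
      (by rwa [Metric.mem_ball, Real.dist_eq] : v ∈ Metric.ball q δ)
      (by rwa [Metric.mem_ball, Real.dist_eq] : u ∈ Metric.ball q δ)
    rw [Real.norm_eq_abs, Real.norm_eq_abs] at this
    exact this
  -- uniform word-length bound
  have hLx_lim : ∀ g : G, Tendsto (fun n => L g (x n)) atTop (𝓝 q) := by
    intro g
    have := ((hcont g).tendsto q).comp hxlim
    rwa [hq g] at this
  have Bound : ∀ g : G, ∃ C : ℝ, ∀ᶠ n in atTop, |L g (x n) - x n| ≤ C * M n := by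
    intro g
    have hg : g ∈ Subgroup.closure (S : Set G) := by rw [hS]; trivial
    induction hg using Subgroup.closure_induction with
    | mem s hs =>
        refine ⟨1, Eventually.of_forall fun n => ?_⟩
        rw [one_mul]
        exact Finset.le_sup' (fun s => |L s (x n) - x n|) hs
    | one =>
        refine ⟨0, Eventually.of_forall fun n => ?_⟩
        rw [hone (x n)]
        simp
    | mul g h _ _ hg hh =>
        obtain ⟨Cg, hCg⟩ := hg
        obtain ⟨Ch, hCh⟩ := hh
        obtain ⟨δ, hδpos, hδ⟩ := est g 1 one_pos
        refine ⟨Cg + 2 * Ch, ?_⟩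
        have E1 : ∀ᶠ n in atTop, |x n - q| < δ := by
          have := hxlim (Metric.ball_mem_nhds q hδpos)
          simpa [Real.dist_eq] using this
        have E2 : ∀ᶠ n in atTop, |L h (x n) - q| < δ := by
          have := (hLx_lim h) (Metric.ball_mem_nhds q hδpos)
          simpa [Real.dist_eq] using this
        filter_upwards [E1, E2, hCg, hCh] with n h1 h2 h3 h4
        have h5 := hδ (L h (x n)) (x n) h2 h1
        have h6 : |L h (x n) - x n| ≤ Ch * M n := h4
        have h7 : L (g * h) (x n) = L g (L h (x n)) := hmul g h (x n)
        calc |L (g * h) (x n) - x n|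
            = |((L g (L h (x n)) - L h (x n)) - (L g (x n) - x n))
                + (L g (x n) - x n) + (L h (x n) - x n)| := by rw [h7]; ring_nf
          _ ≤ |((L g (L h (x n)) - L h (x n)) - (L g (x n) - x n))
                + (L g (x n) - x n)| + |L h (x n) - x n| := abs_add_le _ _
          _ ≤ |(L g (L h (x n)) - L h (x n)) - (L g (x n) - x n)|
                + |L g (x n) - x n| + |L h (x n) - x n| := by
                  gcongr
                  exact abs_add_le _ _
          _ ≤ 1 * |L h (x n) - x n| + Cg * M n + Ch * M n := by gcongr
          _ ≤ (Cg + 2 * Ch) * M n := by rw [one_mul]; linarith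
    | inv g _ hg =>
        obtain ⟨Cg, hCg⟩ := hg
        obtain ⟨δ, hδpos, hδ⟩ := est g (1/2) (by norm_num)
        refine ⟨2 * Cg, ?_⟩
        have E1 : ∀ᶠ n in atTop, |x n - q| < δ := by
          have := hxlim (Metric.ball_mem_nhds q hδpos)
          simpa [Real.dist_eq] using this
        have E2 : ∀ᶠ n in atTop, |L g⁻¹ (x n) - q| < δ := by
          have := (hLx_lim g⁻¹) (Metric.ball_mem_nhds q hδpos)
          simpa [Real.dist_eq] using this
        filter_upwards [E1, E2, hCg] with n h1 h2 h3
        set u := L g⁻¹ (x n) with hu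
        have key : L g u = x n := by
          rw [hu, ← hmul, mul_inv_cancel, hone]
        have h5 := hδ u (x n) h2 h1
        rw [key] at h5
        -- h5 : |(x n - u) - (L g (x n) - x n)| ≤ 1/2 * |u - x n|
        have h6 : |x n - u| ≤ |(x n - u) - (L g (x n) - x n)| + |L g (x n) - x n| := by
          have := abs_add_le ((x n - u) - (L g (x n) - x n)) (L g (x n) - x n)
          simpa using this
        have h7 : |u - x n| = |x n - u| := abs_sub_comm _ _
        show |u - x n| ≤ 2 * Cg * M n
        linarith [h5, h6, h3, h7]
  -- ultrafilter limits define a homomorphism to ℝ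
  set U : Ultrafilter ℕ := Ultrafilter.of atTop with hUdef
  have hU : (U : Filter ℕ) ≤ atTop := Ultrafilter.of_le _
  set a : G → ℕ → ℝ := fun g n => (L g (x n) - x n) / M n with hadef
  have hlim : ∀ g : G, ∃ c : ℝ, Tendsto (a g) (U : Filter ℕ) (𝓝 c) := by
    intro g
    obtain ⟨C, hC⟩ := Bound g
    have hbd : ∀ᶠ n in atTop, a g n ∈ Set.Icc (-C) C := by
      filter_upwards [hC] with n hn
      have hMn := hM0 n
      have h1 : |a g n| ≤ C := by
        simp only [hadef]
        rw [abs_div, abs_of_pos hMn, div_le_iff₀ hMn]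
        exact hn
      exact abs_le.mp h1
    have hbd' : (U.map (a g) : Filter ℝ) ≤ 𝓟 (Set.Icc (-C) C) := by
      rw [Filter.le_principal_iff, Ultrafilter.coe_map, Filter.mem_map]
      exact Filter.le_def.mp hU _ hbd
    obtain ⟨c, _, hc⟩ := isCompact_Icc.ultrafilter_le_nhds (U.map (a g)) hbd'
    rw [Ultrafilter.coe_map] at hc
    exact ⟨c, hc⟩
  choose φ hφ using hlim
  have hadd : ∀ g h : G, φ (g * h) = φ g + φ h := by
    intro g h
    obtain ⟨Ch, hCh⟩ := Bound h
    set e : ℕ → ℝ := fun n => a (g * h) n - a g n - a h n with hedef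
    have he : Tendsto e atTop (𝓝 0) := by
      rw [NormedAddCommGroup.tendsto_nhds_zero]
      intro ε hε
      have hε' : 0 < ε / (|Ch| + 1) := by positivity
      obtain ⟨δ, hδpos, hδ⟩ := est g (ε / (|Ch| + 1)) hε'
      have E1 : ∀ᶠ n in atTop, |x n - q| < δ := by
        have := hxlim (Metric.ball_mem_nhds q hδpos); simpa [Real.dist_eq] using this
      have E2 : ∀ᶠ n in atTop, |L h (x n) - q| < δ := by
        have := (hLx_lim h) (Metric.ball_mem_nhds q hδpos); simpa [Real.dist_eq] using this
      filter_upwards [E1, E2, hCh] with n h1 h2 h3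
      have hMn := hM0 n
      have hnum : e n = ((L g (L h (x n)) - L h (x n)) - (L g (x n) - x n)) / M n := by
        simp only [hedef, hadef]
        rw [hmul g h]
        field_simp
        ring
      have h5 := hδ (L h (x n)) (x n) h2 h1
      have h6 : |L h (x n) - x n| ≤ |Ch| * M n :=
        le_trans h3 (mul_le_mul_of_nonneg_right (le_abs_self Ch) hMn.le)
      have h7 : |(L g (L h (x n)) - L h (x n)) - (L g (x n) - x n)|
          ≤ (ε / (|Ch| + 1)) * (|Ch| * M n) :=
        le_trans h5 (mul_le_mul_of_nonneg_left h6 hε'.le)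
      rw [Real.norm_eq_abs, hnum, abs_div, abs_of_pos hMn, div_lt_iff₀ hMn]
      calc |(L g (L h (x n)) - L h (x n)) - (L g (x n) - x n)|
          ≤ (ε / (|Ch| + 1)) * (|Ch| * M n) := h7
        _ < ε * M n := by
            rw [div_mul_eq_mul_div, div_lt_iff₀ (by positivity : (0:ℝ) < |Ch| + 1)]
            nlinarith [mul_pos hε hMn, abs_nonneg Ch]
    have heU : Tendsto e (U : Filter ℕ) (𝓝 0) := he.mono_left hU
    have hsum : Tendsto (fun n => a g n + a h n + e n) (U : Filter ℕ) (𝓝 (φ g + φ h + 0)) :=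
      ((hφ g).add (hφ h)).add heU
    have hfun : a (g * h) = fun n => a g n + a h n + e n := by
      funext n; simp only [hedef]; ring
    rw [← hfun] at hsum
    have := tendsto_nhds_unique (hφ (g * h)) hsum
    rw [this]; ring
  have hφ1 : φ (1 : G) = 0 := by
    have h0 : a (1 : G) = fun _ => (0:ℝ) := by
      funext n; simp only [hadef]; rw [hone (x n)]; simp
    have h1 := hφ (1 : G)
    rw [h0] at h1
    exact tendsto_nhds_unique h1 tendsto_const_nhds
  set Φ : G →* Multiplicative ℝ :=
    { toFun := fun g => Multiplicative.ofAdd (φ g)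
      map_one' := by show Multiplicative.ofAdd (φ 1) = 1; rw [hφ1]; rfl
      map_mul' := fun g h => by
        show Multiplicative.ofAdd (φ (g * h)) = Multiplicative.ofAdd (φ g) * Multiplicative.ofAdd (φ h)
        rw [hadd g h]; rfl } with hΦdef
  have hz : ∀ g, φ g = 0 := by
    intro g
    have h1 : Φ g = 1 := by rw [hcoh Φ]; rfl
    have h2 := congrArg Multiplicative.toAdd h1
    simpa [hΦdef] using h2
  have hsmall : ∀ᶠ n in (U : Filter ℕ), ∀ s ∈ S, |a s n| < 1/2 := by
    rw [Finset.eventually_all]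
    intro s hs
    have h1 : Tendsto (a s) (U : Filter ℕ) (𝓝 0) := by rw [← hz s]; exact hφ s
    have h2 : {t : ℝ | |t| < 1/2} ∈ 𝓝 (0:ℝ) := by
      apply IsOpen.mem_nhds
      · exact isOpen_lt continuous_abs continuous_const
      · show |(0:ℝ)| < 1/2
        norm_num
    exact h1 h2
  obtain ⟨n, hn⟩ := hsmall.exists
  obtain ⟨s, hsS, hseq⟩ := Finset.exists_mem_eq_sup' hSne (fun s => |L s (x n) - x n|)
  have hMn' : M n = |L s (x n) - x n| := hseq
  have h1 : |a s n| = 1 := by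
    simp only [hadef]
    rw [abs_div, abs_of_pos (hM0 n), ← hMn']
    exact div_self (ne_of_gt (hM0 n))
  have h2 := hn s hsS
  rw [h1] at h2
  norm_num at h2

/-- **Lemma (corollary of Thurston's Stability Lemma).** A finitely generated
group with `H¹(G,ℝ) = 0` (every homomorphism to `(ℝ,+)` is trivial) acting on
the circle by an orientation-preserving `C¹` action with a global fixed point
acts trivially. -/
theorem trivial_of_global_fixed_point {G : Type*} [Group G] (hfg : Group.FG G)
    (ρ : G →* (UnitAddCircle ≃ₜ UnitAddCircle))
    (hρ : ∀ g : G, ∃ F : ℝ → ℝ, IsOPC1Lift (ρ g) F)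
    (hcoh : ∀ φ : G →* Multiplicative ℝ, φ = 1)
    (p : UnitAddCircle) (hp : ∀ g : G, ρ g p = p) :
    ∀ g : G, ρ g = Homeomorph.refl UnitAddCircle := by
  obtain ⟨S, hS⟩ := hfg.out
  obtain ⟨x₀, hx₀⟩ := QuotientAddGroup.mk_surjective p
  obtain ⟨L, hcd, hpos, hper, hdesc, hfix0, hmul, hone⟩ :=
    exists_normalized_lifts ρ hρ p hp x₀ hx₀
  have hsub : ∀ g (z : ℝ), L g (z - 1) = L g z - 1 := by
    intro g z
    have h := hper g (z - 1)
    have h2 : z - 1 + 1 = z := by ring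
    rw [h2] at h
    linarith
  have hperZ : ∀ g (m : ℤ) (z : ℝ), L g (z + m) = L g z + m := by
    intro g m
    induction m using Int.induction_on with
    | zero => simp
    | succ k ih =>
        intro z
        have h1 : z + (((k : ℤ) + 1 : ℤ) : ℝ) = (z + (k : ℝ)) + 1 := by push_cast; ring
        rw [h1, hper g (z + (k : ℝ))]
        have := ih z
        push_cast at this ⊢
        linarith
    | pred k ih =>
        intro z
        have h1 : z + ((-(k : ℤ) - 1 : ℤ) : ℝ) = (z + ((-(k : ℤ) : ℤ) : ℝ)) - 1 := by
          push_cast; ring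
        rw [h1, hsub g]
        have := ih z
        push_cast at this ⊢
        linarith
  have claim : ∀ g, ∀ z ∈ Set.Icc x₀ (x₀ + 1), L g z = z := by
    by_contra hcl
    push_neg at hcl
    obtain ⟨g, yy, hyI, hgy⟩ := hcl
    have hyS : ∃ s ∈ S, L s yy ≠ yy := by
      by_contra hys
      push_neg at hys
      exact hgy (stab_all' L hmul hone hS hys g)
    set K : Set ℝ := {z | z ∈ Set.Icc x₀ (x₀ + 1) ∧ ∀ s ∈ S, L s z = z} with hK
    have hKclosed : IsClosed K := by
      have hKeq : K = Set.Icc x₀ (x₀ + 1) ∩ ⋂ s ∈ S, {z : ℝ | L s z - z = 0} := by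
        ext z
        simp only [hK, Set.mem_setOf_eq, Set.mem_inter_iff, Set.mem_iInter, sub_eq_zero]
      rw [hKeq]
      refine isClosed_Icc.inter (isClosed_biInter fun s _ => ?_)
      exact isClosed_eq ((hcd s).continuous.sub continuous_id) continuous_const
    set A := K ∩ Set.Icc x₀ yy with hA
    have hx₀K : x₀ ∈ K := ⟨⟨le_refl _, by linarith⟩, fun s _ => hfix0 s⟩
    have hAne : A.Nonempty := ⟨x₀, hx₀K, le_refl _, hyI.1⟩
    have hAclosed : IsClosed A := hKclosed.inter isClosed_Icc
    have hAbdd : BddAbove A := ⟨yy, fun z hz => hz.2.2⟩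
    set q := sSup A with hqdef
    have hqA : q ∈ A := hAclosed.csSup_mem hAne hAbdd
    have hqy : q < yy := by
      rcases lt_or_eq_of_le hqA.2.2 with h | h
      · exact h
      · obtain ⟨s, hs, hne⟩ := hyS
        have := hqA.1.2 s hs
        rw [h] at this
        exact absurd this hne
    have hmove : ∀ z ∈ Set.Ioc q yy, ∃ s ∈ S, L s z ≠ z := by
      intro z hz
      by_contra hzs
      push_neg at hzs
      have hzK : z ∈ K :=
        ⟨⟨le_trans hqA.2.1 hz.1.le, le_trans hz.2 hyI.2⟩, hzs⟩
      have hzA : z ∈ A := ⟨hzK, le_trans hqA.2.1 hz.1.le, hz.2⟩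
      have : z ≤ q := le_csSup hAbdd hzA
      linarith [hz.1]
    have hqfix : ∀ g', L g' q = q := stab_all' L hmul hone hS hqA.1.2
    exact thurston_core hcoh L hcd hpos hmul hone S hS q yy hqy hqfix hmove
  have claimAll : ∀ g (z : ℝ), L g z = z := by
    intro g z
    set m := ⌊z - x₀⌋ with hm
    have h1 : x₀ ≤ z - m := by
      have := Int.floor_le (z - x₀); linarith
    have h2 : z - m ≤ x₀ + 1 := by
      have := Int.lt_floor_add_one (z - x₀); linarith
    have h3 := claim g (z - m) ⟨h1, h2⟩
    have h4 := hperZ g m (z - m)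
    rw [h3] at h4
    simpa using h4
  intro g
  refine Homeomorph.ext fun z => ?_
  obtain ⟨t, rfl⟩ := QuotientAddGroup.mk_surjective z
  have : ρ g ((t : ℝ) : UnitAddCircle) = ((t : ℝ) : UnitAddCircle) := by
    rw [hdesc g t, claimAll g t]
  exact this
end

section
/- Let f be a self-homeomorphism of the circle S¹ = ℝ/ℤ admitting a lift F : ℝ → ℝ that is continuous, strictly increasing, satisfies F(x+1) = F(x)+1 for all x ∈ ℝ, and f(x mod 1) = F(x) mod 1 for all x ∈ ℝ. Let μ be a Borel probability measure on S¹ invariant under f (the pushforward of μ under f equals μ), and let δ : S¹ → ℝ be the displacement function determined by δ(x mod 1) = F(x) − x for all x ∈ ℝ. If the mean rotation number ∫ δ dμ is an integer, then f has a fixed point: there exists p ∈ S¹ with f(p) = p. -/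
open MeasureTheory

/-- **Proposition.** Let `f` be an orientation-preserving circle homeomorphism
with lift `F`, preserving a Borel probability measure `μ`. If the mean rotation
number `∫ δ dμ` of the displacement function `δ (x mod 1) = F x − x` is an
integer, then `f` has a fixed point. -/
theorem fixed_point_of_integer_mean_rotation_number
    (f : UnitAddCircle ≃ₜ UnitAddCircle) (F : ℝ → ℝ)
    (hF : Continuous F) (hmono : StrictMono F)
    (hper : ∀ x : ℝ, F (x + 1) = F x + 1)
    (hlift : ∀ x : ℝ, f (x : UnitAddCircle) = ((F x : ℝ) : UnitAddCircle))
    (μ : Measure UnitAddCircle) [IsProbabilityMeasure μ]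
    (hinv : Measure.map f μ = μ)
    (δ : UnitAddCircle → ℝ)
    (hδ : ∀ x : ℝ, δ (x : UnitAddCircle) = F x - x)
    (hrot : ∃ m : ℤ, ∫ p, δ p ∂μ = (m : ℝ)) :
    ∃ p : UnitAddCircle, f p = p := by
  obtain ⟨m, hm⟩ := hrot
  by_contra hno
  push_neg at hno
  -- δ is continuous
  have hδc : Continuous δ := by
    have : δ ∘ (QuotientAddGroup.mk : ℝ → UnitAddCircle) = fun x => F x - x := by
      funext x; exact hδ x
    exact (QuotientAddGroup.isQuotientMap_mk _).continuous_iff.mpr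
      (this ▸ (hF.sub continuous_id))
  -- δ never takes integer values
  have hint : ∀ p : UnitAddCircle, ∀ n : ℤ, δ p ≠ (n : ℝ) := by
    intro p n h
    obtain ⟨x, rfl⟩ := QuotientAddGroup.mk_surjective p
    rw [hδ] at h
    apply hno ((x : ℝ) : UnitAddCircle)
    rw [hlift]
    have : F x = x + (n : ℝ) := by linarith
    rw [this]
    push_cast
    simp
  -- δ attains min a and max b on the compact connected space
  obtain ⟨pa, -, ha⟩ := isCompact_univ.exists_isMinOn Set.univ_nonempty hδc.continuousOn
  obtain ⟨pb, -, hb⟩ := isCompact_univ.exists_isMaxOn Set.univ_nonempty hδc.continuousOn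
  set a := δ pa with ha'
  set b := δ pb with hb'
  have hab : ∀ p, a ≤ δ p ∧ δ p ≤ b := fun p => ⟨ha (Set.mem_univ p), hb (Set.mem_univ p)⟩
  set k : ℤ := ⌊a⌋ with hk
  have hka : (k : ℝ) < a := lt_of_le_of_ne (Int.floor_le a) (fun h => hint pa k h.symm)
  have hbk : b < (k : ℝ) + 1 := by
    by_contra hge
    push_neg at hge
    -- intermediate value: range δ is connected, contains a and b, so contains k+1
    have hconn : IsPreconnected (Set.range δ) := by
      rw [← Set.image_univ]
      exact isPreconnected_univ.image δ hδc.continuousOn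
    have : ((k : ℝ) + 1) ∈ Set.range δ := by
      have := hconn.intermediate_value (Set.mem_range_self pa) (Set.mem_range_self pb)
        (f := id) continuousOn_id
      have hmem : ((k:ℝ)+1) ∈ Set.Icc (δ pa) (δ pb) :=
        ⟨by linarith [Int.lt_floor_add_one a], hge⟩
      simpa using this hmem
    obtain ⟨q, hq⟩ := this
    exact hint q (k+1) (by push_cast; linarith [hq])
  -- δ is integrable
  have hδi : Integrable δ μ := by
    apply hδc.integrable_of_hasCompactSupport
    exact IsCompact.of_isClosed_subset isCompact_univ (isClosed_tsupport δ) (Set.subset_univ _)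
  have h1 : (k : ℝ) < ∫ p, δ p ∂μ := by
    calc (k : ℝ) < a := hka
    _ = ∫ _, a ∂μ := by simp
    _ ≤ ∫ p, δ p ∂μ := integral_mono (integrable_const a) hδi (fun p => (hab p).1)
  have h2 : ∫ p, δ p ∂μ < (k : ℝ) + 1 := by
    calc ∫ p, δ p ∂μ ≤ ∫ _, b ∂μ := integral_mono hδi (integrable_const b) (fun p => (hab p).2)
    _ = b := by simp
    _ < (k:ℝ) + 1 := hbk
  rw [hm] at h1 h2
  have : k < m := by exact_mod_cast h1
  have : m < k + 1 := by exact_mod_cast h2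
  omega
end

section
/- Let f and g be self-homeomorphisms of the circle S¹ = ℝ/ℤ admitting lifts F, G : ℝ → ℝ respectively, each continuous, strictly increasing, satisfying F(x+1) = F(x)+1 and G(x+1) = G(x)+1 for all x ∈ ℝ, with f(x mod 1) = F(x) mod 1 and g(x mod 1) = G(x) mod 1. Let μ be a Borel probability measure on S¹ invariant under both f and g. Let δ_f, δ_g, δ_{f∘g} : S¹ → ℝ be the displacement functions determined by δ_f(x mod 1) = F(x) − x, δ_g(x mod 1) = G(x) − x, and δ_{f∘g}(x mod 1) = F(G(x)) − x for all x ∈ ℝ. Then ∫ δ_{f∘g} dμ = ∫ δ_f dμ + ∫ δ_g dμ; in particular the mean rotation number g ↦ ∫ δ_g dμ (mod 1) is a group homomorphism into ℝ/ℤ on any group of homeomorphisms preserving μ. -/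
open MeasureTheory

/-- **Proposition.** The mean rotation number with respect to an invariant
probability measure is additive: if `f`, `g` are orientation-preserving circle
homeomorphisms with lifts `F`, `G` preserving a Borel probability measure `μ`,
then the integral of the displacement function of `f ∘ g` is the sum of the
integrals of the displacement functions of `f` and of `g`. Hence the mean
rotation number map is a homomorphism to `ℝ/ℤ`. -/
theorem mean_rotation_number_additive
    (f g : UnitAddCircle ≃ₜ UnitAddCircle) (F G : ℝ → ℝ)
    (hF : Continuous F) (hFmono : StrictMono F)
    (hFper : ∀ x : ℝ, F (x + 1) = F x + 1)
    (hFlift : ∀ x : ℝ, f (x : UnitAddCircle) = ((F x : ℝ) : UnitAddCircle))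
    (hG : Continuous G) (hGmono : StrictMono G)
    (hGper : ∀ x : ℝ, G (x + 1) = G x + 1)
    (hGlift : ∀ x : ℝ, g (x : UnitAddCircle) = ((G x : ℝ) : UnitAddCircle))
    (μ : Measure UnitAddCircle) [IsProbabilityMeasure μ]
    (hfinv : Measure.map f μ = μ) (hginv : Measure.map g μ = μ)
    (δf δg δfg : UnitAddCircle → ℝ)
    (hδf : ∀ x : ℝ, δf (x : UnitAddCircle) = F x - x)
    (hδg : ∀ x : ℝ, δg (x : UnitAddCircle) = G x - x)
    (hδfg : ∀ x : ℝ, δfg (x : UnitAddCircle) = F (G x) - x) :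
    ∫ p, δfg p ∂μ = (∫ p, δf p ∂μ) + ∫ p, δg p ∂μ := by
  -- Continuity of the displacement functions
  have hq := QuotientAddGroup.isQuotientMap_mk (AddSubgroup.zmultiples (1:ℝ))
  have cont : ∀ (δ : UnitAddCircle → ℝ) (H : ℝ → ℝ), Continuous H →
      (∀ x : ℝ, δ (x : UnitAddCircle) = H x - x) → Continuous δ := by
    intro δ H hH hδ
    rw [hq.continuous_iff]
    have : δ ∘ QuotientAddGroup.mk = fun x : ℝ => H x - x := funext hδ
    rw [this]
    exact hH.sub continuous_id
  have hcf : Continuous δf := cont δf F hF hδf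
  have hcg : Continuous δg := cont δg G hG hδg
  -- The key pointwise identity on the circle
  have key : ∀ p : UnitAddCircle, δfg p = δf (g p) + δg p := by
    intro p
    obtain ⟨x, rfl⟩ := hq.surjective p
    have h1 : δf (g (x : UnitAddCircle)) = F (G x) - G x := by
      rw [hGlift x, hδf (G x)]
    rw [hδfg x, h1, hδg x]
    ring
  -- Integrability
  have hif : Integrable δf μ := hcf.integrable_of_hasCompactSupport (HasCompactSupport.of_compactSpace δf)
  have hig : Integrable δg μ := hcg.integrable_of_hasCompactSupport (HasCompactSupport.of_compactSpace δg)
  have hifg : Integrable (fun p => δf (g p)) μ :=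
    (hcf.comp g.continuous).integrable_of_hasCompactSupport (HasCompactSupport.of_compactSpace _)
  calc ∫ p, δfg p ∂μ = ∫ p, (δf (g p) + δg p) ∂μ := by
        exact integral_congr_ae (Filter.Eventually.of_forall key)
    _ = (∫ p, δf (g p) ∂μ) + ∫ p, δg p ∂μ := integral_add hifg hig
    _ = (∫ p, δf p ∂μ) + ∫ p, δg p ∂μ := by
        congr 1
        conv_rhs => rw [← hginv]
        exact (integral_map g.continuous.aemeasurable
          (by rw [hginv]; exact hif.aestronglyMeasurable)).symm
end

section
/- Let G be a finitely generated group with trivial abelianization (H₁(G,ℤ) = 0), and let ρ be an orientation-preserving action of G on the circle by homeomorphisms that preserves a Borel probability measure μ on S¹ (that is, the pushforward of μ under ρ(g) equals μ for all g ∈ G). Then G acts with a global fixed point: there exists p ∈ S¹ such that ρ(g)(p) = p for all g ∈ G. -/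
open MeasureTheory

section FixedPointAux

open Set Filter Topology

variable {F : ℝ → ℝ}

lemma lift_add_int (h1 : ∀ x, F (x + 1) = F x + 1) : ∀ (x : ℝ) (n : ℤ), F (x + n) = F x + n := by
  intro x n
  induction n using Int.induction_on with
  | zero => simp
  | succ k ih =>
      have : x + ((k : ℤ) + 1 : ℤ) = (x + (k : ℤ)) + 1 := by push_cast; ring
      rw [this, h1, ih]; push_cast; ring
  | pred k ih =>
      have h := h1 (x + (-(k : ℤ) - 1 : ℤ))
      have e1 : x + (-(k : ℤ) - 1 : ℤ) + 1 = x + (-(k : ℤ) : ℤ) := by push_cast; ring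
      rw [e1, ih] at h
      have : F (x + (-(k:ℤ) - 1 : ℤ)) = F x + (-(k:ℤ) - 1 : ℤ) := by push_cast at h ⊢; linarith
      convert this using 2 <;> push_cast <;> ring

/-- The displacement function on the circle. -/
noncomputable def psi (F : ℝ → ℝ) (h1 : ∀ x, F (x + 1) = F x + 1) : UnitAddCircle → ℝ :=
  fun q => Quotient.liftOn' q (fun x => F x - x) (by
    intro p q hpq
    rw [QuotientAddGroup.leftRel_apply] at hpq
    obtain ⟨n, hn⟩ := AddSubgroup.mem_zmultiples_iff.mp hpq
    have hq : q = p + n := by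
      have : (n : ℝ) = -p + q := by rw [← hn]; simp
      linarith
    rw [hq, lift_add_int h1]; ring)

lemma psi_coe (h1 : ∀ x, F (x + 1) = F x + 1) (x : ℝ) :
    psi F h1 (x : UnitAddCircle) = F x - x := rfl

lemma continuous_psi (h1 : ∀ x, F (x + 1) = F x + 1) (hc : Continuous F) :
    Continuous (psi F h1) :=
  (hc.sub continuous_id).quotient_liftOn' _

lemma lift_surjective (hc : Continuous F) (h1 : ∀ x, F (x + 1) = F x + 1)
    (hm : Monotone F) : Function.Surjective F := by
  apply hc.surjective
  · apply tendsto_atTop_mono (f := fun x : ℝ => F 0 + (x - 1))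
    · intro x
      have h := lift_add_int h1 0 ⌊x⌋
      have : F (⌊x⌋ : ℝ) ≤ F x := hm (Int.floor_le x)
      rw [zero_add] at h
      have := Int.sub_one_lt_floor x
      linarith [Int.sub_one_lt_floor x, h, this]
    · exact tendsto_atTop_add_const_left _ _ (tendsto_atTop_add_const_right _ _ tendsto_id)
  · apply tendsto_atBot_mono (f := fun x : ℝ => F 0 + (x + 1))
    · intro x
      have h := lift_add_int h1 0 (⌊x⌋ + 1)
      have : F x ≤ F ((⌊x⌋ : ℝ) + 1) := hm (by linarith [Int.lt_floor_add_one x])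
      rw [zero_add] at h
      push_cast at h
      have hfl := Int.floor_le x
      calc F x ≤ F ((⌊x⌋:ℝ) + 1) := this
        _ = F 0 + (⌊x⌋ + 1) := by rw [← h]
        _ ≤ F 0 + (x + 1) := by linarith
    · exact tendsto_atBot_add_const_left _ _ (tendsto_atBot_add_const_right _ _ tendsto_id)

lemma coe_eq_coe_iff {x y : ℝ} : (x : UnitAddCircle) = (y : UnitAddCircle) ↔ ∃ n : ℤ, y = x + n := by
  constructor
  · intro h
    obtain ⟨n, hn⟩ := AddSubgroup.mem_zmultiples_iff.mp ((QuotientAddGroup.eq_iff_sub_mem).mp h.symm)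
    refine ⟨n, ?_⟩
    have : (n:ℝ) = y - x := by simpa using hn
    linarith
  · rintro ⟨n, rfl⟩
    rw [QuotientAddGroup.eq_iff_sub_mem]
    exact AddSubgroup.mem_zmultiples_iff.mpr ⟨-n, by simp⟩

lemma lifts_sub_const {f : UnitAddCircle ≃ₜ UnitAddCircle} {F F' : ℝ → ℝ}
    (hF : IsOPLift f F) (hF' : IsOPLift f F') : ∃ m : ℤ, ∀ x, F' x = F x + m := by
  have key : ∀ x : ℝ, ∃ n : ℤ, F' x = F x + n := by
    intro x
    exact coe_eq_coe_iff.mp ((hF.2.2.2 x).symm.trans (hF'.2.2.2 x))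
  obtain ⟨m, hm⟩ := key 0
  refine ⟨m, fun x => ?_⟩
  by_contra hne
  obtain ⟨n, hn⟩ := key x
  have hmn : m ≠ n := by rintro rfl; exact hne hn
  -- d := F' - F is continuous, takes integer-multiple values, IVT contradiction
  set d : ℝ → ℝ := fun y => F' y - F y with hd
  have hdc : Continuous d := hF'.1.sub hF.1
  have hd0 : d 0 = m := by simp [hd, hm]
  have hdx : d x = n := by simp [hd, hn]
  have hv : ∃ z ∈ uIcc 0 x, d z = (m : ℝ) + 1/2 ∨ d z = (m : ℝ) - 1/2 := by
    rcases lt_or_gt_of_ne (show (m:ℝ) ≠ n by exact_mod_cast hmn) with h | h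
    · have : (m:ℝ) + 1/2 ∈ uIcc (d 0) (d x) := by
        rw [hd0, hdx]
        constructor
        · apply min_le_of_left_le; linarith
        · have hmn' : m < n := by exact_mod_cast h
          have : (m:ℝ) + 1 ≤ n := by exact_mod_cast hmn'
          apply le_max_of_le_right; linarith
      obtain ⟨z, hz, hz2⟩ := intermediate_value_uIcc (hdc.continuousOn) this
      exact ⟨z, hz, Or.inl hz2⟩
    · have : (m:ℝ) - 1/2 ∈ uIcc (d 0) (d x) := by
        rw [hd0, hdx]
        constructor
        · have : (n:ℝ) + 1 ≤ m := by
            have hh : n < m := by exact_mod_cast h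
            exact_mod_cast hh
          apply min_le_of_right_le; linarith
        · apply le_max_of_le_left; linarith
      obtain ⟨z, hz, hz2⟩ := intermediate_value_uIcc (hdc.continuousOn) this
      exact ⟨z, hz, Or.inr hz2⟩
  obtain ⟨z, _, hz⟩ := hv
  obtain ⟨k, hk⟩ := key z
  have hdz : d z = k := by simp [hd, hk]
  rcases hz with h | h <;> rw [hdz] at h
  · have : (2*k : ℤ) = 2*m + 1 := by
      have : (2*k : ℝ) = 2*m + 1 := by linarith
      exact_mod_cast this
    omega
  · have : (2*k : ℤ) = 2*m - 1 := by
      have : (2*k : ℝ) = 2*m - 1 := by linarith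
      exact_mod_cast this
    omega

lemma no_push_up (f : UnitAddCircle ≃ₜ UnitAddCircle) (F : ℝ → ℝ) (hF : IsOPLift f F)
    (μ : Measure UnitAddCircle) [IsProbabilityMeasure μ]
    (hinv : Measure.map f μ = μ)
    (hint : ∫ q, psi F hF.2.2.1 q ∂μ = 0)
    (x₀ : ℝ) (hsupp : ∀ U : Set UnitAddCircle, IsOpen U → (x₀ : UnitAddCircle) ∈ U → μ U ≠ 0) :
    F x₀ ≤ x₀ := by
  obtain ⟨hc, hm, h1, hdesc⟩ := hF
  by_contra hlt
  push_neg at hlt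
  set Ψ := psi F h1 with hΨ
  have hΨc : Continuous Ψ := continuous_psi h1 hc
  -- step 1: a fixed point below x₀
  have hex : ∃ z : ℝ, F z ≤ z := by
    by_contra h
    push_neg at h
    have hpos : ∀ q : UnitAddCircle, 0 < Ψ q := by
      intro q
      induction q using QuotientAddGroup.induction_on with
      | H x => rw [hΨ, psi_coe h1]; linarith [h x]
    obtain ⟨q0, -, hq0⟩ := isCompact_univ.exists_isMinOn univ_nonempty hΨc.continuousOn
    have hle : ∀ q, Ψ q0 ≤ Ψ q := fun q => hq0 (mem_univ q)
    have : (0 : ℝ) < ∫ q, Ψ q ∂μ := by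
      have h2 : ∫ q, Ψ q0 ∂μ ≤ ∫ q, Ψ q ∂μ :=
        integral_mono (integrable_const _) (hΨc.integrable_of_hasCompactSupport (HasCompactSupport.of_compactSpace _)) hle
      rw [integral_const] at h2
      simp at h2
      linarith [hpos q0]
    rw [hint] at this; exact lt_irrefl _ this
  obtain ⟨z, hz⟩ := hex
  -- translate z below x₀ and find a fixed point ≤ x₀
  have hfix_le : ∃ c, F c = c ∧ c ≤ x₀ := by
    set z' := z + (⌊x₀ - z⌋ : ℤ) with hz'
    have hz'le : z' ≤ x₀ := by
      have := Int.floor_le (x₀ - z); simp [hz']; linarith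
    have hFz' : F z' ≤ z' := by rw [hz', lift_add_int h1]; linarith
    have h0 : (0:ℝ) ∈ Icc (F z' - z') (F x₀ - x₀) := ⟨by linarith, by linarith⟩
    obtain ⟨c, hc1, hc2⟩ := intermediate_value_Icc hz'le ((hc.sub continuous_id).continuousOn) h0
    have hcc : F c - c = 0 := hc2
    exact ⟨c, by linarith, hc1.2⟩
  -- the enclosing fixed points a < x₀ < b
  set S : Set ℝ := {x | F x = x ∧ x ≤ x₀} with hS
  have hSne : S.Nonempty := hfix_le
  have hSbdd : BddAbove S := ⟨x₀, fun x hx => hx.2⟩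
  have hSclosed : IsClosed S := by
    have : S = {x | F x = x} ∩ Iic x₀ := rfl
    rw [this]
    exact (isClosed_eq hc continuous_id).inter isClosed_Iic
  set a := sSup S with ha
  have haS : a ∈ S := hSclosed.csSup_mem hSne hSbdd
  have haf : F a = a := haS.1
  have halt : a < x₀ := lt_of_le_of_ne haS.2 (fun h => by rw [h] at haf; linarith)
  have hax : x₀ < a + 1 := by
    by_contra h
    push_neg at h
    have : a + 1 ∈ S := ⟨by rw [show a + 1 = a + ((1:ℤ):ℝ) by norm_num, lift_add_int h1, haf], h⟩
    have := le_csSup hSbdd this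
    linarith
  set T : Set ℝ := {x | F x = x ∧ x₀ ≤ x} with hT
  have hTne : T.Nonempty := ⟨a + 1, by rw [show a + 1 = a + ((1:ℤ):ℝ) by norm_num, lift_add_int h1, haf], hax.le⟩
  have hTbdd : BddBelow T := ⟨x₀, fun x hx => hx.2⟩
  have hTclosed : IsClosed T := by
    have : T = {x | F x = x} ∩ Ici x₀ := rfl
    rw [this]
    exact (isClosed_eq hc continuous_id).inter isClosed_Ici
  set b := sInf T with hb
  have hbT : b ∈ T := hTclosed.csInf_mem hTne hTbdd
  have hbf : F b = b := hbT.1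
  have hblt : x₀ < b := lt_of_le_of_ne hbT.2 (fun h => by rw [← h] at hbf; linarith)
  have hba : b ≤ a + 1 := csInf_le hTbdd ⟨by rw [show a + 1 = a + ((1:ℤ):ℝ) by norm_num, lift_add_int h1, haf], hax.le⟩
  -- no fixed points in (a,b), so F x > x there
  have hnofix : ∀ x ∈ Ioo a b, F x ≠ x := by
    rintro x ⟨hax', hxb⟩ hfx
    rcases le_total x x₀ with h | h
    · exact absurd (le_csSup hSbdd ⟨hfx, h⟩) (not_le.mpr hax')
    · exact absurd (csInf_le hTbdd ⟨hfx, h⟩) (not_le.mpr hxb)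
  have hkey : ∀ x ∈ Ioo a b, x < F x := by
    rintro x hx
    by_contra h
    push_neg at h
    have hlt' : F x < x := lt_of_le_of_ne h (hnofix x hx)
    rcases lt_trichotomy x x₀ with hxx | hxx | hxx
    · have h0 : (0:ℝ) ∈ Icc (F x - x) (F x₀ - x₀) := ⟨by linarith, by linarith⟩
      obtain ⟨c', hc1, hc2⟩ := intermediate_value_Icc hxx.le ((hc.sub continuous_id).continuousOn) h0
      have hcc : F c' - c' = 0 := hc2
      exact hnofix c' ⟨lt_of_lt_of_le hx.1 hc1.1, lt_of_le_of_lt hc1.2 hblt⟩ (by linarith)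
    · rw [hxx] at hlt'; linarith
    · have h0 : (0:ℝ) ∈ Icc (F x - x) (F x₀ - x₀) := ⟨by linarith, by linarith⟩
      obtain ⟨c', hc1, hc2⟩ := intermediate_value_Icc' hxx.le ((hc.sub continuous_id).continuousOn) h0
      have hcc : F c' - c' = 0 := hc2
      exact hnofix c' ⟨lt_of_lt_of_le halt hc1.1, lt_of_le_of_lt hc1.2 hx.2⟩ (by linarith)
  have hmaps : ∀ x ∈ Ioo a b, F x ∈ Ioo a b := by
    rintro x ⟨h1', h2'⟩
    exact ⟨haf ▸ hm h1', hbf ▸ hm h2'⟩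
  -- the orbit of y := midpoint of (a, x₀)
  set y := (a + x₀) / 2 with hy
  have hy1 : a < y := by rw [hy]; linarith
  have hy2 : y < x₀ := by rw [hy]; linarith
  set xn : ℕ → ℝ := fun n => F^[n] y with hxn
  have hxn_mem : ∀ n, xn n ∈ Ioo a b := by
    intro n
    induction n with
    | zero => exact ⟨hy1, by simpa [hxn] using lt_trans hy2 hblt⟩
    | succ k ih =>
        have : xn (k+1) = F (xn k) := by rw [hxn]; simp [Function.iterate_succ_apply']
        rw [this]; exact hmaps _ ih
  have hxn_succ : ∀ n, xn (n+1) = F (xn n) := by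
    intro n; rw [hxn]; simp [Function.iterate_succ_apply']
  have hxn_mono : StrictMono xn :=
    strictMono_nat_of_lt_succ (fun n => by rw [hxn_succ n]; exact hkey _ (hxn_mem n))
  have hbdd : BddAbove (range xn) := ⟨b, by rintro - ⟨n, rfl⟩; exact (hxn_mem n).2.le⟩
  set L := ⨆ n, xn n with hL
  have htend : Tendsto xn atTop (𝓝 L) := tendsto_atTop_ciSup hxn_mono.monotone hbdd
  have hLb : L = b := by
    have hL_le : L ≤ b := ciSup_le (fun n => (hxn_mem n).2.le)
    have hL_gt : a < L := lt_of_lt_of_le (hxn_mem 0).1 (le_ciSup hbdd 0)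
    have hFL : F L = L := by
      have h1' : Tendsto (fun n => F (xn n)) atTop (𝓝 (F L)) :=
        (hc.continuousAt.tendsto).comp htend
      have h2' : Tendsto (fun n => F (xn n)) atTop (𝓝 L) := by
        have := htend.comp (tendsto_add_atTop_nat 1)
        have heq : (xn ∘ fun n => n + 1) = fun n => F (xn n) := by
          funext n; simp [Function.comp, hxn_succ]
        rwa [heq] at this
      exact tendsto_nhds_unique h1' h2'
    rcases lt_or_eq_of_le hL_le with h | h
    · have := hkey L ⟨hL_gt, h⟩; linarith
    · exact h
  -- measure argument
  set A : ℕ → Set UnitAddCircle := fun n => ((↑) : ℝ → UnitAddCircle) '' (Ioo a (xn n)) with hA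
  have hAopen : ∀ n, IsOpen (A n) := fun n => QuotientAddGroup.isOpenMap_coe _ isOpen_Ioo
  -- F as order iso
  have hsurj : Function.Surjective F := lift_surjective hc h1 hm.monotone
  set e : ℝ ≃o ℝ := StrictMono.orderIsoOfSurjective F hm hsurj with he
  have heF : ∀ x, e x = F x := fun x => rfl
  have himage : ∀ c d : ℝ, F '' (Ioo c d) = Ioo (F c) (F d) := by
    intro c d
    have : F '' (Ioo c d) = e '' (Ioo c d) := by simp [heF]
    rw [this, e.image_eq_preimage_symm, OrderIso.preimage_Ioo]
    simp only [OrderIso.symm_symm]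
    rfl
  have hfA : ∀ n, f '' A n = A (n+1) := by
    intro n
    rw [hA]
    simp only
    calc (⇑f) '' (((↑) : ℝ → UnitAddCircle) '' (Ioo a (xn n)))
        = ((↑) : ℝ → UnitAddCircle) '' (F '' (Ioo a (xn n))) := by
          rw [image_image, image_image]; exact image_congr (fun x _ => hdesc x)
      _ = ((↑) : ℝ → UnitAddCircle) '' (Ioo a (xn (n+1))) := by rw [himage, haf, ← hxn_succ]
  have hμA : ∀ n, μ (A n) = μ (A 0) := by
    intro n
    induction n with
    | zero => rfl
    | succ k ih =>
        rw [← ih, ← hfA k]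
        have hmeas : MeasurableSet (f '' A k) := ((f.isOpenMap _ (hAopen k)).measurableSet)
        calc μ (f '' A k) = (Measure.map f μ) (f '' A k) := by rw [hinv]
          _ = μ (f ⁻¹' (f '' A k)) := Measure.map_apply f.continuous.measurable hmeas
          _ = μ (A k) := by rw [preimage_image_eq _ f.injective]
  have hAmono : Monotone A := by
    intro i j hij
    rw [hA]
    exact Set.image_mono (Ioo_subset_Ioo le_rfl (hxn_mono.monotone hij))
  have hV : ⋃ n, A n = ((↑) : ℝ → UnitAddCircle) '' (Ioo a b) := by
    apply subset_antisymm
    · exact iUnion_subset fun n => Set.image_mono (Ioo_subset_Ioo le_rfl (hxn_mem n).2.le)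
    · rintro - ⟨z, hz', rfl⟩
      have hzb : z < L := hLb ▸ hz'.2
      obtain ⟨n, hn⟩ := (lt_ciSup_iff hbdd).mp hzb
      exact mem_iUnion.mpr ⟨n, ⟨z, ⟨hz'.1, hn⟩, rfl⟩⟩
  have hμV : μ (((↑) : ℝ → UnitAddCircle) '' (Ioo a b)) = μ (A 0) := by
    rw [← hV, (hAmono.directed_le).measure_iUnion]
    simp [hμA]
  -- the contradiction
  set U : Set UnitAddCircle := ((↑) : ℝ → UnitAddCircle) '' (Ioo y b) with hU
  have hUopen : IsOpen U := QuotientAddGroup.isOpenMap_coe _ isOpen_Ioo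
  have hUmem : (x₀ : UnitAddCircle) ∈ U := ⟨x₀, ⟨hy2, hblt⟩, rfl⟩
  have hinj : ∀ z ∈ Ioo a b, ∀ w ∈ Ioo a b, (z : UnitAddCircle) = w → z = w := by
    intro z hz' w hw' hzw
    have hz2 : z ∈ Ico a (a + 1) := ⟨hz'.1.le, lt_of_lt_of_le hz'.2 hba⟩
    have hw2 : w ∈ Ico a (a + 1) := ⟨hw'.1.le, lt_of_lt_of_le hw'.2 hba⟩
    exact (AddCircle.coe_eq_coe_iff_of_mem_Ico hz2 hw2).mp hzw
  have hUsub : U ⊆ (((↑) : ℝ → UnitAddCircle) '' (Ioo a b)) \ A 0 := by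
    rintro - ⟨z, hz', rfl⟩
    have hzab : z ∈ Ioo a b := ⟨lt_trans hy1 hz'.1, hz'.2⟩
    refine ⟨⟨z, hzab, rfl⟩, ?_⟩
    rintro ⟨w, hw', hwz⟩
    have hwab : w ∈ Ioo a b := ⟨hw'.1, lt_trans hw'.2 (lt_trans hy2 hblt)⟩
    have := hinj w hwab z hzab hwz
    rw [this] at hw'
    exact absurd hw'.2 (not_lt.mpr hz'.1.le)
  have hμU : μ U = 0 := by
    have hA0sub : A 0 ⊆ ((↑) : ℝ → UnitAddCircle) '' (Ioo a b) :=
      Set.image_mono (Ioo_subset_Ioo le_rfl (hxn_mem 0).2.le)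
    have : μ ((((↑) : ℝ → UnitAddCircle) '' (Ioo a b)) \ A 0) = 0 := by
      rw [measure_diff hA0sub (hAopen 0).measurableSet.nullMeasurableSet (measure_ne_top μ _), hμV]
      simp
    exact measure_mono_null hUsub this
  exact hsupp U hUopen hUmem hμU

-- new auxiliary lemmas
lemma circle_integrable {φ : UnitAddCircle → ℝ} (hφ : Continuous φ)
    (μ : Measure UnitAddCircle) [IsProbabilityMeasure μ] : Integrable φ μ :=
  hφ.integrable_of_hasCompactSupport (HasCompactSupport.of_compactSpace φ)

lemma integral_comp_homeo (f : UnitAddCircle ≃ₜ UnitAddCircle)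
    (μ : Measure UnitAddCircle) (hinv : Measure.map f μ = μ)
    {φ : UnitAddCircle → ℝ} (hφ : Continuous φ) :
    ∫ q, φ (f q) ∂μ = ∫ q, φ q ∂μ := by
  rw [← integral_map f.continuous.measurable.aemeasurable
    (hφ.aestronglyMeasurable (μ := Measure.map f μ)), hinv]

lemma comp_isOPLift {f g : UnitAddCircle ≃ₜ UnitAddCircle} {F G : ℝ → ℝ}
    (hF : IsOPLift f F) (hG : IsOPLift g G) : IsOPLift (f * g) (F ∘ G) := by
  obtain ⟨hFc, hFm, hF1, hFd⟩ := hF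
  obtain ⟨hGc, hGm, hG1, hGd⟩ := hG
  refine ⟨hFc.comp hGc, hFm.comp hGm, fun x => by simp [Function.comp, hG1, hF1], fun x => ?_⟩
  show f (g (x : UnitAddCircle)) = _
  rw [hGd, hFd]
  rfl

lemma exists_support_point (μ : Measure UnitAddCircle) [IsProbabilityMeasure μ] :
    ∃ p : UnitAddCircle, ∀ U : Set UnitAddCircle, IsOpen U → p ∈ U → μ U ≠ 0 := by
  by_contra h
  push_neg at h
  choose U hUo hUm hU0 using h
  obtain ⟨t, ht⟩ := isCompact_univ.elim_finite_subcover U hUo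
    (fun p _ => mem_iUnion.mpr ⟨p, hUm p⟩)
  have h0 : μ (⋃ p ∈ t, U p) = 0 := by
    apply measure_biUnion_null_iff (t.countable_toSet) |>.mpr
    intro p _
    exact hU0 p
  have : μ univ = 0 := measure_mono_null ht h0
  simp [measure_univ] at this

end FixedPointAux

/-- **Corollary.** A finitely generated group with trivial abelianization acting
on the circle by orientation-preserving homeomorphisms and preserving a Borel
probability measure has a global fixed point. -/
theorem global_fixed_point_of_perfect_measure_preserving
    {G : Type*} [Group G] (hfg : Group.FG G)
    (hab : Subsingleton (Abelianization G))
    (ρ : G →* (UnitAddCircle ≃ₜ UnitAddCircle))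
    (hρ : ∀ g : G, ∃ F : ℝ → ℝ, IsOPLift (ρ g) F)
    (μ : Measure UnitAddCircle) [IsProbabilityMeasure μ]
    (hinv : ∀ g : G, Measure.map (ρ g) μ = μ) :
    ∃ p : UnitAddCircle, ∀ g : G, ρ g p = p := by
  classical
  obtain ⟨p, hp⟩ := exists_support_point μ
  obtain ⟨x₀, rfl⟩ := QuotientAddGroup.mk_surjective p
  choose Fl hFl using hρ
  set τ : G → ℝ := fun g => ∫ q, psi (Fl g) (hFl g).2.2.1 q ∂μ with hτ
  -- τ is a hom mod 1
  have hτmul : ∀ a b : G, ∃ m : ℤ, τ (a * b) = τ a + τ b + m := by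
    intro a b
    have hcomp : IsOPLift (ρ (a * b)) (Fl a ∘ Fl b) := by
      rw [map_mul]; exact comp_isOPLift (hFl a) (hFl b)
    obtain ⟨m, hm⟩ := lifts_sub_const hcomp (hFl (a * b))
    refine ⟨m, ?_⟩
    have hpt : ∀ q : UnitAddCircle, psi (Fl (a * b)) (hFl (a * b)).2.2.1 q
        = psi (Fl a) (hFl a).2.2.1 (ρ b q) + psi (Fl b) (hFl b).2.2.1 q + m := by
      intro q
      induction q using QuotientAddGroup.induction_on with
      | H x =>
        rw [psi_coe, psi_coe, (hFl b).2.2.2 x, psi_coe, hm x]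
        simp [Function.comp]
        ring
    have hint : ∫ q, psi (Fl (a * b)) (hFl (a * b)).2.2.1 q ∂μ
        = (∫ q, psi (Fl a) (hFl a).2.2.1 (ρ b q) ∂μ) + (∫ q, psi (Fl b) (hFl b).2.2.1 q ∂μ) + m := by
      rw [show (fun q => psi (Fl (a * b)) (hFl (a * b)).2.2.1 q)
          = fun q => psi (Fl a) (hFl a).2.2.1 (ρ b q) + psi (Fl b) (hFl b).2.2.1 q + m from funext hpt]
      have i1 : Integrable (fun q => psi (Fl a) (hFl a).2.2.1 (ρ b q)) μ :=
        circle_integrable ((continuous_psi _ (hFl a).1).comp (ρ b).continuous) μ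
      have i2 : Integrable (fun q => psi (Fl b) (hFl b).2.2.1 q) μ :=
        circle_integrable (continuous_psi _ (hFl b).1) μ
      have i12 : Integrable (fun q => psi (Fl a) (hFl a).2.2.1 (ρ b q) + psi (Fl b) (hFl b).2.2.1 q) μ := i1.add i2
      rw [integral_add i12 (integrable_const _), integral_add i1 i2, integral_const]
      simp [measure_univ]
    rw [hτ]
    simp only
    rw [hint, integral_comp_homeo (ρ b) μ (hinv b) (continuous_psi _ (hFl a).1)]
  -- τ g is an integer
  have hτint : ∀ g : G, ∃ m : ℤ, τ g = m := by
    have hφmul : ∀ a b : G,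
        (Multiplicative.ofAdd ((τ (a * b) : ℝ) : AddCircle (1:ℝ)))
          = Multiplicative.ofAdd ((τ a : ℝ) : AddCircle (1:ℝ))
            * Multiplicative.ofAdd ((τ b : ℝ) : AddCircle (1:ℝ)) := by
      intro a b
      obtain ⟨m, hm⟩ := hτmul a b
      rw [hm]
      have hmz : (((m : ℝ)) : AddCircle (1:ℝ)) = 0 := by
        rw [AddCircle.coe_eq_zero_iff]
        exact ⟨m, by simp⟩
      have : (((τ a + τ b + m : ℝ)) : AddCircle (1:ℝ)) = ((τ a : ℝ) : AddCircle (1:ℝ)) + ((τ b : ℝ) : AddCircle (1:ℝ)) := by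
        rw [AddCircle.coe_add, AddCircle.coe_add, hmz, add_zero]
      rw [this]
      rfl
    set φ : G →* Multiplicative (AddCircle (1:ℝ)) :=
      MonoidHom.mk' (fun g => Multiplicative.ofAdd ((τ g : ℝ) : AddCircle (1:ℝ))) hφmul with hφ
    intro g
    have h1 : φ g = Abelianization.lift φ (Abelianization.of g) := (Abelianization.lift_apply_of φ g).symm
    rw [Subsingleton.elim (Abelianization.of g) 1, map_one] at h1
    have h2 : ((τ g : ℝ) : AddCircle (1:ℝ)) = 0 := by
      have := h1
      rw [hφ] at this
      simpa using this
    obtain ⟨m, hm⟩ := (AddCircle.coe_eq_zero_iff _).mp h2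
    exact ⟨m, by simpa using hm.symm⟩
  -- now fix g and prove ρ g fixes p
  refine ⟨(x₀ : UnitAddCircle), fun g => ?_⟩
  obtain ⟨m, hmg⟩ := hτint g
  set F' : ℝ → ℝ := fun x => Fl g x - m with hF'
  have hF'lift : IsOPLift (ρ g) F' := by
    obtain ⟨hc, hmo, h1, hd⟩ := hFl g
    refine ⟨hc.sub continuous_const, fun u v huv => by simp [hF']; exact hmo huv,
      fun x => by simp [hF', h1]; ring, fun x => ?_⟩
    have hmz : (((m : ℝ)) : AddCircle (1:ℝ)) = 0 := by
      rw [AddCircle.coe_eq_zero_iff]; exact ⟨m, by simp⟩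
    rw [hd x, show Fl g x = F' x + (m:ℝ) from by simp [hF'], AddCircle.coe_add, hmz, add_zero]
  have h1' := hF'lift.2.2.1
  have hintF' : ∫ q, psi F' h1' q ∂μ = 0 := by
    have hpt : ∀ q : UnitAddCircle, psi F' h1' q = psi (Fl g) (hFl g).2.2.1 q - m := by
      intro q
      induction q using QuotientAddGroup.induction_on with
      | H x => rw [psi_coe, psi_coe]; simp [hF']; ring
    rw [show (fun q => psi F' h1' q) = fun q => psi (Fl g) (hFl g).2.2.1 q - m from funext hpt]
    rw [integral_sub (circle_integrable (continuous_psi _ (hFl g).1) μ) (integrable_const _),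
      integral_const]
    have : (∫ q, psi (Fl g) (hFl g).2.2.1 q ∂μ) = τ g := rfl
    simp [measure_univ, this, hmg]
  have hle : F' x₀ ≤ x₀ := no_push_up (ρ g) F' hF'lift μ (hinv g) hintF' x₀ hp
  -- reverse direction via the inverse
  have hsurj : Function.Surjective F' := lift_surjective hF'lift.1 h1' hF'lift.2.1.monotone
  set e : ℝ ≃o ℝ := StrictMono.orderIsoOfSurjective F' hF'lift.2.1 hsurj with he
  have heF : ∀ x, e x = F' x := fun x => rfl
  set Gi : ℝ → ℝ := fun x => e.symm x with hGi
  have hGiF : ∀ x, Gi (F' x) = x := fun x => by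
    rw [hGi, ← heF]; exact e.symm_apply_apply x
  have hFGi : ∀ x, F' (Gi x) = x := fun x => by
    rw [hGi, ← heF]; exact e.apply_symm_apply x
  have hGi1 : ∀ x, Gi (x + 1) = Gi x + 1 := by
    intro x
    have : e (Gi x + 1) = x + 1 := by
      rw [heF]
      have := hF'lift.2.2.1 (Gi x)
      rw [this, hFGi]
    have h2 : e (Gi (x + 1)) = x + 1 := by rw [heF, hFGi]
    exact e.injective (h2.trans this.symm)
  have hGilift : IsOPLift (ρ g⁻¹) Gi := by
    refine ⟨e.symm.continuous, e.symm.strictMono, hGi1, fun x => ?_⟩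
    have h3 : ρ g ((Gi x : ℝ) : UnitAddCircle) = (x : UnitAddCircle) := by
      rw [hF'lift.2.2.2 (Gi x), hFGi]
    rw [map_inv]
    show (ρ g).symm (x : UnitAddCircle) = _
    rw [← h3, Homeomorph.symm_apply_apply]
  have hGi1' := hGilift.2.2.1
  have hintGi : ∫ q, psi Gi hGi1' q ∂μ = 0 := by
    have hpt : ∀ q : UnitAddCircle, psi Gi hGi1' (ρ g q) = - psi F' h1' q := by
      intro q
      induction q using QuotientAddGroup.induction_on with
      | H x =>
        rw [hF'lift.2.2.2 x, psi_coe, psi_coe, hGiF]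
        ring
    have := integral_comp_homeo (ρ g) μ (hinv g) (continuous_psi hGi1' hGilift.1)
    rw [← this, show (fun q => psi Gi hGi1' (ρ g q)) = fun q => - psi F' h1' q from funext hpt,
      integral_neg, hintF', neg_zero]
  have hle2 : Gi x₀ ≤ x₀ := no_push_up (ρ g⁻¹) Gi hGilift μ (hinv g⁻¹) hintGi x₀ hp
  have hge : x₀ ≤ F' x₀ := by
    have := hF'lift.2.1.monotone hle2
    rwa [hFGi] at this
  have heq : F' x₀ = x₀ := le_antisymm hle hge
  rw [hF'lift.2.2.2 x₀, heq]
end
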